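/- arXiv:1003.3372 — 10 statements merged into one kernel-verified Lean document; each statement's English description precedes it below -/
import Mathlib

section
/- Let X be a complex Hilbert space, H a self-adjoint operator on X with domain D(H), and A a self-adjoint operator with domain D(A). Assume that for every t ∈ ℝ the unitary group e^{-itH} maps D(A) ∩ D(H) into itself. Then for every ψ₀ ∈ D(A) ∩ D(H), the function t ↦ ⟨e^{-itH}ψ₀, A e^{-itH}ψ₀⟩ is continuously differentiable and its derivative equals i(⟨Hψ(t), Aψ(t)⟩ − ⟨Aψ(t), Hψ(t)⟩), where ψ(t) = e^{-itH}ψ₀. -/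
open Complex Filter

open Topology

section SharpEhrenfestAux

variable {X : Type*} [NormedAddCommGroup X] [InnerProductSpace ℂ X] [CompleteSpace X]

private lemma inner_real_smul_left' (r : ℝ) (x y : X) :
    (inner ℂ (r • x) y : ℂ) = r • inner ℂ x y := by
  rw [← algebraMap_smul ℂ r x]
  exact inner_smul_real_left (𝕜 := ℂ) x y r

private lemma inner_real_smul_right' (r : ℝ) (x y : X) :
    (inner ℂ x (r • y) : ℂ) = r • inner ℂ x y := by
  rw [← algebraMap_smul ℂ r y]
  exact inner_smul_real_right (𝕜 := ℂ) x y r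

private lemma selfadj_symm' {A : X →ₗ.[ℂ] X} (hA : IsSelfAdjoint A) (x y : A.domain) :
    (inner ℂ (A x) (y : X) : ℂ) = inner ℂ (x : X) (A y) := by
  have h := LinearPMap.adjoint_isFormalAdjoint (T := A) hA.dense_domain
  rw [LinearPMap.isSelfAdjoint_def] at hA
  rw [hA] at h
  exact h x y

private lemma selfadj_closed' {A : X →ₗ.[ℂ] X} (hA : IsSelfAdjoint A) (f : ℕ → A.domain)
    (x y : X)
    (hx : Tendsto (fun n => ((f n : X))) atTop (𝓝 x))
    (hy : Tendsto (fun n => A (f n)) atTop (𝓝 y)) :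
    ∃ hx' : x ∈ A.domain, A ⟨x, hx'⟩ = y := by
  have hsymm := selfadj_symm' hA
  have hkey : ∀ v : A.domain, (inner ℂ y (v : X) : ℂ) = inner ℂ x (A v) := by
    intro v
    have l1 : Tendsto (fun n => (inner ℂ (A (f n)) (v : X) : ℂ)) atTop (𝓝 (inner ℂ y (v : X))) :=
      hy.inner tendsto_const_nhds
    have l2 : Tendsto (fun n => (inner ℂ ((f n : X)) (A v) : ℂ)) atTop (𝓝 (inner ℂ x (A v))) :=
      hx.inner tendsto_const_nhds
    refine tendsto_nhds_unique (l1.congr fun n => ?_) l2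
    exact hsymm (f n) v
  have hmem : x ∈ A.adjoint.domain :=
    LinearPMap.mem_adjoint_domain_of_exists x ⟨y, fun v => hkey v⟩
  have hd : x ∈ A.domain := by
    rw [LinearPMap.isSelfAdjoint_def] at hA
    rw [← hA]; exact hmem
  refine ⟨hd, ?_⟩
  refine hA.dense_domain.eq_of_inner_left ℂ fun v' hv' => ?_
  obtain ⟨v, rfl⟩ : ∃ v : A.domain, (v : X) = v' := ⟨⟨v', hv'⟩, rfl⟩
  rw [hsymm ⟨x, hd⟩ v]
  exact (hkey v).symm

end SharpEhrenfestAux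

set_option maxHeartbeats 1000000 in
/-- **Sharp Ehrenfest theorem.** `H` and `A` are densely defined self-adjoint operators on a
complex Hilbert space `X`, `U t = e^{-itH}` is the unitary group generated by `H`
(encoded by the group law and the derivative property on `D(H)`), and `U t` leaves
`D(A) ∩ D(H)` invariant.  Then for `ψ₀ ∈ D(A) ∩ D(H)` the expected value
`t ↦ ⟨ψ(t), A ψ(t)⟩`, `ψ(t) = U t ψ₀`, is continuously differentiable with derivative
`i (⟨Hψ(t), Aψ(t)⟩ - ⟨Aψ(t), Hψ(t)⟩)`. -/
theorem sharp_ehrenfest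
    {X : Type*} [NormedAddCommGroup X] [InnerProductSpace ℂ X] [CompleteSpace X]
    (A H : X →ₗ.[ℂ] X)
    (hA : IsSelfAdjoint A) (hH : IsSelfAdjoint H)
    (U : ℝ → X ≃ₗᵢ[ℂ] X)
    (hU0 : ∀ x : X, U 0 x = x)
    (hUadd : ∀ (s t : ℝ) (x : X), U (s + t) x = U s (U t x))
    (hUgen : ∀ (ψ : H.domain) (t : ℝ),
      HasDerivAt (fun s : ℝ => U s (ψ : X)) (-I • U t (H ψ)) t)
    (hInvA : ∀ (t : ℝ) (x : X), x ∈ A.domain → x ∈ H.domain → U t x ∈ A.domain)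
    (hInvH : ∀ (t : ℝ) (x : X), x ∈ A.domain → x ∈ H.domain → U t x ∈ H.domain)
    (ψ₀ : X) (hψ₀A : ψ₀ ∈ A.domain) (hψ₀H : ψ₀ ∈ H.domain) :
    (∀ t : ℝ, HasDerivAt
        (fun s : ℝ => (inner ℂ (U s ψ₀) (A ⟨U s ψ₀, hInvA s ψ₀ hψ₀A hψ₀H⟩) : ℂ))
        (I * ((inner ℂ (H ⟨U t ψ₀, hInvH t ψ₀ hψ₀A hψ₀H⟩)
                (A ⟨U t ψ₀, hInvA t ψ₀ hψ₀A hψ₀H⟩) : ℂ)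
            - (inner ℂ (A ⟨U t ψ₀, hInvA t ψ₀ hψ₀A hψ₀H⟩)
                (H ⟨U t ψ₀, hInvH t ψ₀ hψ₀A hψ₀H⟩) : ℂ))) t)
    ∧ Continuous (fun t : ℝ =>
        I * ((inner ℂ (H ⟨U t ψ₀, hInvH t ψ₀ hψ₀A hψ₀H⟩)
                (A ⟨U t ψ₀, hInvA t ψ₀ hψ₀A hψ₀H⟩) : ℂ)
            - (inner ℂ (A ⟨U t ψ₀, hInvA t ψ₀ hψ₀A hψ₀H⟩)
                (H ⟨U t ψ₀, hInvH t ψ₀ hψ₀A hψ₀H⟩) : ℂ))) := by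
  classical
  have symmA : ∀ x y : A.domain, (inner ℂ (A x) (y : X) : ℂ) = inner ℂ (x : X) (A y) :=
    selfadj_symm' hA
  set ψ0H : H.domain := ⟨ψ₀, hψ₀H⟩ with hψ0Hdef
  set ψ : ℝ → X := fun t => U t ψ₀ with hψdef
  have hmemA : ∀ t, ψ t ∈ A.domain := fun t => hInvA t ψ₀ hψ₀A hψ₀H
  have hmemH : ∀ t, ψ t ∈ H.domain := fun t => hInvH t ψ₀ hψ₀A hψ₀H
  set ΨA : ℝ → X := fun t => A ⟨ψ t, hmemA t⟩ with hΨAdef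
  set ΨH : ℝ → X := fun t => H ⟨ψ t, hmemH t⟩ with hΨHdef
  have hAext : ∀ (x y : X) (hx : x ∈ A.domain) (hy : y ∈ A.domain),
      x = y → A ⟨x, hx⟩ = A ⟨y, hy⟩ := by rintro x y hx hy rfl; rfl
  -- derivative of ψ
  have hderiv : ∀ t, HasDerivAt ψ (-I • U t (H ψ0H)) t := fun t => hUgen ψ0H t
  -- commutation of H with the unitary group along the orbit
  have hcomm : ∀ t, ΨH t = U t (H ψ0H) := by
    intro t
    have h1 : HasDerivAt (fun s => U s (ψ t)) (-I • U 0 (H ⟨ψ t, hmemH t⟩)) 0 :=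
      hUgen ⟨ψ t, hmemH t⟩ 0
    have h2 : HasDerivAt (fun s : ℝ => ψ (s + t)) (-I • U t (H ψ0H)) 0 := by
      have h0 : HasDerivAt ψ (-I • U t (H ψ0H)) (0 + t) := by
        rw [zero_add]; exact hderiv t
      exact h0.comp_add_const 0 t
    have heq : (fun s => U s (ψ t)) = fun s => ψ (s + t) := by
      funext s; rw [hψdef]; exact (hUadd s t ψ₀).symm
    rw [heq] at h1
    have huniq := h1.unique h2
    rw [hU0] at huniq
    exact smul_right_injective X (by simp : (-I : ℂ) ≠ 0) huniq
  -- continuity of ψ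
  have contψ : Continuous ψ := by
    rw [continuous_iff_continuousAt]
    exact fun t => (hderiv t).continuousAt
  -- strong continuity of the group on all of X
  have strongcont : ∀ x : X, Continuous fun t => U t x := by
    intro x
    rw [Metric.continuous_iff]
    intro b ε hε
    obtain ⟨φ, hφmem, hφd⟩ := hH.dense_domain.exists_dist_lt x (show (0:ℝ) < ε/3 by linarith)
    have hc : Continuous fun t => U t φ := by
      rw [continuous_iff_continuousAt]
      exact fun t => (hUgen ⟨φ, hφmem⟩ t).continuousAt
    obtain ⟨δ, hδ, hd⟩ := Metric.continuous_iff.mp hc b (ε/3) (by linarith)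
    refine ⟨δ, hδ, fun a ha => ?_⟩
    have e1 : dist (U a x) (U a φ) = dist x φ := (U a).dist_map x φ
    have e2 : dist (U b φ) (U b x) = dist φ x := (U b).dist_map φ x
    calc dist (U a x) (U b x)
        ≤ dist (U a x) (U a φ) + dist (U a φ) (U b φ) + dist (U b φ) (U b x) :=
          dist_triangle4 _ _ _ _
      _ < ε/3 + ε/3 + ε/3 := by
          rw [e1, e2, dist_comm φ x]
          have h3 := hd a ha
          gcongr
      _ = ε := by ring
  have contΨH : Continuous ΨH := by
    have heq : ΨH = fun t => U t (H ψ0H) := funext hcomm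
    rw [heq]; exact strongcont _
  have normψ : ∀ t, ‖ψ t‖ = ‖ψ₀‖ := fun t => (U t).norm_map ψ₀
  have normΨH : ∀ t, ‖ΨH t‖ = ‖H ψ0H‖ := fun t => by rw [hcomm t]; exact (U t).norm_map _
  -- closedness of A and H
  have closedA : ∀ (f : ℕ → A.domain) (x y : X),
      Tendsto (fun n => ((f n : X))) atTop (𝓝 x) →
      Tendsto (fun n => A (f n)) atTop (𝓝 y) → ∃ hx' : x ∈ A.domain, A ⟨x, hx'⟩ = y :=
    fun f x y hx hy => selfadj_closed' hA f x y hx hy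
  have closedH : ∀ (f : ℕ → H.domain) (x y : X),
      Tendsto (fun n => ((f n : X))) atTop (𝓝 x) →
      Tendsto (fun n => H (f n)) atTop (𝓝 y) → ∃ hx' : x ∈ H.domain, H ⟨x, hx'⟩ = y :=
    fun f x y hx hy => selfadj_closed' hH f x y hx hy
  -- a vector weakly bounded on the dense set A.domain is bounded
  have hdb : ∀ (y : X) (N : ℝ),
      (∀ φ : A.domain, ‖(φ : X)‖ ≤ 1 → ‖(inner ℂ y (φ : X) : ℂ)‖ ≤ N) → ‖y‖ ≤ N := by
    intro y N hyp
    have hN0 : 0 ≤ N := by have := hyp 0 (by simp); simpa using this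
    have hsub : (A.domain : Set X) ⊆ {z : X | ‖(inner ℂ y z : ℂ)‖ ≤ N * ‖z‖} := by
      intro φ hφ
      rcases eq_or_ne φ 0 with rfl | hφ0
      · simp
      · have hn : (0:ℝ) < ‖φ‖ := norm_pos_iff.mpr hφ0
        set c : ℂ := ((‖φ‖⁻¹ : ℝ) : ℂ) with hc
        have hmem : c • φ ∈ A.domain := A.domain.smul_mem c hφ
        have hnorm : ‖c • φ‖ ≤ 1 := by
          rw [norm_smul]
          simp only [hc, Complex.norm_real, Real.norm_eq_abs, abs_of_pos (inv_pos.mpr hn)]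
          rw [inv_mul_cancel₀ (ne_of_gt hn)]
        have h1 := hyp ⟨c • φ, hmem⟩ hnorm
        rw [Submodule.coe_mk, inner_smul_right, norm_mul] at h1
        simp only [hc, Complex.norm_real, Real.norm_eq_abs, abs_of_pos (inv_pos.mpr hn)] at h1
        rw [Set.mem_setOf_eq]
        calc ‖(inner ℂ y φ : ℂ)‖ = ‖φ‖ * (‖φ‖⁻¹ * ‖(inner ℂ y φ : ℂ)‖) := by
              field_simp
          _ ≤ ‖φ‖ * N := by gcongr
          _ = N * ‖φ‖ := mul_comm _ _
    have hcl : IsClosed {z : X | ‖(inner ℂ y z : ℂ)‖ ≤ N * ‖z‖} := by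
      apply isClosed_le
      · exact (Continuous.inner continuous_const continuous_id).norm
      · exact continuous_const.mul continuous_norm
    have hall : ∀ z : X, ‖(inner ℂ y z : ℂ)‖ ≤ N * ‖z‖ := by
      intro z
      have hz : z ∈ closure (A.domain : Set X) := by
        rw [hA.dense_domain.closure_eq]; trivial
      exact (closure_minimal hsub hcl) hz
    have hy := hall y
    rw [inner_self_eq_norm_sq_to_K] at hy
    simp only [norm_pow, RCLike.norm_ofReal, Complex.norm_real, Real.norm_eq_abs,
      _root_.abs_of_nonneg (norm_nonneg y)] at hy
    rcases eq_or_lt_of_le (norm_nonneg y) with h0 | h0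
    · rw [← h0]; exact hN0
    · rw [sq] at hy; exact (mul_le_mul_iff_left₀ h0).mp hy
  -- Baire category step
  have hBaire : ∃ (N : ℕ) (c δ : ℝ), 0 < δ ∧ ∀ s, |s - c| < δ → ‖ΨA s‖ ≤ N := by
    set F : ℕ → Set ℝ := fun n =>
      {t | ∀ φ : A.domain, ‖(φ : X)‖ ≤ 1 → ‖(inner ℂ (ψ t) (A φ) : ℂ)‖ ≤ n} with hF
    have hFcl : ∀ n, IsClosed (F n) := by
      intro n
      have heq : F n = ⋂ (φ : A.domain) (_ : ‖(φ : X)‖ ≤ 1),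
          {t | ‖(inner ℂ (ψ t) (A φ) : ℂ)‖ ≤ n} := by
        ext t; simp [hF, Set.mem_iInter]
      rw [heq]
      exact isClosed_iInter fun φ => isClosed_iInter fun _ =>
        isClosed_le ((Continuous.inner contψ continuous_const).norm) continuous_const
    have hFun : (⋃ n, F n) = Set.univ := by
      ext t
      simp only [Set.mem_iUnion, Set.mem_univ, iff_true]
      obtain ⟨n, hn⟩ := exists_nat_ge ‖ΨA t‖
      refine ⟨n, fun φ hφ => ?_⟩
      have he : (inner ℂ (ψ t) (A φ) : ℂ) = inner ℂ (ΨA t) (φ : X) := by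
        rw [hΨAdef]; exact (symmA ⟨ψ t, hmemA t⟩ φ).symm
      rw [he]
      calc ‖(inner ℂ (ΨA t) (φ : X) : ℂ)‖ ≤ ‖ΨA t‖ * ‖(φ : X)‖ := norm_inner_le_norm _ _
        _ ≤ n * 1 := by gcongr
        _ = n := mul_one _
    obtain ⟨n, hn⟩ := nonempty_interior_of_iUnion_of_closed hFcl hFun
    obtain ⟨c, hc⟩ := hn
    obtain ⟨δ, hδ, hball⟩ := Metric.isOpen_iff.mp isOpen_interior c hc
    refine ⟨n, c, δ, hδ, fun s hs => ?_⟩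
    have hsF : s ∈ F n := interior_subset (hball (by rwa [Metric.mem_ball, Real.dist_eq]))
    refine hdb (ΨA s) n fun φ hφ => ?_
    have he : (inner ℂ (ΨA s) (φ : X) : ℂ) = inner ℂ (ψ s) (A φ) := by
      rw [hΨAdef]; exact symmA ⟨ψ s, hmemA s⟩ φ
    rw [he]
    exact hsF φ hφ
  -- closed graph step
  have hCG : ∀ r : ℝ, ∃ C : ℝ, 0 ≤ C ∧
      ∀ t, ‖ΨA (r + t)‖ ≤ C * (‖ψ t‖ + ‖ΨA t‖ + ‖ΨH t‖) := by
    intro r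
    set D : Submodule ℂ X := A.domain ⊓ H.domain with hD
    let jA : D →ₗ[ℂ] A.domain := Submodule.inclusion inf_le_left
    let jH : D →ₗ[ℂ] H.domain := Submodule.inclusion inf_le_right
    let j : D →ₗ[ℂ] X × X × X :=
      (D.subtype).prod ((A.toFun.comp jA).prod (H.toFun.comp jH))
    set S : Submodule ℂ (X × X × X) := LinearMap.range j with hS
    have hS1 : ∀ p : X × X × X, p ∈ S → p.1 ∈ A.domain ∧ p.1 ∈ H.domain := by
      rintro p ⟨d, rfl⟩; exact ⟨d.2.1, d.2.2⟩
    have hS2 : ∀ (p : X × X × X) (hp : p ∈ S),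
        A ⟨p.1, (hS1 p hp).1⟩ = p.2.1 ∧ H ⟨p.1, (hS1 p hp).2⟩ = p.2.2 := by
      rintro p ⟨d, rfl⟩; exact ⟨rfl, rfl⟩
    have hScl : IsClosed (S : Set (X × X × X)) := by
      apply IsSeqClosed.isClosed
      intro seq p hseq hlim
      have h1 : Tendsto (fun n => (seq n).1) atTop (𝓝 p.1) :=
        ((continuous_fst.tendsto p).comp hlim)
      have h21 : Tendsto (fun n => (seq n).2.1) atTop (𝓝 p.2.1) :=
        ((continuous_fst.comp continuous_snd).tendsto p).comp hlim
      have h22 : Tendsto (fun n => (seq n).2.2) atTop (𝓝 p.2.2) :=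
        ((continuous_snd.comp continuous_snd).tendsto p).comp hlim
      obtain ⟨hxA, hvA⟩ := closedA (fun n => ⟨(seq n).1, (hS1 _ (hseq n)).1⟩) p.1 p.2.1 h1
        (by refine h21.congr fun n => ?_; exact ((hS2 _ (hseq n)).1).symm)
      obtain ⟨hxH, hvH⟩ := closedH (fun n => ⟨(seq n).1, (hS1 _ (hseq n)).2⟩) p.1 p.2.2 h1
        (by refine h22.congr fun n => ?_; exact ((hS2 _ (hseq n)).2).symm)
      refine ⟨⟨p.1, hxA, hxH⟩, ?_⟩
      refine Prod.ext rfl (Prod.ext ?_ ?_)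
      · exact hvA
      · exact hvH
    haveI : CompleteSpace S := IsClosed.completeSpace_coe (hs := hScl)
    let Tr : S →ₗ[ℂ] X :=
      { toFun := fun p =>
          A ⟨U r (p : X × X × X).1, hInvA r _ (hS1 _ p.2).1 (hS1 _ p.2).2⟩
        map_add' := fun p q => by
          have e1 : A ⟨U r ((p + q : S) : X × X × X).1,
                hInvA r _ (hS1 _ (p + q).2).1 (hS1 _ (p + q).2).2⟩
              = A ((⟨U r (p : X × X × X).1,
                  hInvA r _ (hS1 _ p.2).1 (hS1 _ p.2).2⟩ : A.domain)
                + ⟨U r (q : X × X × X).1, hInvA r _ (hS1 _ q.2).1 (hS1 _ q.2).2⟩) := by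
            congr 1
            exact Subtype.ext (by simp [map_add])
          exact e1.trans (A.map_add _ _)
        map_smul' := fun c p => by
          have e1 : A ⟨U r ((c • p : S) : X × X × X).1,
                hInvA r _ (hS1 _ (c • p).2).1 (hS1 _ (c • p).2).2⟩
              = A (c • (⟨U r (p : X × X × X).1,
                  hInvA r _ (hS1 _ p.2).1 (hS1 _ p.2).2⟩ : A.domain)) := by
            congr 1
            exact Subtype.ext (by simp [map_smul])
          exact e1.trans (A.map_smul _ _) }
    have hTrcont : Continuous Tr := by
      apply Tr.continuous_of_seq_closed_graph
      intro u x y hu hy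
      have h1 : Tendsto (fun n => ((u n : X × X × X)).1) atTop (𝓝 (x : X × X × X).1) :=
        (continuous_fst.comp continuous_subtype_val).continuousAt.tendsto.comp hu
      have h2 : Tendsto (fun n => U r ((u n : X × X × X)).1) atTop
          (𝓝 (U r (x : X × X × X).1)) :=
        ((U r).continuous.tendsto _).comp h1
      obtain ⟨hm, hv⟩ := closedA
        (fun n => ⟨U r ((u n : X × X × X)).1,
          hInvA r _ (hS1 _ (u n).2).1 (hS1 _ (u n).2).2⟩)
        (U r (x : X × X × X).1) y h2 hy
      rw [← hv]
      exact (hAext _ _ _ _ rfl)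
    let Tc : S →L[ℂ] X := ⟨Tr, hTrcont⟩
    refine ⟨‖Tc‖, Tc.opNorm_nonneg, fun t => ?_⟩
    have hdmem : ψ t ∈ D := ⟨hmemA t, hmemH t⟩
    have hpmem : (ψ t, ΨA t, ΨH t) ∈ S := by
      refine ⟨⟨ψ t, hdmem⟩, ?_⟩
      refine Prod.ext rfl (Prod.ext ?_ ?_)
      · rw [hΨAdef]; rfl
      · rw [hΨHdef]; rfl
    set pt : S := ⟨(ψ t, ΨA t, ΨH t), hpmem⟩ with hpt
    have hval : Tc pt = ΨA (r + t) := by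
      show A ⟨U r (ψ t), _⟩ = ΨA (r + t)
      rw [hΨAdef]
      refine hAext _ _ _ _ ?_
      rw [hψdef]
      exact (hUadd r t ψ₀).symm
    have hbound := Tc.le_opNorm pt
    rw [hval] at hbound
    refine le_trans hbound ?_
    have hnorm : ‖pt‖ = max ‖ψ t‖ (max ‖ΨA t‖ ‖ΨH t‖) := rfl
    rw [hnorm]
    have h1 : max ‖ψ t‖ (max ‖ΨA t‖ ‖ΨH t‖) ≤ ‖ψ t‖ + ‖ΨA t‖ + ‖ΨH t‖ := by
      have na := norm_nonneg (ψ t)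
      have nb := norm_nonneg (ΨA t)
      have nc := norm_nonneg (ΨH t)
      apply max_le
      · linarith
      · apply max_le <;> linarith
    exact mul_le_mul_of_nonneg_left h1 Tc.opNorm_nonneg
  -- local boundedness of ‖Aψ(t)‖
  have locbound : ∃ δ : ℝ, 0 < δ ∧ ∀ t, ∃ M : ℝ, 0 ≤ M ∧
      ∀ s, |s - t| < δ → ‖ΨA s‖ ≤ M := by
    obtain ⟨N, c, δ, hδ, hNb⟩ := hBaire
    refine ⟨δ, hδ, fun t => ?_⟩
    obtain ⟨C, hC0, hCb⟩ := hCG (t - c)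
    refine ⟨C * (‖ψ₀‖ + N + ‖H ψ0H‖), by positivity, fun s hs => ?_⟩
    have hu : |s - (t - c) - c| < δ := by
      have he : s - (t - c) - c = s - t := by ring
      rwa [he]
    have h1 := hCb (s - (t - c))
    rw [show t - c + (s - (t - c)) = s by ring] at h1
    refine le_trans h1 ?_
    have h2 : ‖ΨA (s - (t - c))‖ ≤ N := hNb _ hu
    rw [normψ, normΨH]
    have h3 : (0:ℝ) ≤ N := Nat.cast_nonneg N
    gcongr
  -- weak continuity of t ↦ Aψ(t)
  have wk : ∀ (t : ℝ) (y : X),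
      Tendsto (fun s => (inner ℂ y (ΨA s) : ℂ)) (𝓝 t) (𝓝 (inner ℂ y (ΨA t))) := by
    intro t y
    obtain ⟨δ, hδpos, hloc⟩ := locbound
    obtain ⟨M, hM0, hMb⟩ := hloc t
    rw [Metric.tendsto_nhds]
    intro ε hε
    have hMp : (0:ℝ) < M + 1 := by linarith
    obtain ⟨φ, hφmem, hφd⟩ := hA.dense_domain.exists_dist_lt y
      (show (0:ℝ) < ε / (3 * (M + 1)) by positivity)
    have hφn : ‖y - φ‖ < ε / (3 * (M + 1)) := by rwa [dist_eq_norm] at hφd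
    have hcont : Tendsto (fun s => (inner ℂ φ (ΨA s) : ℂ)) (𝓝 t) (𝓝 (inner ℂ φ (ΨA t))) := by
      have heq : ∀ s, (inner ℂ φ (ΨA s) : ℂ) =
          (starRingEnd ℂ) (inner ℂ (ψ s) (A ⟨φ, hφmem⟩)) := by
        intro s
        rw [← inner_conj_symm]
        congr 1
        rw [hΨAdef]
        exact symmA ⟨ψ s, hmemA s⟩ ⟨φ, hφmem⟩
      have hc : Continuous fun s => (starRingEnd ℂ) (inner ℂ (ψ s) (A ⟨φ, hφmem⟩) : ℂ) :=
        Complex.continuous_conj.comp (contψ.inner continuous_const)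
      have ht := hc.tendsto t
      rw [← heq t] at ht
      exact ht.congr fun s => (heq s).symm
    have hev1 : ∀ᶠ s in 𝓝 t, ‖ΨA s‖ ≤ M := by
      refine eventually_of_mem (Metric.ball_mem_nhds t hδpos) fun s hs => ?_
      exact hMb s (by rwa [Metric.mem_ball, Real.dist_eq] at hs)
    have hev2 : ∀ᶠ s in 𝓝 t, dist (inner ℂ φ (ΨA s) : ℂ) (inner ℂ φ (ΨA t) : ℂ) < ε / 3 :=
      Metric.tendsto_nhds.mp hcont (ε / 3) (by positivity)
    filter_upwards [hev1, hev2] with s h1 h2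
    have hAt : ‖ΨA t‖ ≤ M := hMb t (by simp [hδpos])
    rw [dist_eq_norm] at h2 ⊢
    have key : (inner ℂ y (ΨA s) : ℂ) - inner ℂ y (ΨA t)
        = inner ℂ (y - φ) (ΨA s) + ((inner ℂ φ (ΨA s) : ℂ) - inner ℂ φ (ΨA t))
          - inner ℂ (y - φ) (ΨA t) := by
      simp only [inner_sub_left]
      ring
    rw [key]
    have b1 : ‖(inner ℂ (y - φ) (ΨA s) : ℂ)‖ ≤ ε / (3 * (M + 1)) * M := by
      calc ‖(inner ℂ (y - φ) (ΨA s) : ℂ)‖ ≤ ‖y - φ‖ * ‖ΨA s‖ := norm_inner_le_norm _ _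
        _ ≤ ε / (3 * (M + 1)) * M := by gcongr
    have b3 : ‖(inner ℂ (y - φ) (ΨA t) : ℂ)‖ ≤ ε / (3 * (M + 1)) * M := by
      calc ‖(inner ℂ (y - φ) (ΨA t) : ℂ)‖ ≤ ‖y - φ‖ * ‖ΨA t‖ := norm_inner_le_norm _ _
        _ ≤ ε / (3 * (M + 1)) * M := by gcongr
    have hb : ε / (3 * (M + 1)) * M < ε / 3 := by
      rw [div_mul_eq_mul_div, mul_comm]
      rw [div_lt_div_iff₀ (by positivity) (by positivity)]
      ring_nf
      nlinarith
    calc ‖(inner ℂ (y - φ) (ΨA s) : ℂ) + ((inner ℂ φ (ΨA s) : ℂ) - inner ℂ φ (ΨA t))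
          - inner ℂ (y - φ) (ΨA t)‖
        ≤ ‖(inner ℂ (y - φ) (ΨA s) : ℂ) + ((inner ℂ φ (ΨA s) : ℂ) - inner ℂ φ (ΨA t))‖
          + ‖(inner ℂ (y - φ) (ΨA t) : ℂ)‖ := norm_sub_le _ _
      _ ≤ ‖(inner ℂ (y - φ) (ΨA s) : ℂ)‖ + ‖(inner ℂ φ (ΨA s) : ℂ) - inner ℂ φ (ΨA t)‖
          + ‖(inner ℂ (y - φ) (ΨA t) : ℂ)‖ := by gcongr; exact norm_add_le _ _
      _ < ε / 3 + ε / 3 + ε / 3 := by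
          have hc1 := lt_of_le_of_lt b1 hb
          have hc3 := lt_of_le_of_lt b3 hb
          gcongr
      _ = ε := by ring
  -- derivative of ψ in terms of ΨH
  have hψd : ∀ t, HasDerivAt ψ (-I • ΨH t) t := by
    intro t
    have h := hderiv t
    rwa [← hcomm t] at h
  -- the main derivative computation
  have hf : ∀ t, HasDerivAt (fun s => (inner ℂ (ψ s) (ΨA s) : ℂ))
      (I * ((inner ℂ (ΨH t) (ΨA t) : ℂ) - (inner ℂ (ΨA t) (ΨH t) : ℂ))) t := by
    intro t
    obtain ⟨δ, hδpos, hloc⟩ := locbound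
    obtain ⟨M, hM0, hMb⟩ := hloc t
    set v : X := -I • ΨH t with hv
    rw [hasDerivAt_iff_tendsto_slope]
    have hslope : Tendsto (slope ψ t) (𝓝[≠] t) (𝓝 v) :=
      hasDerivAt_iff_tendsto_slope.mp (hψd t)
    have key : ∀ s ∈ ({t}ᶜ : Set ℝ), slope (fun s => (inner ℂ (ψ s) (ΨA s) : ℂ)) t s
        = inner ℂ (slope ψ t s) (ΨA s) + inner ℂ (ΨA t) (slope ψ t s) := by
      intro s hs
      have hident : (inner ℂ (ψ s) (ΨA s) : ℂ) - inner ℂ (ψ t) (ΨA t)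
          = inner ℂ (ψ s - ψ t) (ΨA s) + inner ℂ (ΨA t) (ψ s - ψ t) := by
        have h2 : (inner ℂ (ψ t) (ΨA s) : ℂ) - inner ℂ (ψ t) (ΨA t)
            = inner ℂ (ΨA t) (ψ s - ψ t) := by
          rw [← inner_sub_right]
          have hsub : ΨA s - ΨA t = A (⟨ψ s, hmemA s⟩ - ⟨ψ t, hmemA t⟩) := by
            rw [hΨAdef]
            exact (A.toFun.map_sub _ _).symm
          rw [hsub, ← symmA ⟨ψ t, hmemA t⟩ (⟨ψ s, hmemA s⟩ - ⟨ψ t, hmemA t⟩), hΨAdef]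
          rfl
        calc (inner ℂ (ψ s) (ΨA s) : ℂ) - inner ℂ (ψ t) (ΨA t)
            = ((inner ℂ (ψ s) (ΨA s) : ℂ) - inner ℂ (ψ t) (ΨA s))
              + ((inner ℂ (ψ t) (ΨA s) : ℂ) - inner ℂ (ψ t) (ΨA t)) := by ring
          _ = inner ℂ (ψ s - ψ t) (ΨA s) + inner ℂ (ΨA t) (ψ s - ψ t) := by
              rw [← inner_sub_left, h2]
      rw [slope_def_module, slope_def_module, hident, smul_add,
        inner_real_smul_left', inner_real_smul_right']
    have t2 : Tendsto (fun s => (inner ℂ (ΨA t) (slope ψ t s) : ℂ)) (𝓝[≠] t)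
        (𝓝 (inner ℂ (ΨA t) v)) := tendsto_const_nhds.inner hslope
    have t1a : Tendsto (fun s => (inner ℂ (slope ψ t s - v) (ΨA s) : ℂ)) (𝓝[≠] t) (𝓝 0) := by
      apply squeeze_zero_norm' (a := fun s => ‖slope ψ t s - v‖ * M)
      · refine mem_nhdsWithin_of_mem_nhds ?_
        refine eventually_of_mem (Metric.ball_mem_nhds t hδpos) fun s hs => ?_
        have hb : ‖ΨA s‖ ≤ M := hMb s (by rwa [Metric.mem_ball, Real.dist_eq] at hs)
        calc ‖(inner ℂ (slope ψ t s - v) (ΨA s) : ℂ)‖ ≤ ‖slope ψ t s - v‖ * ‖ΨA s‖ :=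
              norm_inner_le_norm _ _
          _ ≤ ‖slope ψ t s - v‖ * M := by gcongr
      · have h0 : Tendsto (fun s => slope ψ t s - v) (𝓝[≠] t) (𝓝 (v - v)) :=
          hslope.sub tendsto_const_nhds
        rw [sub_self] at h0
        have hm := h0.norm.mul_const M
        simpa using hm
    have t1b : Tendsto (fun s => (inner ℂ v (ΨA s) : ℂ)) (𝓝[≠] t) (𝓝 (inner ℂ v (ΨA t))) :=
      (wk t v).mono_left nhdsWithin_le_nhds
    have t1 : Tendsto (fun s => (inner ℂ (slope ψ t s) (ΨA s) : ℂ)) (𝓝[≠] t)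
        (𝓝 (inner ℂ v (ΨA t))) := by
      have hsum := t1a.add t1b
      rw [zero_add] at hsum
      refine hsum.congr fun s => ?_
      rw [← inner_add_left, sub_add_cancel]
    have hsum := t1.add t2
    have hL : (inner ℂ v (ΨA t) : ℂ) + inner ℂ (ΨA t) v
        = I * ((inner ℂ (ΨH t) (ΨA t) : ℂ) - (inner ℂ (ΨA t) (ΨH t) : ℂ)) := by
      rw [hv, inner_smul_left, inner_smul_right]
      simp only [map_neg, Complex.conj_I]
      ring
    rw [hL] at hsum
    exact Tendsto.congr' (eventually_mem_nhdsWithin.mono fun s hs => (key s hs).symm) hsum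
  -- continuity of the derivative
  have hg : Continuous (fun t => I * ((inner ℂ (ΨH t) (ΨA t) : ℂ)
      - (inner ℂ (ΨA t) (ΨH t) : ℂ))) := by
    have hz : Continuous fun t => (inner ℂ (ΨH t) (ΨA t) : ℂ) := by
      rw [continuous_iff_continuousAt]
      intro t
      obtain ⟨δ, hδpos, hloc⟩ := locbound
      obtain ⟨M, hM0, hMb⟩ := hloc t
      have t1 : Tendsto (fun s => (inner ℂ (ΨH s - ΨH t) (ΨA s) : ℂ)) (𝓝 t) (𝓝 0) := by
        apply squeeze_zero_norm' (a := fun s => ‖ΨH s - ΨH t‖ * M)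
        · refine eventually_of_mem (Metric.ball_mem_nhds t hδpos) fun s hs => ?_
          have hb : ‖ΨA s‖ ≤ M := hMb s (by rwa [Metric.mem_ball, Real.dist_eq] at hs)
          calc ‖(inner ℂ (ΨH s - ΨH t) (ΨA s) : ℂ)‖ ≤ ‖ΨH s - ΨH t‖ * ‖ΨA s‖ :=
                norm_inner_le_norm _ _
            _ ≤ ‖ΨH s - ΨH t‖ * M := by gcongr
        · have h0 : Tendsto (fun s => ΨH s - ΨH t) (𝓝 t) (𝓝 (ΨH t - ΨH t)) :=
            (contΨH.tendsto t).sub tendsto_const_nhds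
          rw [sub_self] at h0
          have hm := h0.norm.mul_const M
          simpa using hm
      have hsum := t1.add (wk t (ΨH t))
      rw [zero_add] at hsum
      refine hsum.congr fun s => ?_
      rw [← inner_add_left, sub_add_cancel]
    have hw : Continuous fun t => (inner ℂ (ΨA t) (ΨH t) : ℂ) := by
      have heq : (fun t => (inner ℂ (ΨA t) (ΨH t) : ℂ))
          = fun t => (starRingEnd ℂ) (inner ℂ (ΨH t) (ΨA t) : ℂ) := by
        funext t; rw [inner_conj_symm]
      rw [heq]
      exact Complex.continuous_conj.comp hz
    exact continuous_const.mul (hz.sub hw)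
  exact ⟨hf, hg⟩
end

section
/- Let H be self-adjoint and A densely defined hermitean (symmetric) on a Hilbert space X. Assume e^{-itH} leaves D(A) ∩ D(H) invariant for all t, and for every ψ₀ ∈ D(A) ∩ D(H) and every bounded interval I ⊂ ℝ, sup_{t∈I} ‖A e^{-itH}ψ₀‖ < ∞. Then for ψ₀ ∈ D(A) ∩ D(H), the map t ↦ ⟨ψ(t), Aψ(t)⟩ with ψ(t) = e^{-itH}ψ₀ is continuously differentiable with derivative i(⟨Hψ(t), Aψ(t)⟩ − ⟨Aψ(t), Hψ(t)⟩). -/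
open Complex Filter Topology

local notation "⟪" x ", " y "⟫" => @inner ℂ _ _ x y

lemma aux_weak_tendsto {X : Type*} [NormedAddCommGroup X] [InnerProductSpace ℂ X]
    {G : ℝ → X} {t : ℝ} {C : ℝ} (hbd : ∀ᶠ s in 𝓝 t, ‖G s‖ ≤ C)
    {S : Set X} (hS : Dense S)
    (hpt : ∀ φ ∈ S, Tendsto (fun s => ⟪φ, G s⟫) (𝓝 t) (𝓝 ⟪φ, G t⟫))
    (v : X) : Tendsto (fun s => ⟪v, G s⟫) (𝓝 t) (𝓝 ⟪v, G t⟫) := by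
  set C' : ℝ := max C ‖G t‖ + 1 with hC'def
  have h0 : (0:ℝ) ≤ max C ‖G t‖ := le_trans (norm_nonneg _) (le_max_right _ _)
  have hC'pos : 0 < C' := by linarith
  have hbd' : ∀ᶠ s in 𝓝 t, ‖G s‖ ≤ C' :=
    hbd.mono fun s hs => le_trans hs (by simp [hC'def]; linarith [le_max_left C ‖G t‖])
  have hGt : ‖G t‖ ≤ C' := by simp [hC'def]; linarith [le_max_right C ‖G t‖]
  rw [Metric.tendsto_nhds]
  intro ε hε
  obtain ⟨φ, hφS, hφ⟩ := Metric.mem_closure_iff.mp (hS v) (ε / (4 * C')) (by positivity)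
  have h2 := Metric.tendsto_nhds.mp (hpt φ hφS) (ε/2) (by positivity)
  have key : ∀ y : X, ‖y‖ ≤ C' → dist ⟪v, y⟫ ⟪φ, y⟫ ≤ ε/4 := by
    intro y hy
    rw [dist_eq_norm, ← inner_sub_left]
    calc ‖⟪v - φ, y⟫‖ ≤ ‖v - φ‖ * ‖y‖ := norm_inner_le_norm _ _
      _ ≤ (ε/(4*C')) * C' := by
          apply mul_le_mul _ hy (norm_nonneg _) (by positivity)
          rw [← dist_eq_norm]; exact le_of_lt hφ
      _ = ε/4 := by field_simp
  filter_upwards [hbd', h2] with s hs h2s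
  calc dist ⟪v, G s⟫ ⟪v, G t⟫
      ≤ dist ⟪v, G s⟫ ⟪φ, G s⟫ + dist ⟪φ, G s⟫ ⟪φ, G t⟫ + dist ⟪φ, G t⟫ ⟪v, G t⟫ :=
        dist_triangle4 _ _ _ _
    _ < ε := by
        have k1 := key (G s) hs
        have k2 := key (G t) hGt
        rw [dist_comm ⟪φ, G t⟫ ⟪v, G t⟫] at *
        linarith

lemma aux_strong_cont {X : Type*} [NormedAddCommGroup X] [InnerProductSpace ℂ X]
    (U : ℝ → X ≃ₗᵢ[ℂ] X) {S : Set X} (hS : Dense S)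
    (hcont : ∀ y ∈ S, Continuous fun t => U t y) (x : X) :
    Continuous fun t => U t x := by
  rw [continuous_iff_continuousAt]
  intro t
  rw [ContinuousAt, Metric.tendsto_nhds]
  intro ε hε
  obtain ⟨y, hyS, hy⟩ := Metric.mem_closure_iff.mp (hS x) (ε/3) (by positivity)
  have h2 := Metric.tendsto_nhds.mp ((hcont y hyS).tendsto t) (ε/3) (by positivity)
  filter_upwards [h2] with s hs
  have e1 : dist (U s x) (U s y) = dist x y := (U s).isometry.dist_eq x y
  have e2 : dist (U t y) (U t x) = dist y x := (U t).isometry.dist_eq y x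
  calc dist (U s x) (U t x)
      ≤ dist (U s x) (U s y) + dist (U s y) (U t y) + dist (U t y) (U t x) :=
        dist_triangle4 _ _ _ _
    _ < ε := by rw [e1, e2, dist_comm y x]; linarith

/-- **Ehrenfest theorem under a priori bounds (Proposition 1).**  `H` self-adjoint, `A` densely
defined hermitean (symmetric), `U t = e^{-itH}` leaves `D(A) ∩ D(H)` invariant, and for every
`ψ₀ ∈ D(A) ∩ D(H)` the function `t ↦ ‖A U t ψ₀‖` is bounded on bounded intervals.  Then
`t ↦ ⟨ψ(t), A ψ(t)⟩` is continuously differentiable with derivative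
`i (⟨Hψ(t), Aψ(t)⟩ - ⟨Aψ(t), Hψ(t)⟩)`. -/
theorem ehrenfest_of_locally_bounded
    {X : Type*} [NormedAddCommGroup X] [InnerProductSpace ℂ X] [CompleteSpace X]
    (A H : X →ₗ.[ℂ] X)
    (hH : IsSelfAdjoint H)
    (hAdense : Dense (A.domain : Set X))
    (hAsym : ∀ x y : A.domain, (inner ℂ (A x) (y : X) : ℂ) = inner ℂ (x : X) (A y))
    (U : ℝ → X ≃ₗᵢ[ℂ] X)
    (hU0 : ∀ x : X, U 0 x = x)
    (hUadd : ∀ (s t : ℝ) (x : X), U (s + t) x = U s (U t x))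
    (hUgen : ∀ (ψ : H.domain) (t : ℝ),
      HasDerivAt (fun s : ℝ => U s (ψ : X)) (-I • U t (H ψ)) t)
    (hInvA : ∀ (t : ℝ) (x : X), x ∈ A.domain → x ∈ H.domain → U t x ∈ A.domain)
    (hInvH : ∀ (t : ℝ) (x : X), x ∈ A.domain → x ∈ H.domain → U t x ∈ H.domain)
    (hbd : ∀ (ψ : X) (hψA : ψ ∈ A.domain) (hψH : ψ ∈ H.domain) (I' : Set ℝ),
      Bornology.IsBounded I' →
      ∃ C : ℝ, ∀ t ∈ I', ‖A ⟨U t ψ, hInvA t ψ hψA hψH⟩‖ ≤ C)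
    (ψ₀ : X) (hψ₀A : ψ₀ ∈ A.domain) (hψ₀H : ψ₀ ∈ H.domain) :
    (∀ t : ℝ, HasDerivAt
        (fun s : ℝ => (inner ℂ (U s ψ₀) (A ⟨U s ψ₀, hInvA s ψ₀ hψ₀A hψ₀H⟩) : ℂ))
        (I * ((inner ℂ (H ⟨U t ψ₀, hInvH t ψ₀ hψ₀A hψ₀H⟩)
                (A ⟨U t ψ₀, hInvA t ψ₀ hψ₀A hψ₀H⟩) : ℂ)
            - (inner ℂ (A ⟨U t ψ₀, hInvA t ψ₀ hψ₀A hψ₀H⟩)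
                (H ⟨U t ψ₀, hInvH t ψ₀ hψ₀A hψ₀H⟩) : ℂ))) t)
    ∧ Continuous (fun t : ℝ =>
        I * ((inner ℂ (H ⟨U t ψ₀, hInvH t ψ₀ hψ₀A hψ₀H⟩)
                (A ⟨U t ψ₀, hInvA t ψ₀ hψ₀A hψ₀H⟩) : ℂ)
            - (inner ℂ (A ⟨U t ψ₀, hInvA t ψ₀ hψ₀A hψ₀H⟩)
                (H ⟨U t ψ₀, hInvH t ψ₀ hψ₀A hψ₀H⟩) : ℂ))) := by
  -- notation
  set u₀ : X := H ⟨ψ₀, hψ₀H⟩ with hu₀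
  have hUderiv : ∀ t : ℝ, HasDerivAt (fun s : ℝ => U s ψ₀) (-I • U t u₀) t :=
    fun t => hUgen ⟨ψ₀, hψ₀H⟩ t
  have hψcont : Continuous fun s : ℝ => U s ψ₀ :=
    continuous_iff_continuousAt.mpr fun t => (hUderiv t).continuousAt
  -- H commutes with U along the orbit
  have hHU : ∀ t : ℝ, (H ⟨U t ψ₀, hInvH t ψ₀ hψ₀A hψ₀H⟩ : X) = U t u₀ := by
    intro t
    have h0 := hUgen ⟨U t ψ₀, hInvH t ψ₀ hψ₀A hψ₀H⟩ 0
    rw [hU0] at h0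
    have hid : HasDerivAt (fun s : ℝ => s - t) 1 t := by
      simpa using (hasDerivAt_id t).sub_const t
    have hcomp' := HasDerivAt.scomp_of_eq (x := t) h0 hid (by simp)
    rw [one_smul] at hcomp'
    have heq : ((fun s : ℝ => U s ((U t) ψ₀)) ∘ fun s : ℝ => s - t)
        = fun s : ℝ => U s ψ₀ := by
      funext s
      show U (s - t) ((U t) ψ₀) = U s ψ₀
      rw [← hUadd]; congr 1; ring
    have hcomp : HasDerivAt (fun s : ℝ => U s ψ₀)
        (-I • (H ⟨U t ψ₀, hInvH t ψ₀ hψ₀A hψ₀H⟩ : X)) t := by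
      rw [← heq]; exact hcomp'
    have huniq := hcomp.unique (hUderiv t)
    have hinj : Function.Injective (fun x : X => (-I) • x) :=
      smul_right_injective X (neg_ne_zero.mpr I_ne_zero)
    exact hinj huniq
  -- strong continuity of U
  have hDH : Dense (H.domain : Set X) := hH.dense_domain
  have hUcont : ∀ x : X, Continuous fun t : ℝ => U t x := by
    apply aux_strong_cont U hDH
    intro y hy
    exact continuous_iff_continuousAt.mpr fun t => (hUgen ⟨y, hy⟩ t).continuousAt
  -- local bounds on ‖A ψ(t)‖
  have hloc : ∀ t : ℝ, ∃ C : ℝ,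
      ∀ᶠ s in 𝓝 t, ‖(A ⟨U s ψ₀, hInvA s ψ₀ hψ₀A hψ₀H⟩ : X)‖ ≤ C := by
    intro t
    obtain ⟨C, hC⟩ := hbd ψ₀ hψ₀A hψ₀H (Metric.ball t 1) Metric.isBounded_ball
    exact ⟨C, Filter.eventually_of_mem (Metric.ball_mem_nhds t one_pos) fun s hs => hC s hs⟩
  -- weak continuity of t ↦ A ψ(t)
  have hwk : ∀ (t : ℝ) (v : X),
      Tendsto (fun s : ℝ => ⟪v, (A ⟨U s ψ₀, hInvA s ψ₀ hψ₀A hψ₀H⟩ : X)⟫) (𝓝 t)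
        (𝓝 ⟪v, (A ⟨U t ψ₀, hInvA t ψ₀ hψ₀A hψ₀H⟩ : X)⟫) := by
    intro t v
    obtain ⟨C, hC⟩ := hloc t
    refine aux_weak_tendsto hC hAdense ?_ v
    rintro φ hφ
    have hsym : ∀ s : ℝ,
        ⟪φ, (A ⟨U s ψ₀, hInvA s ψ₀ hψ₀A hψ₀H⟩ : X)⟫
          = ⟪(A ⟨φ, hφ⟩ : X), U s ψ₀⟫ :=
      fun s => (hAsym ⟨φ, hφ⟩ ⟨U s ψ₀, hInvA s ψ₀ hψ₀A hψ₀H⟩).symm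
    have hc : Tendsto (fun s : ℝ => ⟪(A ⟨φ, hφ⟩ : X), U s ψ₀⟫) (𝓝 t)
        (𝓝 ⟪(A ⟨φ, hφ⟩ : X), U t ψ₀⟫) :=
      ((continuous_const.inner hψcont).tendsto t)
    rw [hsym t]
    exact hc.congr fun s => (hsym s).symm
  constructor
  · -- differentiability
    intro t
    rw [hasDerivAt_iff_tendsto_slope]
    set w : X := A ⟨U t ψ₀, hInvA t ψ₀ hψ₀A hψ₀H⟩ with hwdef
    set v : X := -I • U t u₀ with hvdef
    have hslope : Tendsto (slope (fun s : ℝ => U s ψ₀) t) (𝓝[≠] t) (𝓝 v) :=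
      hasDerivAt_iff_tendsto_slope.mp (hUderiv t)
    have hL : I * (⟪(H ⟨U t ψ₀, hInvH t ψ₀ hψ₀A hψ₀H⟩ : X), w⟫
          - ⟪w, (H ⟨U t ψ₀, hInvH t ψ₀ hψ₀A hψ₀H⟩ : X)⟫)
        = ⟪v, w⟫ + ⟪w, v⟫ := by
      rw [hHU t, hvdef, inner_smul_left, inner_smul_right]
      simp only [map_neg, Complex.conj_I, neg_neg]
      ring
    rw [hL]
    -- decomposition of the slope
    have hdecomp : ∀ s : ℝ,
        ⟪slope (fun r : ℝ => U r ψ₀) t s - v,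
            (A ⟨U s ψ₀, hInvA s ψ₀ hψ₀A hψ₀H⟩ : X)⟫
          + ⟪v, (A ⟨U s ψ₀, hInvA s ψ₀ hψ₀A hψ₀H⟩ : X)⟫
          + ⟪w, slope (fun r : ℝ => U r ψ₀) t s⟫
        = slope (fun s : ℝ =>
            (inner ℂ (U s ψ₀) (A ⟨U s ψ₀, hInvA s ψ₀ hψ₀A hψ₀H⟩) : ℂ)) t s := by
      intro s
      rw [slope_def_module, slope_def_module, inner_sub_left]
      have hr : ∀ (x : X) (r : ℝ), r • x = (r : ℂ) • x := fun x r =>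
        RCLike.real_smul_eq_coe_smul (K := ℂ) r x
      have hsub : (A (⟨U s ψ₀, hInvA s ψ₀ hψ₀A hψ₀H⟩
            - ⟨U t ψ₀, hInvA t ψ₀ hψ₀A hψ₀H⟩ : A.domain) : X)
          = (A ⟨U s ψ₀, hInvA s ψ₀ hψ₀A hψ₀H⟩ : X) - w := by
        rw [A.map_sub]
      have hcore : ⟪(A ⟨U t ψ₀, hInvA t ψ₀ hψ₀A hψ₀H⟩ : X), U s ψ₀ - U t ψ₀⟫
          = ⟪U t ψ₀, (A ⟨U s ψ₀, hInvA s ψ₀ hψ₀A hψ₀H⟩ : X) - w⟫ := by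
        have := hAsym ⟨U t ψ₀, hInvA t ψ₀ hψ₀A hψ₀H⟩
          (⟨U s ψ₀, hInvA s ψ₀ hψ₀A hψ₀H⟩ - ⟨U t ψ₀, hInvA t ψ₀ hψ₀A hψ₀H⟩)
        rw [hsub] at this
        convert this using 2
        rfl
      rw [hr ((U s) ψ₀ - (U t) ψ₀) ((s - t)⁻¹), Complex.real_smul,
        inner_smul_left, inner_smul_right, conj_ofReal, hcore,
        inner_sub_left, inner_sub_right, hwdef]
      ring
    have h1 : Tendsto (fun s : ℝ =>
        ⟪slope (fun r : ℝ => U r ψ₀) t s - v,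
          (A ⟨U s ψ₀, hInvA s ψ₀ hψ₀A hψ₀H⟩ : X)⟫) (𝓝[≠] t) (𝓝 0) := by
      obtain ⟨C, hC⟩ := hloc t
      have hC' : ∀ᶠ s in 𝓝[≠] t, ‖(A ⟨U s ψ₀, hInvA s ψ₀ hψ₀A hψ₀H⟩ : X)‖ ≤ C :=
        hC.filter_mono nhdsWithin_le_nhds
      apply squeeze_zero_norm'
        (a := fun s => ‖slope (fun r : ℝ => U r ψ₀) t s - v‖ * C)
      · filter_upwards [hC'] with s hs
        exact le_trans (norm_inner_le_norm _ _)
          (mul_le_mul_of_nonneg_left hs (norm_nonneg _))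
      · have h0 : Tendsto (fun s => slope (fun r : ℝ => U r ψ₀) t s - v)
            (𝓝[≠] t) (𝓝 0) := by
          simpa using hslope.sub (tendsto_const_nhds (x := v))
        simpa using h0.norm.mul_const C
    have h2 : Tendsto (fun s : ℝ =>
        ⟪v, (A ⟨U s ψ₀, hInvA s ψ₀ hψ₀A hψ₀H⟩ : X)⟫) (𝓝[≠] t) (𝓝 ⟪v, w⟫) :=
      (hwk t v).mono_left nhdsWithin_le_nhds
    have h3 : Tendsto (fun s : ℝ => ⟪w, slope (fun r : ℝ => U r ψ₀) t s⟫)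
        (𝓝[≠] t) (𝓝 ⟪w, v⟫) :=
      Tendsto.inner tendsto_const_nhds hslope
    have total := (h1.add h2).add h3
    rw [zero_add] at total
    exact total.congr hdecomp
  · -- continuity of the derivative
    have hg : Continuous (fun t : ℝ =>
        ⟪U t u₀, (A ⟨U t ψ₀, hInvA t ψ₀ hψ₀A hψ₀H⟩ : X)⟫) := by
      rw [continuous_iff_continuousAt]
      intro t
      rw [ContinuousAt]
      obtain ⟨C, hC⟩ := hloc t
      have h1 : Tendsto (fun s : ℝ =>
          ⟪U s u₀ - U t u₀, (A ⟨U s ψ₀, hInvA s ψ₀ hψ₀A hψ₀H⟩ : X)⟫)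
          (𝓝 t) (𝓝 0) := by
        apply squeeze_zero_norm'
          (a := fun s => ‖U s u₀ - U t u₀‖ * C)
        · filter_upwards [hC] with s hs
          exact le_trans (norm_inner_le_norm _ _)
            (mul_le_mul_of_nonneg_left hs (norm_nonneg _))
        · have h0 : Tendsto (fun s => U s u₀ - U t u₀) (𝓝 t) (𝓝 0) := by
            simpa using ((hUcont u₀).tendsto t).sub
              (tendsto_const_nhds (x := U t u₀))
          simpa using h0.norm.mul_const C
      have h2 := hwk t (U t u₀)
      have total := h1.add h2
      rw [zero_add] at total
      exact total.congr fun s => by rw [inner_sub_left]; ring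
    have hconj : Continuous (fun t : ℝ =>
        ⟪(A ⟨U t ψ₀, hInvA t ψ₀ hψ₀A hψ₀H⟩ : X), U t u₀⟫) := by
      have hc := Complex.continuous_conj.comp hg
      exact hc.congr fun t => by simp [inner_conj_symm]
    simp only [hHU]
    exact continuous_const.mul (hg.sub hconj)
end

section
/- Let H be self-adjoint and A a closed, densely defined hermitean operator on a Hilbert space X, and suppose T(t) := e^{-itH} leaves D(A) ∩ D(H) invariant for all t ∈ ℝ. Then for every ψ₀ ∈ D(A) ∩ D(H) and every bounded interval I ⊂ ℝ, sup_{t∈I} ‖A T(t)ψ₀‖ < ∞. -/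
open Complex Filter

set_option linter.unusedSectionVars false

section Aux

variable {X : Type*} [NormedAddCommGroup X] [InnerProductSpace ℂ X] [CompleteSpace X]

local notation "⟪" x ", " y "⟫" => @inner ℂ _ _ x y

/-- The joint graph of `A` and `H`, as a submodule of `X × X × X`. -/
def auxG (A H : X →ₗ.[ℂ] X) : Submodule ℂ (X × X × X) where
  carrier := {p | ∃ (hA : p.1 ∈ A.domain) (hH : p.1 ∈ H.domain),
    p.2 = (A ⟨p.1, hA⟩, H ⟨p.1, hH⟩)}
  zero_mem' := ⟨A.domain.zero_mem, H.domain.zero_mem, by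
    have hA : A ⟨(0:X), A.domain.zero_mem⟩ = 0 := A.map_zero
    have hH : H ⟨(0:X), H.domain.zero_mem⟩ = 0 := H.map_zero
    simp [hA, hH, Prod.ext_iff]⟩
  add_mem' := by
    rintro p q ⟨hpA, hpH, hp⟩ ⟨hqA, hqH, hq⟩
    refine ⟨A.domain.add_mem hpA hqA, H.domain.add_mem hpH hqH, ?_⟩
    have hA : A ⟨p.1 + q.1, A.domain.add_mem hpA hqA⟩ = A ⟨p.1, hpA⟩ + A ⟨q.1, hqA⟩ :=
      A.map_add ⟨p.1, hpA⟩ ⟨q.1, hqA⟩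
    have hH : H ⟨p.1 + q.1, H.domain.add_mem hpH hqH⟩ = H ⟨p.1, hpH⟩ + H ⟨q.1, hqH⟩ :=
      H.map_add ⟨p.1, hpH⟩ ⟨q.1, hqH⟩
    simp [hp, hq, hA, hH, Prod.ext_iff]
  smul_mem' := by
    rintro c p ⟨hpA, hpH, hp⟩
    refine ⟨A.domain.smul_mem c hpA, H.domain.smul_mem c hpH, ?_⟩
    have hA : A ⟨c • p.1, A.domain.smul_mem c hpA⟩ = c • A ⟨p.1, hpA⟩ :=
      A.map_smul c ⟨p.1, hpA⟩
    have hH : H ⟨c • p.1, H.domain.smul_mem c hpH⟩ = c • H ⟨p.1, hpH⟩ :=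
      H.map_smul c ⟨p.1, hpH⟩
    simp [hp, hA, hH, Prod.ext_iff]

variable {A H : X →ₗ.[ℂ] X}

lemma auxG_memA {p : X × X × X} (h : p ∈ auxG A H) : p.1 ∈ A.domain := by
  obtain ⟨hA, -, -⟩ := h; exact hA

lemma auxG_memH {p : X × X × X} (h : p ∈ auxG A H) : p.1 ∈ H.domain := by
  obtain ⟨-, hH, -⟩ := h; exact hH

lemma auxG_snd {p : X × X × X} (h : p ∈ auxG A H) :
    p.2 = (A ⟨p.1, auxG_memA h⟩, H ⟨p.1, auxG_memH h⟩) := by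
  obtain ⟨hA, hH, he⟩ := h; exact he

lemma auxG_ext {p q : X × X × X} (hp : p ∈ auxG A H) (hq : q ∈ auxG A H)
    (h : p.1 = q.1) : p = q := by
  have h2 : p.2 = q.2 := by
    rw [auxG_snd hp, auxG_snd hq]
    have e1 : (⟨p.1, auxG_memA hp⟩ : A.domain) = ⟨q.1, auxG_memA hq⟩ := Subtype.ext h
    have e2 : (⟨p.1, auxG_memH hp⟩ : H.domain) = ⟨q.1, auxG_memH hq⟩ := Subtype.ext h
    rw [e1, e2]
  exact Prod.ext h h2

lemma auxG_ext' {p q : auxG A H} (h : (p : X × X × X).1 = (q : X × X × X).1) : p = q :=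
  Subtype.ext (auxG_ext p.2 q.2 h)

end Aux

set_option linter.unusedSectionVars false

section Aux2
variable {X : Type*} [NormedAddCommGroup X] [InnerProductSpace ℂ X] [CompleteSpace X]
local notation "⟪" x ", " y "⟫" => @inner ℂ _ _ x y

/-- A self-adjoint operator is closed. -/
lemma aux_selfAdjoint_isClosed {H : X →ₗ.[ℂ] X} (hH : IsSelfAdjoint H) : H.IsClosed := by
  have hdense : Dense (H.domain : Set X) := hH.dense_domain
  rw [LinearPMap.isSelfAdjoint_def] at hH
  have hsymm : ∀ x y : H.domain, ⟪H x, (y : X)⟫ = ⟪(x : X), H y⟫ := by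
    have h := LinearPMap.adjoint_isFormalAdjoint hdense
    rw [hH] at h
    exact h
  have hchar : (H.graph : Set (X × X)) =
      ⋂ x : H.domain, {p : X × X | ⟪p.2, (x : X)⟫ = ⟪p.1, H x⟫} := by
    ext p
    simp only [Set.mem_iInter, Set.mem_setOf_eq, SetLike.mem_coe]
    constructor
    · intro hp x
      rw [LinearPMap.mem_graph_iff] at hp
      obtain ⟨y, hy1, hy2⟩ := hp
      rw [← hy2, ← hy1, hsymm y x]
    · intro hp
      have hmem : p.1 ∈ H.adjoint.domain :=
        LinearPMap.mem_adjoint_domain_of_exists _ ⟨p.2, fun x => hp x⟩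
      have happ : H.adjoint ⟨p.1, hmem⟩ = p.2 :=
        LinearPMap.adjoint_apply_eq hdense _ (fun x => hp x)
      have hhh : p ∈ H.adjoint.graph := by
        rw [LinearPMap.mem_graph_iff]
        exact ⟨⟨p.1, hmem⟩, rfl, happ⟩
      rwa [hH] at hhh
  show _root_.IsClosed (H.graph : Set (X × X))
  rw [hchar]
  refine isClosed_iInter fun x => ?_
  exact isClosed_eq ((continuous_snd.inner continuous_const)) (continuous_fst.inner continuous_const)

/-- The joint graph is closed. -/
lemma auxG_isClosed {A H : X →ₗ.[ℂ] X} (hA : A.IsClosed) (hH : H.IsClosed) :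
    IsClosed ((auxG A H : Submodule ℂ (X × X × X)) : Set (X × X × X)) := by
  have hset : ((auxG A H : Submodule ℂ (X × X × X)) : Set (X × X × X)) =
      ((fun p : X × X × X => (p.1, p.2.1)) ⁻¹' (A.graph : Set (X × X))) ∩
      ((fun p : X × X × X => (p.1, p.2.2)) ⁻¹' (H.graph : Set (X × X))) := by
    ext p
    simp only [Set.mem_inter_iff, Set.mem_preimage, SetLike.mem_coe, LinearPMap.mem_graph_iff]
    constructor
    · rintro ⟨hpA, hpH, he⟩
      refine ⟨⟨⟨p.1, hpA⟩, rfl, ?_⟩, ⟨⟨p.1, hpH⟩, rfl, ?_⟩⟩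
      · rw [he]
      · rw [he]
    · rintro ⟨⟨x, hx1, hx2⟩, ⟨y, hy1, hy2⟩⟩
      have hxm : p.1 ∈ A.domain := by rw [← hx1]; exact x.2
      have hym : p.1 ∈ H.domain := by rw [← hy1]; exact y.2
      refine ⟨hxm, hym, ?_⟩
      have ex : x = ⟨p.1, hxm⟩ := Subtype.ext hx1
      have ey : y = ⟨p.1, hym⟩ := Subtype.ext hy1
      have h2 : p.2 = (A x, H y) := by rw [hx2, hy2]
      rw [h2, ex, ey]
  rw [hset]
  exact ((hA.preimage (continuous_fst.prodMk (continuous_snd.fst))).inter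
    (hH.preimage (continuous_fst.prodMk (continuous_snd.snd))))
end Aux2

section Aux3
variable {X : Type*} [NormedAddCommGroup X] [InnerProductSpace ℂ X] [CompleteSpace X]
variable {A H : X →ₗ.[ℂ] X} (U : ℝ → X ≃ₗᵢ[ℂ] X)
variable (hInvA : ∀ (t : ℝ) (x : X), x ∈ A.domain → x ∈ H.domain → U t x ∈ A.domain)
variable (hInvH : ∀ (t : ℝ) (x : X), x ∈ A.domain → x ∈ H.domain → U t x ∈ H.domain)

/-- The evolution on the joint graph, as a linear map. -/
def auxV (t : ℝ) : auxG A H →ₗ[ℂ] auxG A H where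
  toFun p := ⟨(U t (p : X × X × X).1,
      A ⟨U t (p : X × X × X).1, hInvA t _ (auxG_memA p.2) (auxG_memH p.2)⟩,
      H ⟨U t (p : X × X × X).1, hInvH t _ (auxG_memA p.2) (auxG_memH p.2)⟩),
      hInvA t _ (auxG_memA p.2) (auxG_memH p.2),
      hInvH t _ (auxG_memA p.2) (auxG_memH p.2), rfl⟩
  map_add' p q := by
    apply auxG_ext'
    show U t ((p : X × X × X).1 + (q : X × X × X).1) = U t _ + U t _
    exact map_add (U t) _ _
  map_smul' c p := by
    apply auxG_ext'
    show U t (c • (p : X × X × X).1) = c • U t _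
    exact map_smul (U t) _ _

lemma auxV_fst (t : ℝ) (p : auxG A H) :
    ((auxV U hInvA hInvH t p : X × X × X)).1 = U t (p : X × X × X).1 := rfl

lemma auxV_comp (s t : ℝ) (hUadd : ∀ (s t : ℝ) (x : X), U (s + t) x = U s (U t x)) :
    auxV U hInvA hInvH (s + t) = (auxV U hInvA hInvH s).comp (auxV U hInvA hInvH t) := by
  apply LinearMap.ext
  intro p
  apply auxG_ext'
  show U (s + t) (p : X × X × X).1 = U s (U t (p : X × X × X).1)
  exact hUadd s t _

lemma auxV_graph_closed (hAc : A.IsClosed) (hHc : H.IsClosed) (t : ℝ) :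
    IsClosed ((auxV U hInvA hInvH t).graph : Set (auxG A H × auxG A H)) := by
  have hset : ((auxV U hInvA hInvH t).graph : Set (auxG A H × auxG A H)) =
      {pq : auxG A H × auxG A H |
        ((pq.2 : X × X × X)).1 = U t ((pq.1 : X × X × X)).1} := by
    ext pq
    simp only [Set.mem_setOf_eq, SetLike.mem_coe, LinearMap.mem_graph_iff]
    constructor
    · intro h
      rw [h]
      rfl
    · intro h
      exact (auxG_ext' (by rw [auxV_fst, h])).symm
  rw [hset]
  exact isClosed_eq ((continuous_subtype_val.comp continuous_snd).fst)
    (((U t).continuous).comp ((continuous_subtype_val.comp continuous_fst).fst))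

/-- The evolution on the joint graph, as a continuous linear map. -/
noncomputable def auxVc (hAc : A.IsClosed) (hHc : H.IsClosed) (t : ℝ) :
    auxG A H →L[ℂ] auxG A H :=
  haveI : CompleteSpace (auxG A H) :=
    (auxG_isClosed hAc hHc).completeSpace_coe
  ⟨auxV U hInvA hInvH t,
    (auxV U hInvA hInvH t).continuous_of_isClosed_graph (auxV_graph_closed U hInvA hInvH hAc hHc t)⟩

end Aux3

section Aux4
variable {X : Type*} [NormedAddCommGroup X] [InnerProductSpace ℂ X] [CompleteSpace X]
local notation "⟪" x ", " y "⟫" => @inner ℂ _ _ x y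

/-- If `A` is symmetric with dense domain and `‖⟪A φ, y⟫‖ ≤ M ‖φ‖` for all `φ` in the domain,
then `‖A y‖ ≤ M`. -/
lemma aux_norm_le {A : X →ₗ.[ℂ] X} (hAdense : Dense (A.domain : Set X))
    (hAsym : ∀ x y : A.domain, ⟪A x, (y : X)⟫ = ⟪(x : X), A y⟫)
    (y : A.domain) (M : ℝ) (hM : 0 ≤ M)
    (h : ∀ φ : A.domain, ‖⟪A φ, (y : X)⟫‖ ≤ M * ‖(φ : X)‖) : ‖A y‖ ≤ M := by
  have key : ∀ z : X, ‖⟪z, A y⟫‖ ≤ M * ‖z‖ := by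
    have hclosed : IsClosed {z : X | ‖⟪z, A y⟫‖ ≤ M * ‖z‖} :=
      isClosed_le ((continuous_id.inner continuous_const).norm)
        (continuous_const.mul continuous_norm)
    have hsub : (A.domain : Set X) ⊆ {z : X | ‖⟪z, A y⟫‖ ≤ M * ‖z‖} := by
      intro z hz
      have hz2 := h ⟨z, hz⟩
      rwa [hAsym ⟨z, hz⟩ y] at hz2
    intro z
    have huniv : (Set.univ : Set X) ⊆ {z : X | ‖⟪z, A y⟫‖ ≤ M * ‖z‖} := by
      rw [← hAdense.closure_eq]
      exact hclosed.closure_subset_iff.mpr hsub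
    exact huniv (Set.mem_univ z)
  have h3 : ‖A y‖ * ‖A y‖ ≤ M * ‖A y‖ := by
    calc ‖A y‖ * ‖A y‖ = RCLike.re ⟪A y, A y⟫ := (inner_self_eq_norm_mul_norm _).symm
      _ ≤ ‖⟪A y, A y⟫‖ := RCLike.re_le_norm _
      _ ≤ M * ‖A y‖ := key _
  rcases eq_or_lt_of_le (norm_nonneg (A y)) with h0 | h0
  · rw [← h0]; exact hM
  · exact le_of_mul_le_mul_right h3 h0
end Aux4

/-- **Proposition 2.** `H` self-adjoint, `A` closed, densely defined and hermitean, and the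
unitary group `U t = e^{-itH}` leaves `D(A) ∩ D(H)` invariant.  Then for every
`ψ₀ ∈ D(A) ∩ D(H)`, `t ↦ ‖A U t ψ₀‖` is bounded on every bounded interval. -/
theorem locally_bounded_of_closed
    {X : Type*} [NormedAddCommGroup X] [InnerProductSpace ℂ X] [CompleteSpace X]
    (A H : X →ₗ.[ℂ] X)
    (hH : IsSelfAdjoint H)
    (hAdense : Dense (A.domain : Set X))
    (hAsym : ∀ x y : A.domain, (inner ℂ (A x) (y : X) : ℂ) = inner ℂ (x : X) (A y))
    (hAclosed : A.IsClosed)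
    (U : ℝ → X ≃ₗᵢ[ℂ] X)
    (hU0 : ∀ x : X, U 0 x = x)
    (hUadd : ∀ (s t : ℝ) (x : X), U (s + t) x = U s (U t x))
    (hUgen : ∀ (ψ : H.domain) (t : ℝ),
      HasDerivAt (fun s : ℝ => U s (ψ : X)) (-I • U t (H ψ)) t)
    (hInvA : ∀ (t : ℝ) (x : X), x ∈ A.domain → x ∈ H.domain → U t x ∈ A.domain)
    (hInvH : ∀ (t : ℝ) (x : X), x ∈ A.domain → x ∈ H.domain → U t x ∈ H.domain)
    (ψ₀ : X) (hψ₀A : ψ₀ ∈ A.domain) (hψ₀H : ψ₀ ∈ H.domain) :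
    ∀ I' : Set ℝ, Bornology.IsBounded I' →
      ∃ C : ℝ, ∀ t ∈ I', ‖A ⟨U t ψ₀, hInvA t ψ₀ hψ₀A hψ₀H⟩‖ ≤ C := by
  intro I' hI'
  have hHclosed : H.IsClosed := aux_selfAdjoint_isClosed hH
  haveI : CompleteSpace (auxG A H : Submodule ℂ (X × X × X)) :=
    (auxG_isClosed hAclosed hHclosed).completeSpace_coe
  set Vc : ℝ → ((auxG A H : Submodule ℂ (X × X × X)) →L[ℂ] (auxG A H : Submodule ℂ (X × X × X))) :=
    auxVc U hInvA hInvH hAclosed hHclosed with hVc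
  -- composition law for Vc
  have hVcomp : ∀ s t : ℝ, Vc (s + t) = (Vc s).comp (Vc t) := by
    intro s t
    apply ContinuousLinearMap.ext
    intro p
    exact LinearMap.congr_fun (auxV_comp U hInvA hInvH s t hUadd) p
  have hVnorm_comp : ∀ s t : ℝ, ‖Vc (s + t)‖ ≤ ‖Vc s‖ * ‖Vc t‖ := by
    intro s t
    rw [hVcomp s t]
    exact ContinuousLinearMap.opNorm_comp_le _ _
  -- continuity of orbits
  have Ucont : ∀ x : X, x ∈ H.domain → Continuous fun t : ℝ => U t x := fun x hx =>
    continuous_iff_continuousAt.mpr fun t => (hUgen ⟨x, hx⟩ t).continuousAt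
  -- H commutes with U on the joint domain
  have Hcomm : ∀ (t : ℝ) (x : X) (hxA : x ∈ A.domain) (hx : x ∈ H.domain),
      H ⟨U t x, hInvH t x hxA hx⟩ = U t (H ⟨x, hx⟩) := by
    intro t x hxA hx
    have d1 : HasDerivAt (fun s : ℝ => U s x) (-I • U t (H ⟨x, hx⟩)) t := hUgen ⟨x, hx⟩ t
    have d2 : HasDerivAt (fun s : ℝ => U s (U t x))
        (-I • U 0 (H ⟨U t x, hInvH t x hxA hx⟩)) 0 := hUgen ⟨U t x, hInvH t x hxA hx⟩ 0
    have d1' : HasDerivAt (fun s : ℝ => U s x) (-I • U t (H ⟨x, hx⟩)) (0 + t) := by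
      rwa [zero_add]
    have d3 : HasDerivAt (fun s : ℝ => U (s + t) x) (-I • U t (H ⟨x, hx⟩)) 0 :=
      d1'.comp_add_const 0 t
    have e : (fun s : ℝ => U s (U t x)) = fun s : ℝ => U (s + t) x := by
      funext s; rw [hUadd]
    rw [e] at d2
    have heq := d3.unique d2
    have hI : (-I : ℂ) ≠ 0 := by simp [I_ne_zero]
    have h5 : U t (H ⟨x, hx⟩) = U 0 (H ⟨U t x, hInvH t x hxA hx⟩) :=
      smul_right_injective X hI heq
    rw [hU0] at h5
    exact h5.symm
  -- component bounds in the graph norm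
  have comp1_le : ∀ p : (auxG A H : Submodule ℂ (X × X × X)), ‖(p : X × X × X).1‖ ≤ ‖p‖ := by
    intro p
    rw [← Submodule.norm_coe p, Prod.norm_def]
    exact le_max_left _ _
  have comp2_le : ∀ p : (auxG A H : Submodule ℂ (X × X × X)), ‖(p : X × X × X).2.1‖ ≤ ‖p‖ := by
    intro p
    rw [← Submodule.norm_coe p, Prod.norm_def, Prod.norm_def]
    exact le_trans (le_max_left _ _) (le_max_right _ _)
  have comp3_le : ∀ p : (auxG A H : Submodule ℂ (X × X × X)), ‖(p : X × X × X).2.2‖ ≤ ‖p‖ := by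
    intro p
    rw [← Submodule.norm_coe p, Prod.norm_def, Prod.norm_def]
    exact le_trans (le_max_right _ _) (le_max_right _ _)
  -- norm of Vc t p via components
  have hVpnorm : ∀ (t : ℝ) (p : (auxG A H : Submodule ℂ (X × X × X))) (n : ℝ),
      ‖(Vc t p : X × X × X).2.1‖ ≤ n * ‖p‖ → ‖Vc t p‖ ≤ (n + 1) * ‖p‖ := by
    intro t p n hn
    have h1 : ‖(Vc t p : X × X × X).1‖ = ‖(p : X × X × X).1‖ := by
      have e0 : (Vc t p : X × X × X).1 = U t (p : X × X × X).1 := rfl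
      rw [e0]
      exact (U t).norm_map _
    have h3 : ‖(Vc t p : X × X × X).2.2‖ = ‖(p : X × X × X).2.2‖ := by
      have e1 : (Vc t p : X × X × X).2.2
          = H ⟨U t (p : X × X × X).1, hInvH t _ (auxG_memA p.2) (auxG_memH p.2)⟩ := rfl
      rw [e1, Hcomm t _ (auxG_memA p.2) (auxG_memH p.2)]
      rw [(U t).norm_map]
      have e2 : (p : X × X × X).2.2 = H ⟨(p : X × X × X).1, auxG_memH p.2⟩ :=
        congrArg Prod.snd (auxG_snd p.2)
      rw [e2]
    have hnonneg : (0 : ℝ) ≤ ‖p‖ := norm_nonneg _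
    have hn0 : 0 ≤ n * ‖p‖ := le_trans (norm_nonneg _) hn
    rw [← Submodule.norm_coe (Vc t p), Prod.norm_def, Prod.norm_def]
    have hexp : (n + 1) * ‖p‖ = n * ‖p‖ + ‖p‖ := by ring
    rw [hexp]
    refine max_le ?_ (max_le ?_ ?_)
    · rw [h1]
      linarith [comp1_le p, hn0]
    · linarith [hn, hnonneg]
    · rw [h3]
      linarith [comp3_le p, hn0]
  -- the Baire sets
  set K : ℕ → Set ℝ := fun n =>
    ⋂ (p : (auxG A H : Submodule ℂ (X × X × X))) (φ : A.domain),
      {t : ℝ | ‖(inner ℂ (A φ) (U t (p : X × X × X).1) : ℂ)‖ ≤ (n : ℝ) * ‖p‖ * ‖(φ : X)‖}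
    with hK
  have hKclosed : ∀ n, IsClosed (K n) := by
    intro n
    refine isClosed_iInter fun p => isClosed_iInter fun φ => ?_
    exact isClosed_le
      ((Continuous.inner continuous_const (Ucont _ (auxG_memH p.2))).norm) continuous_const
  have hKmem : ∀ (n : ℕ) (t : ℝ), t ∈ K n ↔
      ∀ (p : (auxG A H : Submodule ℂ (X × X × X))) (φ : A.domain),
        ‖(inner ℂ (A φ) (U t (p : X × X × X).1) : ℂ)‖ ≤ (n : ℝ) * ‖p‖ * ‖(φ : X)‖ := by
    intro n t
    simp only [hK, Set.mem_iInter, Set.mem_setOf_eq]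
  -- A applied to the evolved vector, as the middle component
  have hmid : ∀ (t : ℝ) (p : (auxG A H : Submodule ℂ (X × X × X))),
      (Vc t p : X × X × X).2.1
        = A ⟨U t (p : X × X × X).1, hInvA t _ (auxG_memA p.2) (auxG_memH p.2)⟩ := fun _ _ => rfl
  -- K n covers ℝ
  have hKcover : ⋃ n, K n = Set.univ := by
    refine Set.eq_univ_of_forall fun t => ?_
    refine Set.mem_iUnion.mpr ⟨⌈‖Vc t‖⌉₊, (hKmem _ t).mpr fun p φ => ?_⟩
    have hy : U t (p : X × X × X).1 ∈ A.domain :=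
      hInvA t _ (auxG_memA p.2) (auxG_memH p.2)
    have e1 : (inner ℂ (A φ) (U t (p : X × X × X).1) : ℂ)
        = inner ℂ (φ : X) (A ⟨U t (p : X × X × X).1, hy⟩) :=
      hAsym φ ⟨U t (p : X × X × X).1, hy⟩
    rw [e1]
    calc ‖(inner ℂ (φ : X) (A ⟨U t (p : X × X × X).1, hy⟩) : ℂ)‖
        ≤ ‖(φ : X)‖ * ‖A ⟨U t (p : X × X × X).1, hy⟩‖ := norm_inner_le_norm _ _
      _ ≤ ‖(φ : X)‖ * (‖Vc t‖ * ‖p‖) := by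
          refine mul_le_mul_of_nonneg_left ?_ (norm_nonneg _)
          calc ‖A ⟨U t (p : X × X × X).1, hy⟩‖ = ‖(Vc t p : X × X × X).2.1‖ := by rw [hmid]
            _ ≤ ‖Vc t p‖ := comp2_le _
            _ ≤ ‖Vc t‖ * ‖p‖ := (Vc t).le_opNorm p
      _ = ‖Vc t‖ * ‖p‖ * ‖(φ : X)‖ := by ring
      _ ≤ (⌈‖Vc t‖⌉₊ : ℝ) * ‖p‖ * ‖(φ : X)‖ := by
          have h1 : ‖Vc t‖ ≤ (⌈‖Vc t‖⌉₊ : ℝ) := Nat.le_ceil _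
          exact mul_le_mul_of_nonneg_right
            (mul_le_mul_of_nonneg_right h1 (norm_nonneg _)) (norm_nonneg _)
  -- on K n the operator norm is bounded by n + 1
  have hKbound : ∀ (n : ℕ) (t : ℝ), t ∈ K n → ‖Vc t‖ ≤ (n : ℝ) + 1 := by
    intro n t ht
    refine (Vc t).opNorm_le_bound (by positivity) fun p => ?_
    refine hVpnorm t p n ?_
    rw [hmid]
    refine aux_norm_le hAdense hAsym _ _ (by positivity) fun φ => ?_
    have := (hKmem n t).mp ht p φ
    calc ‖(inner ℂ (A φ) ((U t (p : X × X × X).1 : X)) : ℂ)‖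
        ≤ (n : ℝ) * ‖p‖ * ‖(φ : X)‖ := this
      _ = (n : ℝ) * ‖p‖ * ‖(φ : X)‖ := rfl
  -- Baire category
  obtain ⟨n, hn⟩ := nonempty_interior_of_iUnion_of_closed hKclosed hKcover
  obtain ⟨t₀, ht₀⟩ := hn
  obtain ⟨ε, hε, hball⟩ := Metric.isOpen_iff.mp isOpen_interior t₀ ht₀
  have hballK : Metric.ball t₀ ε ⊆ K n := hball.trans interior_subset
  -- bound near zero
  set M : ℝ := ((n : ℝ) + 1) * ‖Vc (-t₀)‖ with hM
  have hnear : ∀ r : ℝ, |r| < ε → ‖Vc r‖ ≤ M := by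
    intro r hr
    have hmem : r + t₀ ∈ Metric.ball t₀ ε := by
      rw [Metric.mem_ball, Real.dist_eq]
      simpa using hr
    have h1 : ‖Vc (r + t₀)‖ ≤ (n : ℝ) + 1 := hKbound n _ (hballK hmem)
    have h2 : r = (r + t₀) + (-t₀) := by ring
    calc ‖Vc r‖ = ‖Vc ((r + t₀) + (-t₀))‖ := by rw [← h2]
      _ ≤ ‖Vc (r + t₀)‖ * ‖Vc (-t₀)‖ := hVnorm_comp _ _
      _ ≤ ((n : ℝ) + 1) * ‖Vc (-t₀)‖ :=
          mul_le_mul_of_nonneg_right h1 (ContinuousLinearMap.opNorm_nonneg _)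
  set Mp : ℝ := max M 1 with hMp
  have hMp1 : (1 : ℝ) ≤ Mp := le_max_right _ _
  have hMp0 : (0 : ℝ) ≤ Mp := le_trans zero_le_one hMp1
  -- iterate
  have hpow : ∀ (m : ℕ) (r : ℝ), |r| < ε → ‖Vc ((m : ℝ) * r)‖ ≤ Mp ^ m := by
    intro m
    induction m with
    | zero =>
      intro r _
      have h0 : ((0 : ℕ) : ℝ) * r = 0 := by norm_num
      rw [h0]
      have hid : Vc 0 = ContinuousLinearMap.id ℂ _ := by
        apply ContinuousLinearMap.ext
        intro p
        apply auxG_ext'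
        show U 0 (p : X × X × X).1 = (p : X × X × X).1
        exact hU0 _
      rw [hid]
      simpa using ContinuousLinearMap.norm_id_le
    | succ m ih =>
      intro r hr
      have h0 : ((m + 1 : ℕ) : ℝ) * r = ((m : ℕ) : ℝ) * r + r := by push_cast; ring
      rw [h0]
      calc ‖Vc (((m : ℕ) : ℝ) * r + r)‖ ≤ ‖Vc (((m : ℕ) : ℝ) * r)‖ * ‖Vc r‖ := hVnorm_comp _ _
        _ ≤ Mp ^ m * Mp := by
            refine mul_le_mul (ih r hr) (le_trans (hnear r hr) (le_max_left _ _))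
              (ContinuousLinearMap.opNorm_nonneg _) (by positivity)
        _ = Mp ^ (m + 1) := by ring
  -- conclusion
  obtain ⟨R, hR⟩ := hI'.subset_closedBall 0
  set m : ℕ := ⌈R / ε⌉₊ + 1 with hm
  set p₀ : (auxG A H : Submodule ℂ (X × X × X)) :=
    ⟨(ψ₀, A ⟨ψ₀, hψ₀A⟩, H ⟨ψ₀, hψ₀H⟩), hψ₀A, hψ₀H, rfl⟩ with hp₀
  refine ⟨Mp ^ m * ‖p₀‖, fun t ht => ?_⟩
  have htR : |t| ≤ R := by
    have := hR ht
    rwa [Metric.mem_closedBall, Real.dist_eq, sub_zero] at this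
  have hmpos : (0 : ℝ) < (m : ℕ) := by positivity
  have hmR : R < (m : ℝ) * ε := by
    have h1 : R / ε ≤ (⌈R / ε⌉₊ : ℝ) := Nat.le_ceil _
    have h2 : ((⌈R / ε⌉₊ : ℕ) : ℝ) < (m : ℝ) := by
      rw [hm]; push_cast; linarith
    have h3 : R / ε < (m : ℝ) := lt_of_le_of_lt h1 h2
    calc R = (R / ε) * ε := by field_simp
      _ < (m : ℝ) * ε := by exact mul_lt_mul_of_pos_right h3 hε
  have hrsmall : |t / (m : ℝ)| < ε := by
    rw [abs_div, abs_of_pos hmpos, div_lt_iff₀ hmpos]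
    calc |t| ≤ R := htR
      _ < (m : ℝ) * ε := hmR
      _ = ε * (m : ℝ) := by ring
  have hm0 : ((m : ℕ) : ℝ) ≠ 0 := ne_of_gt hmpos
  have hts : ((m : ℕ) : ℝ) * (t / (m : ℝ)) = t := by
    rw [mul_comm]
    exact div_mul_cancel₀ t hm0
  have hVt : ‖Vc t‖ ≤ Mp ^ m := by
    rw [← hts]
    exact hpow m _ hrsmall
  have hfin : A ⟨U t ψ₀, hInvA t ψ₀ hψ₀A hψ₀H⟩ = (Vc t p₀ : X × X × X).2.1 := rfl
  rw [hfin]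
  calc ‖(Vc t p₀ : X × X × X).2.1‖ ≤ ‖Vc t p₀‖ := comp2_le _
    _ ≤ ‖Vc t‖ * ‖p₀‖ := (Vc t).le_opNorm _
    _ ≤ Mp ^ m * ‖p₀‖ := mul_le_mul_of_nonneg_right hVt (norm_nonneg _)
end

section
/- Let A be a densely defined hermitean operator on a Hilbert space X, and let t ↦ ψ(t) be a continuous map from ℝ to X with ψ(t) ∈ D(A) for all t. Then there exists a nonempty open interval (a,b) ⊂ ℝ such that sup_{t∈(a,b)} ‖Aψ(t)‖ < ∞. -/
open Filter

lemma norm_le_of_inner_le_dense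
    {X : Type*} [NormedAddCommGroup X] [InnerProductSpace ℂ X]
    {s : Set X} (hs : Dense s) (x : X) (C : ℝ) (hC : 0 ≤ C)
    (h : ∀ y ∈ s, ‖(inner ℂ x y : ℂ)‖ ≤ C * ‖y‖) : ‖x‖ ≤ C := by
  have h' : ∀ y : X, ‖(inner ℂ x y : ℂ)‖ ≤ C * ‖y‖ := by
    have hcl : IsClosed {y : X | ‖(inner ℂ x y : ℂ)‖ ≤ C * ‖y‖} := by
      apply isClosed_le
      · exact (continuous_const.inner continuous_id).norm
      · exact continuous_const.mul continuous_norm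
    have := hs.closure_eq
    intro y
    have hy : y ∈ closure s := by rw [this]; trivial
    exact hcl.closure_subset_iff.2 h hy
  have hx := h' x
  rw [inner_self_eq_norm_sq_to_K (𝕜 := ℂ)] at hx
  simp only [norm_pow, RCLike.norm_ofReal, abs_norm] at hx
  rcases eq_or_lt_of_le (norm_nonneg x) with h0 | h0
  · rw [← h0]; exact hC
  · nlinarith [sq_abs ‖x‖]

/-- **Baire category step.** If `A` is a densely defined hermitean operator on a Hilbert space
and `t ↦ ψ(t)` is continuous with values in `D(A)`, then `‖A ψ(t)‖` is bounded on some
nonempty open interval `(a, b)`. -/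
theorem exists_interval_bound
    {X : Type*} [NormedAddCommGroup X] [InnerProductSpace ℂ X] [CompleteSpace X]
    (A : X →ₗ.[ℂ] X)
    (hAdense : Dense (A.domain : Set X))
    (hAsym : ∀ x y : A.domain, (inner ℂ (A x) (y : X) : ℂ) = inner ℂ (x : X) (A y))
    (ψ : ℝ → X) (hψcont : Continuous ψ) (hmem : ∀ t : ℝ, ψ t ∈ A.domain) :
    ∃ a b : ℝ, a < b ∧ ∃ C : ℝ, ∀ t ∈ Set.Ioo a b, ‖A ⟨ψ t, hmem t⟩‖ ≤ C := by
  set E : ℕ → Set ℝ := fun n => {t : ℝ | ‖A ⟨ψ t, hmem t⟩‖ ≤ (n : ℝ)} with hE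
  have hEclosed : ∀ n, IsClosed (E n) := by
    intro n
    apply IsSeqClosed.isClosed
    intro u t hu hut
    -- weak limit argument
    have key : ∀ y : A.domain, ‖(inner ℂ (A ⟨ψ t, hmem t⟩) (y : X) : ℂ)‖ ≤ (n : ℝ) * ‖(y : X)‖ := by
      intro y
      have hsym : ∀ k, (inner ℂ (A ⟨ψ (u k), hmem (u k)⟩) (y : X) : ℂ)
          = inner ℂ (ψ (u k)) (A y) := fun k => hAsym _ y
      have hlim : Tendsto (fun k => (inner ℂ (ψ (u k)) (A y) : ℂ)) atTop
          (nhds (inner ℂ (ψ t) (A y))) := by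
        have : Tendsto (fun k => ψ (u k)) atTop (nhds (ψ t)) :=
          (hψcont.tendsto t).comp hut
        exact (Continuous.inner continuous_id continuous_const).continuousAt.tendsto.comp this
      have hlim' : Tendsto (fun k => ‖(inner ℂ (ψ (u k)) (A y) : ℂ)‖) atTop
          (nhds ‖(inner ℂ (ψ t) (A y) : ℂ)‖) := hlim.norm
      have hbd : ∀ k, ‖(inner ℂ (ψ (u k)) (A y) : ℂ)‖ ≤ (n : ℝ) * ‖(y : X)‖ := by
        intro k
        rw [← hsym k]
        calc ‖(inner ℂ (A ⟨ψ (u k), hmem (u k)⟩) (y : X) : ℂ)‖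
            ≤ ‖A ⟨ψ (u k), hmem (u k)⟩‖ * ‖(y : X)‖ := norm_inner_le_norm _ _
          _ ≤ (n : ℝ) * ‖(y : X)‖ := by
              exact mul_le_mul_of_nonneg_right (hu k) (norm_nonneg _)
      have := le_of_tendsto hlim' (Eventually.of_forall hbd)
      rwa [hAsym ⟨ψ t, hmem t⟩ y]
    have : ‖A ⟨ψ t, hmem t⟩‖ ≤ (n : ℝ) := by
      apply norm_le_of_inner_le_dense hAdense _ _ (Nat.cast_nonneg n)
      intro y hy
      exact key ⟨y, hy⟩
    exact this
  have hEcover : (⋃ n, E n) = Set.univ := by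
    ext t
    simp only [Set.mem_iUnion, Set.mem_univ, iff_true, hE, Set.mem_setOf_eq]
    exact ⟨⌈‖A ⟨ψ t, hmem t⟩‖⌉₊, Nat.le_ceil _⟩
  obtain ⟨n, hn⟩ := nonempty_interior_of_iUnion_of_closed hEclosed hEcover
  obtain ⟨t₀, ht₀⟩ := hn
  obtain ⟨ε, hε, hball⟩ := Metric.isOpen_iff.1 isOpen_interior t₀ ht₀
  refine ⟨t₀ - ε, t₀ + ε, by linarith, (n : ℝ), ?_⟩
  intro t ht
  have : t ∈ Metric.ball t₀ ε := by rw [Real.ball_eq_Ioo]; exact ht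
  have h2 : t ∈ E n := interior_subset (hball this)
  exact h2
end

section
/- For each n ∈ ℕ, the set Eₙ = {t ∈ ℝ : ‖Aψ(t)‖ ≤ n} is closed, where A is a densely defined hermitean operator on a Hilbert space X and ψ: ℝ → X is continuous with ψ(t) ∈ D(A) for all t. -/
/-- The sets `Eₙ = {t : ‖A ψ(t)‖ ≤ n}` are closed, for `A` a densely defined hermitean
operator and `ψ : ℝ → X` continuous with values in `D(A)`. -/
theorem En_closed
    {X : Type*} [NormedAddCommGroup X] [InnerProductSpace ℂ X] [CompleteSpace X]
    (A : X →ₗ.[ℂ] X)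
    (hAdense : Dense (A.domain : Set X))
    (hAsym : ∀ x y : A.domain, (inner ℂ (A x) (y : X) : ℂ) = inner ℂ (x : X) (A y))
    (ψ : ℝ → X) (hψcont : Continuous ψ) (hmem : ∀ t : ℝ, ψ t ∈ A.domain) :
    ∀ n : ℕ, IsClosed {t : ℝ | ‖A ⟨ψ t, hmem t⟩‖ ≤ (n : ℝ)} := by
  intro n
  have hset : {t : ℝ | ‖A ⟨ψ t, hmem t⟩‖ ≤ (n : ℝ)} =
      ⋂ y : A.domain, {t : ℝ | ‖(inner ℂ (ψ t) (A y) : ℂ)‖ ≤ (n : ℝ) * ‖(y : X)‖} := by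
    ext t
    simp only [Set.mem_setOf_eq, Set.mem_iInter]
    constructor
    · intro ht y
      have h1 : (inner ℂ (ψ t) (A y) : ℂ) = inner ℂ (A ⟨ψ t, hmem t⟩) (y : X) :=
        (hAsym ⟨ψ t, hmem t⟩ y).symm
      calc ‖(inner ℂ (ψ t) (A y) : ℂ)‖ = ‖(inner ℂ (A ⟨ψ t, hmem t⟩) (y : X) : ℂ)‖ := by rw [h1]
        _ ≤ ‖A ⟨ψ t, hmem t⟩‖ * ‖(y : X)‖ := norm_inner_le_norm _ _
        _ ≤ (n : ℝ) * ‖(y : X)‖ := by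
            exact mul_le_mul_of_nonneg_right ht (norm_nonneg _)
    · intro ht
      set x := A ⟨ψ t, hmem t⟩ with hx
      -- `‖⟪x, y⟫‖ ≤ n ‖y‖` for all `y` in the dense domain, hence for all `y`.
      have hdom : ∀ y : A.domain, ‖(inner ℂ x (y : X) : ℂ)‖ ≤ (n : ℝ) * ‖(y : X)‖ := by
        intro y
        have h1 : (inner ℂ x (y : X) : ℂ) = inner ℂ (ψ t) (A y) := hAsym ⟨ψ t, hmem t⟩ y
        rw [h1]; exact ht y
      have hall : ∀ y : X, ‖(inner ℂ x y : ℂ)‖ ≤ (n : ℝ) * ‖y‖ := by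
        have hclosed : IsClosed {y : X | ‖(inner ℂ x y : ℂ)‖ ≤ (n : ℝ) * ‖y‖} :=
          isClosed_le (continuous_norm.comp (continuous_const.inner continuous_id))
            (continuous_const.mul continuous_norm)
        have hsub : (A.domain : Set X) ⊆ {y : X | ‖(inner ℂ x y : ℂ)‖ ≤ (n : ℝ) * ‖y‖} := by
          intro y hy; exact hdom ⟨y, hy⟩
        intro y
        have : y ∈ closure (A.domain : Set X) := hAdense y
        exact hclosed.closure_subset (closure_mono hsub (by simpa using this))
      have hx2 := hall x
      have hxx : ‖(inner ℂ x x : ℂ)‖ = ‖x‖ * ‖x‖ := by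
        rw [inner_self_eq_norm_sq_to_K]
        simp [pow_two]
      rw [hxx] at hx2
      rcases eq_or_ne x 0 with h0 | h0
      · simp [h0]
      · exact le_of_mul_le_mul_right hx2 (norm_pos_iff.mpr h0)
  rw [hset]
  exact isClosed_iInter fun y =>
    isClosed_le (continuous_norm.comp (hψcont.inner continuous_const)) continuous_const
end

section
/- Let H be self-adjoint and A closed on a Hilbert space X with T(t) = e^{-itH} leaving E := D(A) ∩ D(H) invariant. Fix ψ₀ ∈ E, and suppose there are ε > 0 and C > 0 with ‖A T(t)ψ₀‖ ≤ C for all |t| ≤ ε. Then for every n ∈ ℕ there is a constant Cₙ with ‖A T(t)ψ₀‖ ≤ Cₙ for all |t| ≤ nε; consequently sup_{t∈I} ‖A T(t)ψ₀‖ < ∞ for every bounded interval I. -/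
open Complex Filter

local notation "⟪" x ", " y "⟫" => @inner ℂ _ _ x y

lemma aux_isClosed_of_isSelfAdjoint {X : Type*} [NormedAddCommGroup X] [InnerProductSpace ℂ X]
    [CompleteSpace X] (H : X →ₗ.[ℂ] X) (hH : IsSelfAdjoint H) : H.IsClosed := by
  have hadj : H.adjoint = H := hH
  have hdense : Dense (H.domain : Set X) := hH.dense_domain
  have hsym : H.IsFormalAdjoint H := by
    have := LinearPMap.adjoint_isFormalAdjoint hdense
    rwa [hadj] at this
  rw [LinearPMap.IsClosed, ← isSeqClosed_iff_isClosed]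
  intro u p hu hp
  choose y hy1 hy2 using fun n => (LinearPMap.mem_graph_iff _).mp (hu n)
  have hp1 : Tendsto (fun n => ((y n : X))) atTop (nhds p.1) := by
    simpa [hy1, Function.comp_def] using (continuous_fst.tendsto p).comp hp
  have hp2 : Tendsto (fun n => H (y n)) atTop (nhds p.2) := by
    simpa [hy2, Function.comp_def] using (continuous_snd.tendsto p).comp hp
  have key : ∀ x : H.domain, ⟪p.2, (x : X)⟫ = ⟪p.1, H x⟫ := by
    intro x
    have t1 : Tendsto (fun n => ⟪H (y n), (x : X)⟫) atTop (nhds ⟪p.2, (x : X)⟫) :=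
      hp2.inner tendsto_const_nhds
    have t2 : Tendsto (fun n => ⟪H (y n), (x : X)⟫) atTop (nhds ⟪p.1, H x⟫) := by
      simp only [fun n => hsym (y n) x]
      exact hp1.inner tendsto_const_nhds
    exact tendsto_nhds_unique t1 t2
  have memdom : p.1 ∈ H.adjoint.domain :=
    LinearPMap.mem_adjoint_domain_of_exists p.1 ⟨p.2, key⟩
  have happ : H.adjoint ⟨p.1, memdom⟩ = p.2 :=
    LinearPMap.adjoint_apply_eq hdense ⟨p.1, memdom⟩ key
  have : p ∈ H.adjoint.graph :=
    (LinearPMap.mem_graph_iff _).mpr ⟨⟨p.1, memdom⟩, rfl, happ⟩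
  rwa [hadj] at this


lemma aux_bound {X : Type*} [NormedAddCommGroup X] [InnerProductSpace ℂ X]
    [CompleteSpace X] (A H : X →ₗ.[ℂ] X) (hA : A.IsClosed) (hHc : H.IsClosed)
    (V : X ≃ₗᵢ[ℂ] X)
    (hInv : ∀ x : X, x ∈ A.domain → x ∈ H.domain → V x ∈ A.domain) :
    ∃ M : ℝ, 0 < M ∧ ∀ (x : X) (hxA : x ∈ A.domain) (hxH : x ∈ H.domain)
      (hVA : V x ∈ A.domain),
      ‖A ⟨V x, hVA⟩‖ ≤ M * (‖x‖ + ‖A ⟨x, hxA⟩‖ + ‖H ⟨x, hxH⟩‖) := by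
  classical
  -- the projections
  set f₁ : (X × X × X) →ₗ[ℂ] X × X :=
    LinearMap.prod (LinearMap.fst ℂ X (X × X))
      ((LinearMap.fst ℂ X X).comp (LinearMap.snd ℂ X (X × X))) with hf₁
  set f₂ : (X × X × X) →ₗ[ℂ] X × X :=
    LinearMap.prod (LinearMap.fst ℂ X (X × X))
      ((LinearMap.snd ℂ X X).comp (LinearMap.snd ℂ X (X × X))) with hf₂
  set G : Submodule ℂ (X × X × X) :=
    (A.graph.comap f₁) ⊓ (H.graph.comap f₂) with hG
  have memG : ∀ p : X × X × X, p ∈ G ↔ (p.1, p.2.1) ∈ A.graph ∧ (p.1, p.2.2) ∈ H.graph := by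
    intro p
    simp [hG, Submodule.mem_inf, Submodule.mem_comap, hf₁, hf₂, LinearMap.prod_apply]
  have hGclosed : IsClosed (G : Set (X × X × X)) := by
    have : (G : Set (X × X × X)) =
        ((fun p : X × X × X => (p.1, p.2.1)) ⁻¹' (A.graph : Set (X × X))) ∩
        ((fun p : X × X × X => (p.1, p.2.2)) ⁻¹' (H.graph : Set (X × X))) := by
      ext p
      simpa using memG p
    rw [this]
    exact (hA.preimage (by fun_prop)).inter (hHc.preimage (by fun_prop))
  haveI : CompleteSpace G := hGclosed.completeSpace_coe
  -- membership helpers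
  have memA : ∀ g : G, (g : X × X × X).1 ∈ A.domain := by
    intro g
    obtain ⟨w, hw1, _⟩ := (LinearPMap.mem_graph_iff _).mp ((memG _).mp g.2).1
    exact hw1 ▸ w.2
  have memH : ∀ g : G, (g : X × X × X).1 ∈ H.domain := by
    intro g
    obtain ⟨w, hw1, _⟩ := (LinearPMap.mem_graph_iff _).mp ((memG _).mp g.2).2
    exact hw1 ▸ w.2
  have eqA : ∀ g : G, A ⟨(g : X × X × X).1, memA g⟩ = (g : X × X × X).2.1 := by
    intro g
    obtain ⟨w, hw1, hw2⟩ := (LinearPMap.mem_graph_iff _).mp ((memG _).mp g.2).1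
    have hw1' : (w : X) = (g : X × X × X).1 := hw1
    have hw2' : (A w : X) = (g : X × X × X).2.1 := hw2
    rw [← hw2']; congr 1; exact Subtype.ext hw1'.symm
  have eqH : ∀ g : G, H ⟨(g : X × X × X).1, memH g⟩ = (g : X × X × X).2.2 := by
    intro g
    obtain ⟨w, hw1, hw2⟩ := (LinearPMap.mem_graph_iff _).mp ((memG _).mp g.2).2
    have hw1' : (w : X) = (g : X × X × X).1 := hw1
    have hw2' : (H w : X) = (g : X × X × X).2.2 := hw2
    rw [← hw2']; congr 1; exact Subtype.ext hw1'.symm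
  -- the linear map Φ : G → X
  set Φ : G →ₗ[ℂ] X :=
    { toFun := fun g => A ⟨V (g : X × X × X).1, hInv _ (memA g) (memH g)⟩
      map_add' := by
        intro g h
        have : (⟨V ((g : X × X × X).1 + (h : X × X × X).1),
            hInv _ (memA (g + h)) (memH (g + h))⟩ : A.domain)
            = ⟨V (g : X × X × X).1, hInv _ (memA g) (memH g)⟩
            + ⟨V (h : X × X × X).1, hInv _ (memA h) (memH h)⟩ := by
          apply Subtype.ext
          simp [map_add]
        simp only [Submodule.coe_add, Prod.fst_add]
        rw [this, LinearPMap.map_add]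
      map_smul' := by
        intro c g
        have : (⟨V (c • (g : X × X × X).1), hInv _ (memA (c • g)) (memH (c • g))⟩ : A.domain)
            = c • ⟨V (g : X × X × X).1, hInv _ (memA g) (memH g)⟩ := by
          apply Subtype.ext
          simp [map_smul]
        simp only [Submodule.coe_smul, Prod.smul_fst, RingHom.id_apply]
        rw [this, LinearPMap.map_smul] } with hΦ
  have hΦgraph : IsClosed (Φ.graph : Set (G × X)) := by
    apply IsSeqClosed.isClosed
    intro u p hu hp
    rw [SetLike.mem_coe, LinearMap.mem_graph_iff]
    have h1 : Tendsto (fun n => (u n).1) atTop (nhds p.1) := (continuous_fst.tendsto p).comp hp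
    have hx : Tendsto (fun n => V (((u n).1 : X × X × X)).1) atTop
        (nhds (V ((p.1 : X × X × X)).1)) := by
      apply (V.continuous.tendsto _).comp
      exact ((continuous_fst.comp continuous_subtype_val).tendsto _).comp h1
    have hy : Tendsto (fun n => (u n).2) atTop (nhds p.2) := (continuous_snd.tendsto p).comp hp
    have hmem : (V ((p.1 : X × X × X)).1, p.2) ∈ A.graph := by
      have : ∀ n, ((V (((u n).1 : X × X × X)).1 : X), (u n).2) ∈ A.graph := by
        intro n
        have := hu n
        rw [SetLike.mem_coe, LinearMap.mem_graph_iff] at this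
        rw [this]
        exact LinearPMap.mem_graph A
          ⟨V (((u n).1 : X × X × X)).1, hInv _ (memA (u n).1) (memH (u n).1)⟩
      exact hA.mem_of_tendsto ((hx.prodMk_nhds hy).comp tendsto_id) (Eventually.of_forall this)
    obtain ⟨w, hw1, hw2⟩ := (LinearPMap.mem_graph_iff _).mp hmem
    show p.2 = Φ p.1
    rw [← hw2, hΦ]
    simp only [LinearMap.coe_mk, AddHom.coe_mk]
    congr 1
    exact Subtype.ext hw1
  have hΦcont : Continuous Φ := Φ.continuous_of_isClosed_graph hΦgraph
  set Φc : G →L[ℂ] X := ⟨Φ, hΦcont⟩ with hΦc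
  refine ⟨‖Φc‖ + 1, by positivity, ?_⟩
  intro x hxA hxH hVA
  have hmemg : (x, ((A ⟨x, hxA⟩ : X), (H ⟨x, hxH⟩ : X))) ∈ G := by
    rw [memG]
    have g1 : ((x : X), (A ⟨x, hxA⟩ : X)) ∈ A.graph := LinearPMap.mem_graph A ⟨x, hxA⟩
    have g2 : ((x : X), (H ⟨x, hxH⟩ : X)) ∈ H.graph := LinearPMap.mem_graph H ⟨x, hxH⟩
    exact ⟨g1, g2⟩
  set g : G := ⟨(x, ((A ⟨x, hxA⟩ : X), (H ⟨x, hxH⟩ : X))), hmemg⟩ with hg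
  have h1 : A ⟨V x, hVA⟩ = Φc g := by
    show _ = A ⟨V (g : X × X × X).1, _⟩
    rfl
  have h2 : ‖Φc g‖ ≤ ‖Φc‖ * ‖g‖ := Φc.le_opNorm g
  have h3 : ‖g‖ ≤ ‖x‖ + ‖A ⟨x, hxA⟩‖ + ‖H ⟨x, hxH⟩‖ := by
    have : ‖g‖ = max ‖x‖ (max ‖A ⟨x, hxA⟩‖ ‖H ⟨x, hxH⟩‖) := rfl
    rw [this]
    have n1 : (0:ℝ) ≤ ‖x‖ := norm_nonneg _
    have n2 : (0:ℝ) ≤ ‖A ⟨x, hxA⟩‖ := norm_nonneg _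
    have n3 : (0:ℝ) ≤ ‖H ⟨x, hxH⟩‖ := norm_nonneg _
    exact max_le (by linarith) (max_le (by linarith) (by linarith))
  calc ‖A ⟨V x, hVA⟩‖ = ‖Φc g‖ := by rw [h1]
    _ ≤ ‖Φc‖ * ‖g‖ := h2
    _ ≤ (‖Φc‖ + 1) * (‖x‖ + ‖A ⟨x, hxA⟩‖ + ‖H ⟨x, hxH⟩‖) := by
        apply mul_le_mul (by linarith) h3 (norm_nonneg _) (by positivity)

/-- **Propagation of local bounds.** If `‖A U t ψ₀‖ ≤ C` for `|t| ≤ ε`, then for every `n`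
there is `Cₙ` with `‖A U t ψ₀‖ ≤ Cₙ` for `|t| ≤ n ε`; consequently `t ↦ ‖A U t ψ₀‖` is
bounded on every bounded interval. -/
theorem bound_propagates
    {X : Type*} [NormedAddCommGroup X] [InnerProductSpace ℂ X] [CompleteSpace X]
    (A H : X →ₗ.[ℂ] X)
    (hH : IsSelfAdjoint H) (hAclosed : A.IsClosed)
    (U : ℝ → X ≃ₗᵢ[ℂ] X)
    (hU0 : ∀ x : X, U 0 x = x)
    (hUadd : ∀ (s t : ℝ) (x : X), U (s + t) x = U s (U t x))
    (hUgen : ∀ (ψ : H.domain) (t : ℝ),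
      HasDerivAt (fun s : ℝ => U s (ψ : X)) (-I • U t (H ψ)) t)
    (hInvA : ∀ (t : ℝ) (x : X), x ∈ A.domain → x ∈ H.domain → U t x ∈ A.domain)
    (hInvH : ∀ (t : ℝ) (x : X), x ∈ A.domain → x ∈ H.domain → U t x ∈ H.domain)
    (ψ₀ : X) (hψ₀A : ψ₀ ∈ A.domain) (hψ₀H : ψ₀ ∈ H.domain)
    (ε C : ℝ) (hε : 0 < ε) (hC : 0 < C)
    (hbd : ∀ t : ℝ, |t| ≤ ε → ‖A ⟨U t ψ₀, hInvA t ψ₀ hψ₀A hψ₀H⟩‖ ≤ C) :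
    (∀ n : ℕ, ∃ Cn : ℝ, ∀ t : ℝ, |t| ≤ (n : ℝ) * ε →
        ‖A ⟨U t ψ₀, hInvA t ψ₀ hψ₀A hψ₀H⟩‖ ≤ Cn)
    ∧ ∀ I' : Set ℝ, Bornology.IsBounded I' →
        ∃ C' : ℝ, ∀ t ∈ I', ‖A ⟨U t ψ₀, hInvA t ψ₀ hψ₀A hψ₀H⟩‖ ≤ C' := by
  have hHclosed : H.IsClosed := aux_isClosed_of_isSelfAdjoint H hH
  -- conservation of ‖H U t ψ₀‖
  have hcomm : ∀ t : ℝ,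
      (H ⟨U t ψ₀, hInvH t ψ₀ hψ₀A hψ₀H⟩ : X) = U t (H ⟨ψ₀, hψ₀H⟩) := by
    intro t
    have d1 : HasDerivAt (fun s : ℝ => U s ψ₀) (-I • U t (H ⟨ψ₀, hψ₀H⟩)) t :=
      hUgen ⟨ψ₀, hψ₀H⟩ t
    have d1' : HasDerivAt (fun s : ℝ => U (s + t) ψ₀) (-I • U t (H ⟨ψ₀, hψ₀H⟩)) 0 :=
      HasDerivAt.comp_add_const 0 t
        (show HasDerivAt (fun s : ℝ => U s ψ₀) (-I • U t (H ⟨ψ₀, hψ₀H⟩)) (0 + t) by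
          rwa [zero_add])
    have d2 : HasDerivAt (fun s : ℝ => U s (U t ψ₀))
        (-I • U 0 (H ⟨U t ψ₀, hInvH t ψ₀ hψ₀A hψ₀H⟩)) 0 :=
      hUgen ⟨U t ψ₀, hInvH t ψ₀ hψ₀A hψ₀H⟩ 0
    have d2' : HasDerivAt (fun s : ℝ => U (s + t) ψ₀)
        (-I • U 0 (H ⟨U t ψ₀, hInvH t ψ₀ hψ₀A hψ₀H⟩)) 0 := by
      have : (fun s : ℝ => U s (U t ψ₀)) = fun s : ℝ => U (s + t) ψ₀ :=
        funext fun s => (hUadd s t ψ₀).symm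
      rwa [this] at d2
    have heq := d2'.unique d1'
    have hI : (-I : ℂ) ≠ 0 := by simp [I_ne_zero]
    have := smul_right_injective X hI heq
    rw [hU0] at this
    exact this
  -- the two closed-graph bounds
  obtain ⟨M₁, hM₁pos, hM₁⟩ := aux_bound A H hAclosed hHclosed (U ε) (hInvA ε)
  obtain ⟨M₂, hM₂pos, hM₂⟩ := aux_bound A H hAclosed hHclosed (U (-ε)) (hInvA (-ε))
  -- the induction
  have claim : ∀ n : ℕ, ∃ Cn : ℝ, C ≤ Cn ∧ ∀ t : ℝ, |t| ≤ ((n : ℝ) + 1) * ε →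
      ‖A ⟨U t ψ₀, hInvA t ψ₀ hψ₀A hψ₀H⟩‖ ≤ Cn := by
    intro n
    induction n with
    | zero => exact ⟨C, le_refl C, fun t ht => hbd t (by simpa using ht)⟩
    | succ n ih =>
      obtain ⟨Cn, hCCn, hCn⟩ := ih
      set K : ℝ := ‖ψ₀‖ + Cn + ‖H ⟨ψ₀, hψ₀H⟩‖ with hK
      refine ⟨max Cn (max (M₁ * K) (M₂ * K)), hCCn.trans (le_max_left _ _), ?_⟩
      intro t ht
      rcases le_or_gt |t| (((n : ℝ) + 1) * ε) with hsmall | hbig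
      · exact (hCn t hsmall).trans (le_max_left _ _)
      have hbound : ∀ (σ s : ℝ) (Mσ : ℝ), 0 < Mσ →
          (∀ (x : X) (hxA : x ∈ A.domain) (hxH : x ∈ H.domain)
            (hVA : U σ x ∈ A.domain),
            ‖A ⟨U σ x, hVA⟩‖ ≤ Mσ * (‖x‖ + ‖A ⟨x, hxA⟩‖ + ‖H ⟨x, hxH⟩‖)) →
          σ + s = t → |s| ≤ ((n : ℝ) + 1) * ε →
          ‖A ⟨U t ψ₀, hInvA t ψ₀ hψ₀A hψ₀H⟩‖ ≤ Mσ * K := by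
        intro σ s Mσ hMσpos hMσ hσs hs
        have hsA := hInvA s ψ₀ hψ₀A hψ₀H
        have hsH := hInvH s ψ₀ hψ₀A hψ₀H
        have e1 : A ⟨U t ψ₀, hInvA t ψ₀ hψ₀A hψ₀H⟩
            = A ⟨U σ (U s ψ₀), hInvA σ (U s ψ₀) hsA hsH⟩ := by
          congr 1
          exact Subtype.ext (show (U t) ψ₀ = (U σ) ((U s) ψ₀) by rw [← hσs]; exact hUadd σ s ψ₀)
        rw [e1]
        refine (hMσ (U s ψ₀) hsA hsH _).trans ?_
        apply mul_le_mul_of_nonneg_left ?_ hMσpos.le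
        have n1 : ‖U s ψ₀‖ = ‖ψ₀‖ := (U s).norm_map ψ₀
        have n2 : ‖A ⟨U s ψ₀, hsA⟩‖ ≤ Cn := hCn s hs
        have n3 : ‖H ⟨U s ψ₀, hsH⟩‖ = ‖H ⟨ψ₀, hψ₀H⟩‖ := by
          rw [hcomm s, (U s).norm_map]
        rw [hK, n1, n3]
        linarith
      rcases le_or_gt 0 t with htpos | htneg
      · -- t ≥ 0 : use σ = ε
        rw [_root_.abs_of_nonneg htpos] at ht hbig
        have h := hbound ε (t - ε) M₁ hM₁pos hM₁ (by ring)
          (abs_le.mpr ⟨by push_cast at ht ⊢; nlinarith [hε.le, Nat.cast_nonneg (α := ℝ) n],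
            by push_cast at ht ⊢; nlinarith [hε.le, Nat.cast_nonneg (α := ℝ) n]⟩)
        exact h.trans ((le_max_left _ _).trans (le_max_right _ _))
      · -- t < 0 : use σ = -ε
        rw [_root_.abs_of_neg htneg] at ht hbig
        have h := hbound (-ε) (t + ε) M₂ hM₂pos hM₂ (by ring)
          (abs_le.mpr ⟨by push_cast at ht ⊢; nlinarith [hε.le, Nat.cast_nonneg (α := ℝ) n],
            by push_cast at ht ⊢; nlinarith [hε.le, Nat.cast_nonneg (α := ℝ) n]⟩)
        exact h.trans ((le_max_right _ _).trans (le_max_right _ _))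
  constructor
  · intro n
    obtain ⟨Cn, _, hCn⟩ := claim n
    refine ⟨Cn, fun t ht => hCn t (ht.trans ?_)⟩
    nlinarith [hε.le]
  · intro I' hI'
    obtain ⟨r, hr⟩ := (Metric.isBounded_iff_subset_closedBall 0).mp hI'
    obtain ⟨Cn, _, hCn⟩ := claim ⌈r / ε⌉₊
    refine ⟨Cn, fun t ht => hCn t ?_⟩
    have h1 : |t| ≤ r := by
      have := hr ht
      rw [Metric.mem_closedBall, Real.dist_eq, sub_zero] at this
      exact this
    have h2 : r ≤ (⌈r / ε⌉₊ : ℝ) * ε := by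
      have := Nat.le_ceil (r / ε)
      calc r = r / ε * ε := by field_simp
        _ ≤ (⌈r / ε⌉₊ : ℝ) * ε := mul_le_mul_of_nonneg_right this hε.le
    have h3 : (⌈r / ε⌉₊ : ℝ) * ε ≤ ((⌈r / ε⌉₊ : ℝ) + 1) * ε := by nlinarith [hε.le]
    linarith
end

section
/- Let H be self-adjoint on X, ψ₀ ∈ D(H), and ψ(t) = e^{-itH}ψ₀. Let A be a linear operator with ψ(t) ∈ D(A) for all t and suppose sup_{|h|≤1} ‖Aψ(t+h)‖ < ∞ for each t, with A densely defined hermitean. Then t ↦ ⟨ψ(t), Aψ(t)⟩ is differentiable at every t with derivative i⟨Hψ(t), Aψ(t)⟩ − i⟨Aψ(t), Hψ(t)⟩. -/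
open Complex Filter

/-- Differentiability of the expected value under a local bound: if `ψ(t) = U t ψ₀ ∈ D(A)`
for all `t` with `sup_{|h| ≤ 1} ‖A ψ(t+h)‖ < ∞` for each `t`, where `A` is densely defined
hermitean, then `t ↦ ⟨ψ(t), A ψ(t)⟩` is differentiable with derivative
`i⟨Hψ(t), Aψ(t)⟩ - i⟨Aψ(t), Hψ(t)⟩`. -/
theorem expected_value_differentiable
    {X : Type*} [NormedAddCommGroup X] [InnerProductSpace ℂ X] [CompleteSpace X]
    (A H : X →ₗ.[ℂ] X)
    (hH : IsSelfAdjoint H)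
    (hAdense : Dense (A.domain : Set X))
    (hAsym : ∀ x y : A.domain, (inner ℂ (A x) (y : X) : ℂ) = inner ℂ (x : X) (A y))
    (U : ℝ → X ≃ₗᵢ[ℂ] X)
    (hU0 : ∀ x : X, U 0 x = x)
    (hUadd : ∀ (s t : ℝ) (x : X), U (s + t) x = U s (U t x))
    (hUgen : ∀ (ψ : H.domain) (t : ℝ),
      HasDerivAt (fun s : ℝ => U s (ψ : X)) (-I • U t (H ψ)) t)
    (hHinv : ∀ (t : ℝ) (x : X), x ∈ H.domain → U t x ∈ H.domain)
    (ψ₀ : X) (hψ₀ : ψ₀ ∈ H.domain)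
    (hmem : ∀ t : ℝ, U t ψ₀ ∈ A.domain)
    (hbd : ∀ t : ℝ, ∃ C : ℝ, ∀ h : ℝ, |h| ≤ 1 →
      ‖A ⟨U (t + h) ψ₀, hmem (t + h)⟩‖ ≤ C) :
    ∀ t : ℝ, HasDerivAt
      (fun s : ℝ => (inner ℂ (U s ψ₀) (A ⟨U s ψ₀, hmem s⟩) : ℂ))
      (I * (inner ℂ (H ⟨U t ψ₀, hHinv t ψ₀ hψ₀⟩) (A ⟨U t ψ₀, hmem t⟩) : ℂ)
        - I * (inner ℂ (A ⟨U t ψ₀, hmem t⟩) (H ⟨U t ψ₀, hHinv t ψ₀ hψ₀⟩) : ℂ)) t := by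
  -- abbreviations
  set ψ : ℝ → X := fun s => U s ψ₀ with hψdef
  have hderiv : ∀ τ : ℝ,
      HasDerivAt ψ ((-I : ℂ) • (H ⟨U τ ψ₀, hHinv τ ψ₀ hψ₀⟩ : X)) τ := by
    intro τ
    have h1 := hUgen ⟨ψ₀, hψ₀⟩ τ
    have h2 := hUgen ⟨U τ ψ₀, hHinv τ ψ₀ hψ₀⟩ 0
    have hfun : (fun s : ℝ => U s ((⟨U τ ψ₀, hHinv τ ψ₀ hψ₀⟩ : H.domain) : X))
        = fun s : ℝ => U (s + τ) ψ₀ := by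
      funext s; exact (hUadd s τ ψ₀).symm
    rw [hfun, hU0] at h2
    have h3 : HasDerivAt (fun s : ℝ => U (s + τ) ψ₀)
        ((-I : ℂ) • (U τ (H ⟨ψ₀, hψ₀⟩) : X)) 0 := by
      have := h1.scomp_of_eq 0 ((hasDerivAt_id (0:ℝ)).add_const τ) (by simp)
      simpa [Function.comp_def] using this
    have heq := h2.unique h3
    simpa [hψdef, ← heq] using h1
  intro t
  set Aψ : ℝ → X := fun s => A ⟨U s ψ₀, hmem s⟩ with hAψdef
  obtain ⟨C, hC⟩ := hbd t
  have hbound : ∀ s : ℝ, |s - t| ≤ 1 → ‖Aψ s‖ ≤ C := by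
    intro s hs
    have h := hC (s - t) hs
    rwa [show t + (s - t) = s by ring] at h
  have hC0 : (0:ℝ) ≤ C := le_trans (norm_nonneg _) (hbound t (by simp))
  -- weak continuity of s ↦ ⟪v, Aψ s⟫
  have hweak : ∀ v : X, Tendsto (fun s => (inner ℂ v (Aψ s) : ℂ)) (nhds t)
      (nhds (inner ℂ v (Aψ t))) := by
    intro v
    rw [Metric.tendsto_nhds]
    intro ε hε
    have hδ : (0:ℝ) < ε / (4 * (C + 1)) := by positivity
    obtain ⟨w, hwA, hwv⟩ := hAdense.exists_dist_lt v hδ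
    set δ : ℝ := ε / (4 * (C + 1)) with hδdef
    have hvw : ‖v - w‖ ≤ δ := by rw [← dist_eq_norm]; exact hwv.le
    have hδC : δ * C ≤ ε / 4 := by
      have : δ * C ≤ δ * (C + 1) := by nlinarith
      calc δ * C ≤ δ * (C + 1) := this
        _ = ε / 4 := by rw [hδdef]; field_simp
    have hψcont : Tendsto ψ (nhds t) (nhds (ψ t)) := (hderiv t).continuousAt
    have hcont : Tendsto (fun s => (inner ℂ (A ⟨w, hwA⟩) (ψ s) : ℂ)) (nhds t)
        (nhds (inner ℂ (A ⟨w, hwA⟩) (ψ t))) :=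
      ((innerSL ℂ (A ⟨w, hwA⟩)).continuous.tendsto (ψ t)).comp hψcont
    have hev1 := hcont.eventually (Metric.ball_mem_nhds (α := ℂ) _ (by positivity :
        (0:ℝ) < ε / 2))
    have hev2 : ∀ᶠ s : ℝ in nhds t, |s - t| ≤ 1 := by
      have := Metric.closedBall_mem_nhds t (by norm_num : (0:ℝ) < 1)
      filter_upwards [this] with s hs
      simpa [Real.dist_eq] using hs
    filter_upwards [hev1, hev2] with s h1 h2
    have hmid : ‖(inner ℂ (A ⟨w, hwA⟩) (ψ s) : ℂ) - inner ℂ (A ⟨w, hwA⟩) (ψ t)‖ < ε / 2 := by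
      simpa [dist_eq_norm] using h1
    have hdiff : (inner ℂ v (Aψ s) : ℂ) - inner ℂ v (Aψ t)
        = (inner ℂ (v - w) (Aψ s) : ℂ)
          + ((inner ℂ (A ⟨w, hwA⟩) (ψ s) : ℂ) - inner ℂ (A ⟨w, hwA⟩) (ψ t))
          - (inner ℂ (v - w) (Aψ t) : ℂ) := by
      rw [hAsym ⟨w, hwA⟩ ⟨U s ψ₀, hmem s⟩, hAsym ⟨w, hwA⟩ ⟨U t ψ₀, hmem t⟩]
      simp only [inner_sub_left]
      ring
    have e1 : ‖(inner ℂ (v - w) (Aψ s) : ℂ)‖ ≤ δ * C :=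
      le_trans (norm_inner_le_norm _ _)
        (mul_le_mul hvw (hbound s h2) (norm_nonneg _) (le_of_lt hδ))
    have e2 : ‖(inner ℂ (v - w) (Aψ t) : ℂ)‖ ≤ δ * C :=
      le_trans (norm_inner_le_norm _ _)
        (mul_le_mul hvw (hbound t (by simp)) (norm_nonneg _) (le_of_lt hδ))
    rw [dist_eq_norm, hdiff]
    calc ‖(inner ℂ (v - w) (Aψ s) : ℂ)
          + ((inner ℂ (A ⟨w, hwA⟩) (ψ s) : ℂ) - inner ℂ (A ⟨w, hwA⟩) (ψ t))
          - (inner ℂ (v - w) (Aψ t) : ℂ)‖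
        ≤ ‖(inner ℂ (v - w) (Aψ s) : ℂ)
          + ((inner ℂ (A ⟨w, hwA⟩) (ψ s) : ℂ) - inner ℂ (A ⟨w, hwA⟩) (ψ t))‖
          + ‖(inner ℂ (v - w) (Aψ t) : ℂ)‖ := norm_sub_le _ _
      _ ≤ ‖(inner ℂ (v - w) (Aψ s) : ℂ)‖
          + ‖(inner ℂ (A ⟨w, hwA⟩) (ψ s) : ℂ) - inner ℂ (A ⟨w, hwA⟩) (ψ t)‖
          + ‖(inner ℂ (v - w) (Aψ t) : ℂ)‖ := by
            gcongr; exact norm_add_le _ _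
      _ < ε := by linarith
  -- the derivative vector of ψ at t
  set d : X := (-I : ℂ) • (H ⟨U t ψ₀, hHinv t ψ₀ hψ₀⟩ : X) with hddef
  have hslope : Tendsto (slope ψ t) (nhdsWithin t {t}ᶜ) (nhds d) :=
    hasDerivAt_iff_tendsto_slope.mp (hderiv t)
  rw [hasDerivAt_iff_tendsto_slope]
  -- identity for the slope of F
  have key : ∀ s : ℝ, slope (fun s : ℝ => (inner ℂ (ψ s) (Aψ s) : ℂ)) t s
      = (inner ℂ (slope ψ t s) (Aψ s) : ℂ) + (inner ℂ (Aψ t) (slope ψ t s) : ℂ) := by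
    intro s
    have hsymm1 : (inner ℂ (Aψ t) (ψ s) : ℂ) = inner ℂ (ψ t) (Aψ s) :=
      hAsym ⟨U t ψ₀, hmem t⟩ ⟨U s ψ₀, hmem s⟩
    have hsymm2 : (inner ℂ (Aψ t) (ψ t) : ℂ) = inner ℂ (ψ t) (Aψ t) :=
      hAsym ⟨U t ψ₀, hmem t⟩ ⟨U t ψ₀, hmem t⟩
    simp only [slope_def_module, ← Complex.coe_smul, inner_smul_left, inner_smul_right,
      inner_sub_left, inner_sub_right, Complex.conj_ofReal, smul_eq_mul, hsymm1, hsymm2]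
    ring
  have hfun : (slope (fun s : ℝ => (inner ℂ (ψ s) (Aψ s) : ℂ)) t)
      = fun s => (inner ℂ (slope ψ t s) (Aψ s) : ℂ) + (inner ℂ (Aψ t) (slope ψ t s) : ℂ) :=
    funext key
  rw [show (fun s : ℝ => (inner ℂ (U s ψ₀) (A ⟨U s ψ₀, hmem s⟩) : ℂ))
      = fun s : ℝ => (inner ℂ (ψ s) (Aψ s) : ℂ) from rfl, hfun]
  -- limits of the two terms
  have hev2 : ∀ᶠ s : ℝ in nhdsWithin t {t}ᶜ, |s - t| ≤ 1 := by
    apply eventually_nhdsWithin_of_eventually_nhds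
    have := Metric.closedBall_mem_nhds t (by norm_num : (0:ℝ) < 1)
    filter_upwards [this] with s hs
    simpa [Real.dist_eq] using hs
  have T1a : Tendsto (fun s => (inner ℂ (slope ψ t s - d) (Aψ s) : ℂ))
      (nhdsWithin t {t}ᶜ) (nhds 0) := by
    have hglim : Tendsto (fun s => ‖slope ψ t s - d‖ * C) (nhdsWithin t {t}ᶜ)
        (nhds 0) := by
      have : Tendsto (fun s => ‖slope ψ t s - d‖ * C) (nhdsWithin t {t}ᶜ)
          (nhds (‖d - d‖ * C)) := ((hslope.sub_const d).norm).mul_const C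
      simpa using this
    refine squeeze_zero_norm' ?_ hglim
    filter_upwards [hev2] with s hs
    exact le_trans (norm_inner_le_norm _ _)
      (mul_le_mul_of_nonneg_left (hbound s hs) (norm_nonneg _))
  have T1b : Tendsto (fun s => (inner ℂ d (Aψ s) : ℂ)) (nhdsWithin t {t}ᶜ)
      (nhds (inner ℂ d (Aψ t))) := (hweak d).mono_left nhdsWithin_le_nhds
  have T1 : Tendsto (fun s => (inner ℂ (slope ψ t s) (Aψ s) : ℂ)) (nhdsWithin t {t}ᶜ)
      (nhds (inner ℂ d (Aψ t))) := by
    have := T1a.add T1b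
    simp only [zero_add] at this
    convert this using 2 with s
    simp [inner_sub_left]
  have T2 : Tendsto (fun s => (inner ℂ (Aψ t) (slope ψ t s) : ℂ)) (nhdsWithin t {t}ᶜ)
      (nhds (inner ℂ (Aψ t) d)) :=
    ((innerSL ℂ (Aψ t)).continuous.tendsto d).comp hslope
  have := T1.add T2
  convert this using 1
  rw [hddef]
  simp only [inner_smul_left, inner_smul_right, map_neg, Complex.conj_I]
  ring_nf; rfl
end

section
/- Let X be a Hilbert space, H self-adjoint with ψ(t) = e^{-itH}ψ₀ for ψ₀ ∈ D(H), and A densely defined hermitean with ψ(t) ∈ D(A) for all t and sup_{t∈I} ‖Aψ(t)‖ < ∞ for bounded intervals I. If t_j → t, then ⟨Hψ(t_j), Aψ(t_j)⟩ → ⟨Hψ(t), Aψ(t)⟩; consequently the derivative t ↦ i⟨Hψ(t), Aψ(t)⟩ − i⟨Aψ(t), Hψ(t)⟩ is continuous. -/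
open Complex Filter

/-- Continuity of the derivative: with `ψ(t) = U t ψ₀ ∈ D(A)` and `‖A ψ(t)‖` bounded on
bounded intervals, if `t_j → t` then `⟨Hψ(t_j), Aψ(t_j)⟩ → ⟨Hψ(t), Aψ(t)⟩`; consequently
`t ↦ i⟨Hψ(t), Aψ(t)⟩ - i⟨Aψ(t), Hψ(t)⟩` is continuous. -/
theorem derivative_continuous
    {X : Type*} [NormedAddCommGroup X] [InnerProductSpace ℂ X] [CompleteSpace X]
    (A H : X →ₗ.[ℂ] X)
    (hH : IsSelfAdjoint H)
    (hAdense : Dense (A.domain : Set X))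
    (hAsym : ∀ x y : A.domain, (inner ℂ (A x) (y : X) : ℂ) = inner ℂ (x : X) (A y))
    (U : ℝ → X ≃ₗᵢ[ℂ] X)
    (hU0 : ∀ x : X, U 0 x = x)
    (hUadd : ∀ (s t : ℝ) (x : X), U (s + t) x = U s (U t x))
    (hUgen : ∀ (ψ : H.domain) (t : ℝ),
      HasDerivAt (fun s : ℝ => U s (ψ : X)) (-I • U t (H ψ)) t)
    (hHinv : ∀ (t : ℝ) (x : X), x ∈ H.domain → U t x ∈ H.domain)
    (ψ₀ : X) (hψ₀ : ψ₀ ∈ H.domain)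
    (hmem : ∀ t : ℝ, U t ψ₀ ∈ A.domain)
    (hbd : ∀ I' : Set ℝ, Bornology.IsBounded I' →
      ∃ C : ℝ, ∀ t ∈ I', ‖A ⟨U t ψ₀, hmem t⟩‖ ≤ C) :
    (∀ (tseq : ℕ → ℝ) (t : ℝ), Tendsto tseq atTop (nhds t) →
      Tendsto (fun j : ℕ =>
          (inner ℂ (H ⟨U (tseq j) ψ₀, hHinv (tseq j) ψ₀ hψ₀⟩)
            (A ⟨U (tseq j) ψ₀, hmem (tseq j)⟩) : ℂ)) atTop
        (nhds (inner ℂ (H ⟨U t ψ₀, hHinv t ψ₀ hψ₀⟩) (A ⟨U t ψ₀, hmem t⟩))))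
    ∧ Continuous (fun t : ℝ =>
        I * (inner ℂ (H ⟨U t ψ₀, hHinv t ψ₀ hψ₀⟩) (A ⟨U t ψ₀, hmem t⟩) : ℂ)
          - I * (inner ℂ (A ⟨U t ψ₀, hmem t⟩) (H ⟨U t ψ₀, hHinv t ψ₀ hψ₀⟩) : ℂ)) := by
  classical
  have hHdense : Dense (H.domain : Set X) := hH.dense_domain
  -- H commutes with U on ψ₀
  have hcomm : ∀ t : ℝ, (H ⟨U t ψ₀, hHinv t ψ₀ hψ₀⟩ : X) = U t (H ⟨ψ₀, hψ₀⟩) := by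
    intro t
    have h1 : HasDerivAt (fun s : ℝ => U s (U t ψ₀))
        (-I • U 0 (H ⟨U t ψ₀, hHinv t ψ₀ hψ₀⟩)) 0 := hUgen ⟨U t ψ₀, hHinv t ψ₀ hψ₀⟩ 0
    have hg : HasDerivAt (fun u : ℝ => U u (ψ₀ : X)) (-I • U t (H ⟨ψ₀, hψ₀⟩)) t :=
      hUgen ⟨ψ₀, hψ₀⟩ t
    have hh : HasDerivAt (fun s : ℝ => s + t) (1 : ℝ) 0 := (hasDerivAt_id 0).add_const t
    have h2 : HasDerivAt (fun s : ℝ => U (s + t) ψ₀)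
        ((1 : ℝ) • (-I • U t (H ⟨ψ₀, hψ₀⟩))) 0 :=
      HasDerivAt.scomp_of_eq (x := (0:ℝ)) (h := fun s : ℝ => s + t) hg hh (zero_add t).symm
    rw [one_smul] at h2
    have heqf : (fun s : ℝ => U (s + t) ψ₀) = fun s : ℝ => U s (U t ψ₀) :=
      funext fun s => hUadd s t ψ₀
    rw [heqf] at h2
    have := h1.unique h2
    rw [hU0] at this
    exact smul_right_injective X (neg_ne_zero.mpr I_ne_zero) this
  -- strong continuity of t ↦ U t x for every x, via density of D(H)
  have hUcont : ∀ x : X, Continuous fun t : ℝ => U t x := by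
    intro x
    obtain ⟨z, hz, hzx⟩ : ∃ z : ℕ → X, (∀ n, z n ∈ H.domain) ∧ Tendsto z atTop (nhds x) := by
      rcases mem_closure_iff_seq_limit.mp (hHdense x) with ⟨z, hz, hzx⟩
      exact ⟨z, hz, hzx⟩
    have hcontn : ∀ n : ℕ, Continuous fun s : ℝ => U s (z n) := fun n =>
      continuous_iff_continuousAt.mpr fun s =>
        ((hUgen ⟨z n, hz n⟩ s).continuousAt : ContinuousAt _ s)
    have hTU : TendstoUniformly (fun n (s : ℝ) => U s (z n)) (fun s : ℝ => U s x) atTop := by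
      rw [Metric.tendstoUniformly_iff]
      intro ε hε
      have := (Metric.tendsto_atTop.mp hzx) ε hε
      rcases this with ⟨N, hN⟩
      refine eventually_atTop.mpr ⟨N, fun n hn s => ?_⟩
      have : dist (U s x) (U s (z n)) = dist x (z n) := (U s).dist_map x (z n)
      rw [this, dist_comm]
      exact hN n hn
    exact hTU.continuous (Eventually.of_forall hcontn).frequently
  -- main sequential statement
  have main : ∀ (tseq : ℕ → ℝ) (t : ℝ), Tendsto tseq atTop (nhds t) →
      Tendsto (fun j : ℕ =>
          (inner ℂ (H ⟨U (tseq j) ψ₀, hHinv (tseq j) ψ₀ hψ₀⟩)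
            (A ⟨U (tseq j) ψ₀, hmem (tseq j)⟩) : ℂ)) atTop
        (nhds (inner ℂ (H ⟨U t ψ₀, hHinv t ψ₀ hψ₀⟩) (A ⟨U t ψ₀, hmem t⟩))) := by
    intro tseq t htseq
    set a : ℕ → X := fun j => (A ⟨U (tseq j) ψ₀, hmem (tseq j)⟩ : X) with ha
    set aL : X := (A ⟨U t ψ₀, hmem t⟩ : X) with haL
    set w : ℕ → X := fun j => (H ⟨U (tseq j) ψ₀, hHinv (tseq j) ψ₀ hψ₀⟩ : X) with hw
    set wL : X := (H ⟨U t ψ₀, hHinv t ψ₀ hψ₀⟩ : X) with hwL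
    -- strong convergence of ψ(t_j) and of Hψ(t_j)
    have hφ : Tendsto (fun j => U (tseq j) ψ₀) atTop (nhds (U t ψ₀)) :=
      ((hUcont ψ₀).tendsto t).comp htseq
    have hws : Tendsto w atTop (nhds wL) := by
      have : w = fun j => U (tseq j) (H ⟨ψ₀, hψ₀⟩) := funext fun j => hcomm (tseq j)
      rw [this, hwL, hcomm t]
      exact ((hUcont (H ⟨ψ₀, hψ₀⟩)).tendsto t).comp htseq
    -- uniform bound on ‖a j‖ and ‖aL‖
    obtain ⟨C, hC⟩ := hbd (insert t (Set.range tseq))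
      ((Metric.isBounded_range_of_tendsto tseq htseq).insert t)
    have haj : ∀ j, ‖a j‖ ≤ C := fun j =>
      hC (tseq j) (Set.mem_insert_of_mem _ ⟨j, rfl⟩)
    have haL' : ‖aL‖ ≤ C := hC t (Set.mem_insert _ _)
    have hC0 : 0 ≤ C := le_trans (norm_nonneg _) haL'
    -- weak convergence tested on z ∈ D(A)
    have hweakz : ∀ z : A.domain, Tendsto (fun j => (inner ℂ (z : X) (a j) : ℂ)) atTop
        (nhds (inner ℂ (z : X) aL)) := by
      intro z
      have key : ∀ s : ℝ, (inner ℂ (z : X) ((A ⟨U s ψ₀, hmem s⟩ : X)) : ℂ)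
          = inner ℂ ((A z : X)) (U s ψ₀) := by
        intro s
        rw [← inner_conj_symm, hAsym ⟨U s ψ₀, hmem s⟩ z, inner_conj_symm]
      have h1 : (fun j => (inner ℂ (z : X) (a j) : ℂ))
          = fun j => (inner ℂ ((A z : X)) (U (tseq j) ψ₀) : ℂ) :=
        funext fun j => key (tseq j)
      rw [h1, haL, key t]
      exact (Continuous.tendsto (continuous_const.inner continuous_id) _).comp hφ
    -- weak convergence tested on wL
    have hweak : Tendsto (fun j => (inner ℂ wL (a j) : ℂ)) atTop (nhds (inner ℂ wL aL)) := by
      rw [Metric.tendsto_atTop]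
      intro ε hε
      have hδ : 0 < ε / (2 * (2 * C + 1)) := by positivity
      obtain ⟨z, hzA, hzd⟩ := Metric.mem_closure_iff.mp (hAdense wL) _ hδ
      obtain ⟨N, hN⟩ := Metric.tendsto_atTop.mp (hweakz ⟨z, hzA⟩) (ε / 2) (by positivity)
      refine ⟨N, fun j hj => ?_⟩
      have hsplit : (inner ℂ wL (a j) : ℂ) - inner ℂ wL aL
          = ((inner ℂ z (a j) : ℂ) - inner ℂ z aL) + inner ℂ (wL - z) (a j - aL) := by
        simp [inner_sub_left, inner_sub_right]
        ring
      have hb1 : ‖(inner ℂ z (a j) : ℂ) - inner ℂ z aL‖ < ε / 2 := by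
        have := hN j hj
        rwa [Complex.dist_eq] at this
      have hb2 : ‖(inner ℂ (wL - z) (a j - aL) : ℂ)‖ ≤ ‖wL - z‖ * (2 * C) := by
        calc ‖(inner ℂ (wL - z) (a j - aL) : ℂ)‖ ≤ ‖wL - z‖ * ‖a j - aL‖ :=
              norm_inner_le_norm _ _
          _ ≤ ‖wL - z‖ * (2 * C) := by
              apply mul_le_mul_of_nonneg_left _ (norm_nonneg _)
              calc ‖a j - aL‖ ≤ ‖a j‖ + ‖aL‖ := norm_sub_le _ _
                _ ≤ C + C := add_le_add (haj j) haL'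
                _ = 2 * C := by ring
      have hwz : ‖wL - z‖ < ε / (2 * (2 * C + 1)) := by
        rw [← dist_eq_norm]; exact hzd
      have hb2' : ‖(inner ℂ (wL - z) (a j - aL) : ℂ)‖ < ε / 2 := by
        calc ‖(inner ℂ (wL - z) (a j - aL) : ℂ)‖ ≤ ‖wL - z‖ * (2 * C) := hb2
          _ ≤ ‖wL - z‖ * (2 * C + 1) :=
              mul_le_mul_of_nonneg_left (by linarith) (norm_nonneg _)
          _ < (ε / (2 * (2 * C + 1))) * (2 * C + 1) := by
              apply mul_lt_mul_of_pos_right hwz; linarith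
          _ = ε / 2 := by field_simp
      rw [Complex.dist_eq, hsplit]
      calc ‖((inner ℂ z (a j) : ℂ) - inner ℂ z aL) + (inner ℂ (wL - z) (a j - aL) : ℂ)‖
          ≤ ‖(inner ℂ z (a j) : ℂ) - inner ℂ z aL‖ + ‖(inner ℂ (wL - z) (a j - aL) : ℂ)‖ :=
            norm_add_le _ _
        _ < ε / 2 + ε / 2 := add_lt_add hb1 hb2'
        _ = ε := by ring
    -- combine strong convergence of w with weak convergence of a
    rw [tendsto_iff_dist_tendsto_zero]
    apply squeeze_zero (fun j => dist_nonneg)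
      (g := fun j => ‖w j - wL‖ * C + dist (inner ℂ wL (a j) : ℂ) (inner ℂ wL aL))
    · intro j
      have hsplit : (inner ℂ (w j) (a j) : ℂ) - inner ℂ wL aL
          = (inner ℂ (w j - wL) (a j) : ℂ) + ((inner ℂ wL (a j) : ℂ) - inner ℂ wL aL) := by
        simp [inner_sub_left]
      rw [Complex.dist_eq, hsplit]
      calc ‖(inner ℂ (w j - wL) (a j) : ℂ) + ((inner ℂ wL (a j) : ℂ) - inner ℂ wL aL)‖
          ≤ ‖(inner ℂ (w j - wL) (a j) : ℂ)‖ + ‖(inner ℂ wL (a j) : ℂ) - inner ℂ wL aL‖ :=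
            norm_add_le _ _
        _ ≤ ‖w j - wL‖ * C + dist (inner ℂ wL (a j) : ℂ) (inner ℂ wL aL) := by
            rw [Complex.dist_eq]
            exact add_le_add (le_trans (norm_inner_le_norm _ _)
              (mul_le_mul_of_nonneg_left (haj j) (norm_nonneg _))) le_rfl
    · have h1 : Tendsto (fun j => ‖w j - wL‖ * C) atTop (nhds 0) := by
        have : Tendsto (fun j => ‖w j - wL‖) atTop (nhds 0) :=
          (tendsto_iff_norm_sub_tendsto_zero.mp hws)
        simpa using this.mul_const C
      have h2 : Tendsto (fun j => dist (inner ℂ wL (a j) : ℂ) (inner ℂ wL aL)) atTop (nhds 0) :=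
        tendsto_iff_dist_tendsto_zero.mp hweak
      simpa using h1.add h2
  refine ⟨main, ?_⟩
  -- continuity of the derivative
  set G : ℝ → ℂ := fun t => (inner ℂ (H ⟨U t ψ₀, hHinv t ψ₀ hψ₀⟩ : X)
    (A ⟨U t ψ₀, hmem t⟩ : X) : ℂ) with hG
  have hGcont : Continuous G := by
    rw [continuous_iff_seqContinuous]
    intro x t hx
    exact main x t hx
  have hrw : ∀ t : ℝ, (inner ℂ (A ⟨U t ψ₀, hmem t⟩ : X)
      (H ⟨U t ψ₀, hHinv t ψ₀ hψ₀⟩ : X) : ℂ) = (starRingEnd ℂ) (G t) := fun t =>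
    (inner_conj_symm _ _).symm
  simp only [hrw]
  exact (continuous_const.mul hGcont).sub
    (continuous_const.mul (RCLike.continuous_conj.comp hGcont))
end

section
/- Let ψ₀ be the tent function on ℝ with ψ₀(0) = ψ₀(2) = 0, ψ₀(1) = 1, linear on (−∞,0), (0,1), (1,2), (2,∞), and let ψ(t)(x) = ψ₀(x−t). For any open subinterval I ⊂ (0,1), there exists φ ∈ span{ψ(t) : t ∈ I} \ {0} (finite linear combinations) such that φ is orthogonal in L²(ℝ) to ψ(t) for every t ∉ I + ℤ. -/
open MeasureTheory

/-- The tent function: `tent 0 = tent 2 = 0`, `tent 1 = 1`, piecewise linear, vanishing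
outside `[0,2]`. -/
noncomputable def tent (x : ℝ) : ℝ := max 0 (1 - |x - 1|)

lemma tent_continuous : Continuous tent := by
  unfold tent; fun_prop

lemma tent_of_nonpos {x : ℝ} (h : x ≤ 0) : tent x = 0 := by
  unfold tent
  rw [max_eq_left (by rw [abs_sub_comm, abs_of_nonneg (by linarith)]; linarith)]

lemma tent_of_two_le {x : ℝ} (h : 2 ≤ x) : tent x = 0 := by
  unfold tent
  rw [max_eq_left (by rw [abs_of_nonneg (by linarith)]; linarith)]

lemma tent_of_mem_01 {x : ℝ} (h0 : 0 ≤ x) (h1 : x ≤ 1) : tent x = x := by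
  unfold tent
  rw [abs_sub_comm, abs_of_nonneg (by linarith), max_eq_right (by linarith)]
  ring

lemma tent_of_mem_12 {x : ℝ} (h0 : 1 ≤ x) (h1 : x ≤ 2) : tent x = 2 - x := by
  unfold tent
  rw [abs_of_nonneg (by linarith), max_eq_right (by linarith)]
  ring

lemma tent_mul_continuous (t s : ℝ) :
    Continuous (fun x : ℝ => tent (x - t) * tent (x - s)) :=
  (tent_continuous.comp (continuous_id.sub continuous_const)).mul
    (tent_continuous.comp (continuous_id.sub continuous_const))

lemma tent_mul_integrable (t s : ℝ) :
    Integrable (fun x => tent (x - t) * tent (x - s)) := by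
  apply Continuous.integrable_of_hasCompactSupport (tent_mul_continuous t s)
  apply HasCompactSupport.intro (isCompact_Icc (a := t) (b := t + 2))
  intro x hx
  simp only [Set.mem_Icc, not_and_or, not_le] at hx
  rcases hx with hx | hx
  · rw [tent_of_nonpos (by linarith)]; ring
  · rw [tent_of_two_le (x := x - t) (by linarith)]; ring

/-- The autocorrelation of the tent function. -/
noncomputable def g (u : ℝ) : ℝ := ∫ x, tent x * tent (x - u)

lemma integral_tent_mul (t s : ℝ) :
    (∫ x, tent (x - t) * tent (x - s)) = g (s - t) := by
  rw [← MeasureTheory.integral_add_right_eq_self (fun y => tent (y - t) * tent (y - s)) t]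
  unfold g
  congr 1
  ext x
  have h1 : x + t - t = x := by ring
  have h2 : x + t - s = x - (s - t) := by ring
  rw [h1, h2]

lemma g_neg (u : ℝ) : g (-u) = g u := by
  unfold g
  conv_rhs => rw [← MeasureTheory.integral_add_right_eq_self (fun y => tent y * tent (y - u)) u]
  congr 1
  ext x
  have h1 : x + u - u = x := by ring
  have h2 : x - -u = x + u := by ring
  rw [h1, h2, mul_comm]

lemma g_eq_interval (u : ℝ) : g u = ∫ x in (0:ℝ)..2, tent x * tent (x - u) := by
  have h : (fun x : ℝ => tent x * tent (x - u))
      = (Set.Ioc (0:ℝ) 2).indicator (fun x => tent x * tent (x - u)) := by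
    ext x
    rw [Set.indicator]
    split_ifs with hx
    · rfl
    · simp only [Set.mem_Ioc, not_and_or, not_lt, not_le] at hx
      rcases hx with hx | hx
      · rw [tent_of_nonpos hx]; ring
      · rw [tent_of_two_le (le_of_lt hx)]; ring
  rw [intervalIntegral.integral_of_le (by norm_num : (0:ℝ) ≤ 2),
    ← MeasureTheory.integral_indicator measurableSet_Ioc, ← h]
  rfl

lemma cont_ii (u a b : ℝ) :
    IntervalIntegrable (fun x : ℝ => tent x * tent (x - u)) volume a b := by
  have := tent_mul_continuous 0 u
  simp only [sub_zero] at this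
  exact this.intervalIntegrable a b

lemma g_zero_piece {u : ℝ} (h : 2 ≤ u) : g u = 0 := by
  unfold g
  have h2 : ∀ x : ℝ, tent x * tent (x - u) = 0 := by
    intro x
    rcases le_or_gt x 2 with hx | hx
    · rw [tent_of_nonpos (x := x - u) (by linarith)]; ring
    · rw [tent_of_two_le hx.le]; ring
  simp only [h2, integral_zero]

lemma g_mid {u : ℝ} (h0 : 0 ≤ u) (h1 : u ≤ 1) : g u = 2/3 - u^2 + u^3/2 := by
  rw [g_eq_interval]
  rw [← intervalIntegral.integral_add_adjacent_intervals (a := (0:ℝ)) (b := u) (c := 2)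
    (cont_ii u 0 u) (cont_ii u u 2)]
  rw [← intervalIntegral.integral_add_adjacent_intervals (a := u) (b := 1) (c := 2)
    (cont_ii u u 1) (cont_ii u 1 2)]
  rw [← intervalIntegral.integral_add_adjacent_intervals (a := (1:ℝ)) (b := 1+u) (c := 2)
    (cont_ii u 1 (1+u)) (cont_ii u (1+u) 2)]
  have e0 : (∫ x in (0:ℝ)..u, tent x * tent (x - u)) = 0 := by
    rw [intervalIntegral.integral_congr (g := fun _ => (0:ℝ))]
    · simp
    · intro x hx
      rw [Set.uIcc_of_le h0, Set.mem_Icc] at hx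
      show tent x * tent (x - u) = 0
      rw [tent_of_nonpos (x := x - u) (by linarith [hx.2])]
      ring
  have e1 : (∫ x in u..(1:ℝ), tent x * tent (x - u)) = 1/3 - u/2 + u^3/6 := by
    rw [intervalIntegral.integral_congr (g := fun x => x * (x - u))]
    · rw [intervalIntegral.integral_eq_sub_of_hasDerivAt
        (f := fun x => x^3/3 - u*x^2/2) (f' := fun x => x * (x - u))]
      · ring
      · intro x _
        have h1 := (hasDerivAt_pow 3 x).div_const 3
        have h2 := ((hasDerivAt_pow 2 x).const_mul u).div_const 2
        convert h1.sub h2 using 1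
        all_goals first
          | (funext y; simp only [Pi.sub_apply, Pi.add_apply, Pi.neg_apply, id_eq])
          | (push_cast [id_eq]; ring)
      · exact (continuous_id.mul (continuous_id.sub continuous_const)).intervalIntegrable u 1
    · intro x hx
      rw [Set.uIcc_of_le h1, Set.mem_Icc] at hx
      show tent x * tent (x - u) = x * (x - u)
      rw [tent_of_mem_01 (by linarith [hx.1]) hx.2,
        tent_of_mem_01 (x := x - u) (by linarith [hx.1]) (by linarith [hx.2])]
  have e2 : (∫ x in (1:ℝ)..(1+u), tent x * tent (x - u))
      = -(1+u)^3/3 + (2+u)*(1+u)^2/2 - 2*u*(1+u) - (-1/3 + (2+u)/2 - 2*u) := by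
    rw [intervalIntegral.integral_congr (g := fun x => (2 - x) * (x - u))]
    · rw [intervalIntegral.integral_eq_sub_of_hasDerivAt
        (f := fun x => -x^3/3 + (2+u)*x^2/2 - 2*u*x) (f' := fun x => (2 - x) * (x - u))]
      · ring
      · intro x _
        have h1 := ((hasDerivAt_pow 3 x).div_const 3).neg
        have h2 := ((hasDerivAt_pow 2 x).const_mul (2+u)).div_const 2
        have h3 := (hasDerivAt_id x).const_mul (2*u)
        convert (h1.add h2).sub h3 using 1
        all_goals first
          | (funext y; simp only [Pi.sub_apply, Pi.add_apply, Pi.neg_apply, id_eq]; push_cast; ring)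
          | (push_cast [id_eq]; ring)
      · exact ((continuous_const.sub continuous_id).mul
          (continuous_id.sub continuous_const)).intervalIntegrable 1 (1+u)
    · intro x hx
      rw [Set.uIcc_of_le (by linarith), Set.mem_Icc] at hx
      show tent x * tent (x - u) = (2 - x) * (x - u)
      rw [tent_of_mem_12 hx.1 (by linarith [hx.2]),
        tent_of_mem_01 (x := x - u) (by linarith [hx.1]) (by linarith [hx.2])]
  have e3 : (∫ x in (1+u)..(2:ℝ), tent x * tent (x - u))
      = (8/3 - (4+u)*4/2 + (4+2*u)*2) - ((1+u)^3/3 - (4+u)*(1+u)^2/2 + (4+2*u)*(1+u)) := by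
    rw [intervalIntegral.integral_congr (g := fun x => (2 - x) * (2 + u - x))]
    · rw [intervalIntegral.integral_eq_sub_of_hasDerivAt
        (f := fun x => x^3/3 - (4+u)*x^2/2 + (4+2*u)*x) (f' := fun x => (2 - x) * (2 + u - x))]
      · ring
      · intro x _
        have h1 := (hasDerivAt_pow 3 x).div_const 3
        have h2 := ((hasDerivAt_pow 2 x).const_mul (4+u)).div_const 2
        have h3 := (hasDerivAt_id x).const_mul (4+2*u)
        convert (h1.sub h2).add h3 using 1
        all_goals first
          | (funext y; simp only [Pi.sub_apply, Pi.add_apply, Pi.neg_apply, id_eq])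
          | (push_cast [id_eq]; ring)
      · exact ((continuous_const.sub continuous_id).mul
          ((continuous_const.add continuous_const).sub continuous_id)).intervalIntegrable (1+u) 2
    · intro x hx
      rw [Set.uIcc_of_le (by linarith), Set.mem_Icc] at hx
      show tent x * tent (x - u) = (2 - x) * (2 + u - x)
      rw [tent_of_mem_12 (by linarith [hx.1]) hx.2,
        tent_of_mem_12 (x := x - u) (by linarith [hx.1]) (by linarith [hx.2])]
      ring
  rw [e0, e1, e2, e3]
  ring

lemma g_right {u : ℝ} (h0 : 1 ≤ u) (h1 : u ≤ 2) : g u = (2-u)^3/6 := by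
  rw [g_eq_interval]
  rw [← intervalIntegral.integral_add_adjacent_intervals (a := (0:ℝ)) (b := u) (c := 2)
    (cont_ii u 0 u) (cont_ii u u 2)]
  have e0 : (∫ x in (0:ℝ)..u, tent x * tent (x - u)) = 0 := by
    rw [intervalIntegral.integral_congr (g := fun _ => (0:ℝ))]
    · simp
    · intro x hx
      rw [Set.uIcc_of_le (by linarith), Set.mem_Icc] at hx
      show tent x * tent (x - u) = 0
      rw [tent_of_nonpos (x := x - u) (by linarith [hx.2])]
      ring
  have e1 : (∫ x in u..(2:ℝ), tent x * tent (x - u))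
      = (-8/3 + (2+u)*4/2 - 2*u*2) - (-u^3/3 + (2+u)*u^2/2 - 2*u*u) := by
    rw [intervalIntegral.integral_congr (g := fun x => (2 - x) * (x - u))]
    · rw [intervalIntegral.integral_eq_sub_of_hasDerivAt
        (f := fun x => -x^3/3 + (2+u)*x^2/2 - 2*u*x) (f' := fun x => (2 - x) * (x - u))]
      · norm_num
      · intro x _
        have h1 := ((hasDerivAt_pow 3 x).div_const 3).neg
        have h2 := ((hasDerivAt_pow 2 x).const_mul (2+u)).div_const 2
        have h3 := (hasDerivAt_id x).const_mul (2*u)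
        convert (h1.add h2).sub h3 using 1
        all_goals first
          | (funext y; simp only [Pi.sub_apply, Pi.add_apply, Pi.neg_apply, id_eq]; push_cast; ring)
          | (push_cast [id_eq]; ring)
      · exact ((continuous_const.sub continuous_id).mul
          (continuous_id.sub continuous_const)).intervalIntegrable u 2
    · intro x hx
      rw [Set.uIcc_of_le h1, Set.mem_Icc] at hx
      show tent x * tent (x - u) = (2 - x) * (x - u)
      rw [tent_of_mem_12 (by linarith [hx.1]) hx.2,
        tent_of_mem_01 (x := x - u) (by linarith [hx.1]) (by linarith [hx.2])]
  rw [e0, e1]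
  ring

lemma g_zero_neg {u : ℝ} (h : u ≤ -2) : g u = 0 := by
  have h1 : g (-(-u)) = g (-u) := g_neg (-u)
  rw [neg_neg] at h1
  rw [h1, g_zero_piece (by linarith)]

lemma g_cubic (m : ℤ) : ∃ A B C D : ℝ,
    ∀ u ∈ Set.Ioo (m:ℝ) ((m:ℝ)+1), g u = A + B*u + C*u^2 + D*u^3 := by
  rcases le_or_gt 2 m with h2 | h2
  · refine ⟨0, 0, 0, 0, fun u hu => ?_⟩
    have : (2:ℝ) ≤ (m:ℝ) := by exact_mod_cast h2
    rw [g_zero_piece (by linarith [hu.1])]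
    ring
  rcases le_or_gt m (-3) with h3 | h3
  · refine ⟨0, 0, 0, 0, fun u hu => ?_⟩
    have : ((m:ℝ)+1) ≤ -2 := by
      have : (m:ℝ) ≤ -3 := by exact_mod_cast h3
      linarith
    rw [g_zero_neg (by linarith [hu.2])]
    ring
  interval_cases m
  · refine ⟨4/3, 2, 1, 1/6, fun u hu => ?_⟩
    have hu1 : (-2:ℝ) < u := by
      have := hu.1; push_cast at this; linarith
    have hu2 : u < -1 := by
      have := hu.2; push_cast at this; linarith
    have h1 : g (-(-u)) = g (-u) := g_neg (-u)
    rw [neg_neg] at h1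
    rw [h1, g_right (by linarith) (by linarith)]
    ring
  · refine ⟨2/3, 0, -1, -1/2, fun u hu => ?_⟩
    have hu1 : (-1:ℝ) < u := by
      have := hu.1; push_cast at this; linarith
    have hu2 : u < 0 := by
      have := hu.2; push_cast at this; linarith
    have h1 : g (-(-u)) = g (-u) := g_neg (-u)
    rw [neg_neg] at h1
    rw [h1, g_mid (by linarith) (by linarith)]
    ring
  · refine ⟨2/3, 0, -1, 1/2, fun u hu => ?_⟩
    have hu1 : (0:ℝ) < u := by
      have := hu.1; push_cast at this; linarith
    have hu2 : u < 1 := by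
      have := hu.2; push_cast at this; linarith
    rw [g_mid (by linarith) (by linarith)]
    ring
  · refine ⟨4/3, -2, 1, -1/6, fun u hu => ?_⟩
    have hu1 : (1:ℝ) < u := by
      have := hu.1; push_cast at this; linarith
    have hu2 : u < 2 := by
      have := hu.2; push_cast at this; linarith
    rw [g_right (by linarith) (by linarith)]
    ring

/-- The translate points used in the construction. -/
noncomputable def svec (a η : ℝ) : Fin 7 → ℝ := fun i => a + ((i : ℕ) + 1 : ℝ) * η

/-- The coefficients of the iterated second difference `(1 - x - x² + x³)²`. -/
noncomputable def cvec : Fin 7 → ℂ := ![1, -2, -1, 4, -1, -2, 1]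

lemma cvec_0 : cvec 0 = 1 := rfl
lemma cvec_1 : cvec 1 = -2 := rfl
lemma cvec_2 : cvec 2 = -1 := rfl
lemma cvec_3 : cvec 3 = 4 := rfl
lemma cvec_4 : cvec 4 = -1 := rfl
lemma cvec_5 : cvec 5 = -2 := rfl
lemma cvec_6 : cvec 6 = 1 := rfl

lemma svec_0 (a η : ℝ) : svec a η 0 = a + 1*η := by norm_num [svec]
lemma svec_1 (a η : ℝ) : svec a η 1 = a + 2*η := by norm_num [svec]
lemma svec_2 (a η : ℝ) : svec a η 2 = a + 3*η := by norm_num [svec]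
lemma svec_3 (a η : ℝ) : svec a η 3 = a + 4*η := by
  simp only [svec, show ((3:Fin 7):ℕ) = 3 from rfl]; norm_num
lemma svec_4 (a η : ℝ) : svec a η 4 = a + 5*η := by
  simp only [svec, show ((4:Fin 7):ℕ) = 4 from rfl]; norm_num
lemma svec_5 (a η : ℝ) : svec a η 5 = a + 6*η := by
  simp only [svec, show ((5:Fin 7):ℕ) = 5 from rfl]; norm_num
lemma svec_6 (a η : ℝ) : svec a η 6 = a + 7*η := by
  simp only [svec, show ((6:Fin 7):ℕ) = 6 from rfl]; norm_num

lemma svec_mem {a b η : ℝ} (hη : 0 < η) (hab : b - a = 8*η) (i : Fin 7) :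
    svec a η i ∈ Set.Ioo a b := by
  have h0 : (0:ℝ) ≤ ((i : ℕ) : ℝ) := Nat.cast_nonneg _
  have h6 : ((i : ℕ) : ℝ) ≤ 6 := by
    have : (i : ℕ) ≤ 6 := Nat.lt_succ_iff.mp i.2
    exact_mod_cast this
  constructor
  · show a < a + ((i : ℕ) + 1 : ℝ) * η
    nlinarith
  · show a + ((i : ℕ) + 1 : ℝ) * η < b
    nlinarith

/-- For the tent function `ψ₀` and its translates `ψ(t) = ψ₀(· - t)`: for any nonempty open
subinterval `I = (a,b) ⊆ (0,1)` there is a nonzero finite linear combination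
`φ = ∑ cᵢ ψ(sᵢ)` with all `sᵢ ∈ I`, which is orthogonal in `L²(ℝ)` to `ψ(t)` for every
`t ∉ I + ℤ`. -/
theorem tent_orthogonal_combination :
    ∀ a b : ℝ, 0 ≤ a → a < b → b ≤ 1 →
      ∃ (n : ℕ) (c : Fin n → ℂ) (s : Fin n → ℝ),
        (∀ i : Fin n, s i ∈ Set.Ioo a b) ∧
        (fun x : ℝ => ∑ i : Fin n, c i * (tent (x - s i) : ℂ)) ≠ 0 ∧
        ∀ t : ℝ, (¬ ∃ k : ℤ, t - (k : ℝ) ∈ Set.Ioo a b) →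
          ∫ x : ℝ, (starRingEnd ℂ) ((tent (x - t) : ℂ))
              * (∑ i : Fin n, c i * (tent (x - s i) : ℂ)) = 0 := by
  intro a b ha hab hb1
  set η : ℝ := (b - a) / 8 with hη_def
  have hη : 0 < η := by rw [hη_def]; linarith
  have hba : b - a = 8*η := by rw [hη_def]; ring
  have hη8 : η ≤ 1/8 := by rw [hη_def]; linarith
  refine ⟨7, cvec, svec a η, svec_mem hη hba, ?_, ?_⟩
  · -- the combination is nonzero
    intro hzero
    have hx := congrFun hzero (a + 3*η/2)
    rw [Fin.sum_univ_seven] at hx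
    have v0 : tent (a + 3*η/2 - svec a η 0) = η/2 := by
      rw [svec_0, show a + 3*η/2 - (a + 1*η) = η/2 by ring]
      exact tent_of_mem_01 (by linarith) (by linarith)
    have v1 : tent (a + 3*η/2 - svec a η 1) = 0 := by
      rw [svec_1]; exact tent_of_nonpos (by linarith)
    have v2 : tent (a + 3*η/2 - svec a η 2) = 0 := by
      rw [svec_2]; exact tent_of_nonpos (by linarith)
    have v3 : tent (a + 3*η/2 - svec a η 3) = 0 := by
      rw [svec_3]; exact tent_of_nonpos (by linarith)
    have v4 : tent (a + 3*η/2 - svec a η 4) = 0 := by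
      rw [svec_4]; exact tent_of_nonpos (by linarith)
    have v5 : tent (a + 3*η/2 - svec a η 5) = 0 := by
      rw [svec_5]; exact tent_of_nonpos (by linarith)
    have v6 : tent (a + 3*η/2 - svec a η 6) = 0 := by
      rw [svec_6]; exact tent_of_nonpos (by linarith)
    rw [v0, v1, v2, v3, v4, v5, v6, cvec_0, cvec_1, cvec_2, cvec_3, cvec_4, cvec_5,
      cvec_6] at hx
    simp only [Complex.ofReal_zero, mul_zero, add_zero, one_mul, Pi.zero_apply,
      Complex.ofReal_div, Complex.ofReal_ofNat, zero_add] at hx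
    have hη0 : η = 0 := by
      field_simp at hx
      norm_num at hx
      exact_mod_cast hx
    linarith
  · -- orthogonality
    intro t ht
    set m : ℤ := ⌊a - t⌋ with hm_def
    have hm1 : (m:ℝ) ≤ a - t := Int.floor_le _
    have hm2 : b - t ≤ (m:ℝ) + 1 := by
      by_contra h'
      push_neg at h'
      apply ht
      refine ⟨-(m+1), ?_⟩
      have hcast : ((-(m+1) : ℤ) : ℝ) = -((m:ℝ)+1) := by push_cast; ring
      rw [hcast]
      constructor
      · have := Int.lt_floor_add_one (a - t)
        rw [← hm_def] at this
        linarith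
      · linarith
    obtain ⟨A, B, C, D, hg⟩ := g_cubic m
    have hmem : ∀ i : Fin 7, svec a η i - t ∈ Set.Ioo (m:ℝ) ((m:ℝ)+1) := by
      intro i
      obtain ⟨hi1, hi2⟩ := svec_mem hη hba i
      exact ⟨by linarith, by linarith⟩
    have hrw : ∀ x : ℝ, (starRingEnd ℂ) ((tent (x - t) : ℂ))
        * (∑ i : Fin 7, cvec i * (tent (x - svec a η i) : ℂ))
        = ∑ i : Fin 7, cvec i * ((tent (x - t) * tent (x - svec a η i) : ℝ) : ℂ) := by
      intro x
      rw [Complex.conj_ofReal, Finset.mul_sum]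
      refine Finset.sum_congr rfl fun i _ => ?_
      push_cast
      ring
    simp only [hrw]
    have hsum := MeasureTheory.integral_finset_sum (μ := volume) Finset.univ
      (f := fun (i : Fin 7) (x : ℝ) => cvec i * ((tent (x - t) * tent (x - svec a η i) : ℝ) : ℂ))
      (fun i _ => ((tent_mul_integrable t (svec a η i)).ofReal).const_mul (cvec i))
    rw [hsum]
    simp only [MeasureTheory.integral_const_mul]
    have hoi : ∀ s : ℝ, (∫ x : ℝ, ((tent (x - t) * tent (x - s) : ℝ) : ℂ))
        = ((g (s - t) : ℝ) : ℂ) := by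
      intro s
      rw [← integral_tent_mul t s]
      exact integral_ofReal (𝕜 := ℂ) (f := fun x => tent (x - t) * tent (x - s))
    simp only [hoi]
    have hgs : ∀ i : Fin 7, g (svec a η i - t)
        = A + B*(svec a η i - t) + C*(svec a η i - t)^2 + D*(svec a η i - t)^3 :=
      fun i => hg _ (hmem i)
    simp only [hgs]
    rw [Fin.sum_univ_seven, cvec_0, cvec_1, cvec_2, cvec_3, cvec_4, cvec_5, cvec_6,
      svec_0, svec_1, svec_2, svec_3, svec_4, svec_5, svec_6]
    push_cast
    ring
end

section
/- Let H be self-adjoint and A a closed hermitean operator (not necessarily densely defined) on a Hilbert space X, such that e^{-itH} leaves D(A) ∩ D(H) invariant. Fix ψ₀ ∈ D(A) ∩ D(H) and let P be the orthogonal projection onto the closed span of {e^{-itH}ψ₀ : t ∈ ℝ}. Then t ↦ ⟨ψ(t), Aψ(t)⟩ = ⟨ψ(t), PAPψ(t)⟩ is continuously differentiable with derivative i(⟨Hψ(t), Aψ(t)⟩ − ⟨Aψ(t), Hψ(t)⟩). -/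
open Complex Filter Set Topology

namespace EhrenfestAux

variable {X : Type*} [NormedAddCommGroup X] [InnerProductSpace ℂ X] [CompleteSpace X]

lemma graph_ex {f : X →ₗ.[ℂ] X} {x z : X} (h : (x, z) ∈ f.graph) :
    ∃ hx : x ∈ f.domain, f ⟨x, hx⟩ = z := by
  rw [LinearPMap.mem_graph_iff] at h
  obtain ⟨y, hy1, hy2⟩ := h
  have hx : x ∈ f.domain := by simpa [show (x:X) = (y:X) from hy1.symm] using y.2
  refine ⟨hx, ?_⟩
  have : (⟨x, hx⟩ : f.domain) = y := Subtype.ext hy1.symm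
  rw [this, hy2]

lemma selfAdjoint_isClosed {H : X →ₗ.[ℂ] X} (hH : IsSelfAdjoint H) :
    IsClosed (H.graph : Set (X × X)) := by
  have hdense : Dense (H.domain : Set X) := hH.dense_domain
  have hadj : H.adjoint = H := hH
  have hgraph : H.adjoint.graph = H.graph := by rw [hadj]
  have hformal := LinearPMap.adjoint_isFormalAdjoint hdense (T := H)
  have hsym : ∀ a b : H.domain, (inner ℂ (H a) (b : X) : ℂ) = inner ℂ (a : X) (H b) := by
    intro a b
    have hmem : ((a : X), H a) ∈ H.adjoint.graph := by
      rw [hgraph]; exact H.mem_graph a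
    obtain ⟨ha, hval⟩ := graph_ex hmem
    have := hformal ⟨(a : X), ha⟩ b
    rwa [hval] at this
  have hset : (H.graph : Set (X × X)) =
      ⋂ x : H.domain, {p : X × X | (inner ℂ p.2 (x : X) : ℂ) = inner ℂ p.1 (H x)} := by
    ext p
    simp only [Set.mem_iInter, Set.mem_setOf_eq, SetLike.mem_coe]
    constructor
    · intro hp x
      obtain ⟨h1, h2⟩ := graph_ex hp
      rw [← h2]
      exact hsym ⟨p.1, h1⟩ x
    · intro hp
      have hmem : p.1 ∈ H.adjoint.domain :=
        LinearPMap.mem_adjoint_domain_of_exists _ ⟨p.2, fun x => hp x⟩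
      have hval : H.adjoint ⟨p.1, hmem⟩ = p.2 :=
        LinearPMap.adjoint_apply_eq hdense _ (fun x => hp x)
      have : ((p.1 : X), H.adjoint ⟨p.1, hmem⟩) ∈ H.adjoint.graph :=
        H.adjoint.mem_graph ⟨p.1, hmem⟩
      rw [hval, hgraph] at this
      exact this
  rw [hset]
  refine isClosed_iInter fun x => ?_
  exact isClosed_eq ((continuous_snd.inner continuous_const)) ((continuous_fst.inner continuous_const))

variable {S : Submodule ℂ X} {P : X →L[ℂ] X}

omit [CompleteSpace X] in
lemma innerP (hPfix : ∀ x ∈ S.topologicalClosure, P x = x)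
    (hPsa : ∀ x y : X, (inner ℂ (P x) y : ℂ) = inner ℂ x (P y))
    {y : X} (hy : y ∈ S.topologicalClosure) (z : X) :
    (inner ℂ y (P z) : ℂ) = inner ℂ y z := by
  have := hPsa y z
  rw [hPfix y hy] at this
  exact this.symm

omit [CompleteSpace X] in
lemma norm_P_le (hPmem : ∀ x : X, P x ∈ S.topologicalClosure)
    (hPfix : ∀ x ∈ S.topologicalClosure, P x = x)
    (hPsa : ∀ x y : X, (inner ℂ (P x) y : ℂ) = inner ℂ x (P y))
    {z : X} {c : ℝ} (hc : 0 ≤ c)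
    (h : ∀ y ∈ S, ‖(inner ℂ y z : ℂ)‖ ≤ c * ‖y‖) : ‖P z‖ ≤ c := by
  have hsq : (‖P z‖ : ℝ) ^ 2 = ‖(inner ℂ (P z) z : ℂ)‖ := by
    have h1 := hPsa z (P z)
    rw [hPfix (P z) (hPmem z)] at h1
    -- h1 : ⟪P z, P z⟫ = ⟪z, P z⟫
    have h2 : ‖(inner ℂ (P z) (P z) : ℂ)‖ = ‖P z‖ ^ 2 := by
      rw [inner_self_eq_norm_sq_to_K]
      simp [norm_pow]
    rw [← h2, h1, ← inner_conj_symm, RCLike.norm_conj]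
  have hkey : ∀ ε : ℝ, 0 < ε → ‖P z‖ ^ 2 ≤ c * ‖P z‖ + ε * (c + ‖z‖) := by
    intro ε hε
    have hcl : P z ∈ closure (S : Set X) := by
      have := hPmem z
      simpa [Submodule.topologicalClosure_coe] using (SetLike.mem_coe.2 this)
    obtain ⟨y, hyS, hyd⟩ := Metric.mem_closure_iff.1 hcl ε hε
    rw [dist_eq_norm] at hyd
    have hy1 : ‖(inner ℂ y z : ℂ)‖ ≤ c * ‖y‖ := h y hyS
    have hy2 : ‖(inner ℂ (P z) z : ℂ)‖ ≤ ‖(inner ℂ y z : ℂ)‖ + ‖P z - y‖ * ‖z‖ := by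
      have : (inner ℂ (P z) z : ℂ) = inner ℂ y z + inner ℂ (P z - y) z := by
        rw [inner_sub_left]; ring
      rw [this]
      exact (norm_add_le _ _).trans (by
        gcongr
        exact norm_inner_le_norm _ _)
    have hy3 : ‖y‖ ≤ ‖P z‖ + ε := by
      calc ‖y‖ ≤ ‖P z‖ + ‖P z - y‖ := by
              have := norm_sub_norm_le (P z) y
              linarith [abs_le.1 (abs_norm_sub_norm_le (P z) y)]
        _ ≤ ‖P z‖ + ε := by linarith [hyd.le]
    calc ‖P z‖ ^ 2 = ‖(inner ℂ (P z) z : ℂ)‖ := hsq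
      _ ≤ c * ‖y‖ + ‖P z - y‖ * ‖z‖ := by linarith
      _ ≤ c * (‖P z‖ + ε) + ε * ‖z‖ := by
          have : ‖P z - y‖ * ‖z‖ ≤ ε * ‖z‖ := by
            apply mul_le_mul_of_nonneg_right hyd.le (norm_nonneg _)
          have h4 : c * ‖y‖ ≤ c * (‖P z‖ + ε) := mul_le_mul_of_nonneg_left hy3 hc
          linarith
      _ = c * ‖P z‖ + ε * (c + ‖z‖) := by ring
  have hfin : ‖P z‖ ^ 2 ≤ c * ‖P z‖ := by
    by_contra hcon
    push_neg at hcon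
    set d := ‖P z‖ ^ 2 - c * ‖P z‖ with hd
    have hd0 : 0 < d := by simp [hd]; linarith
    have hden : (0:ℝ) < c + ‖z‖ + 1 := by positivity
    have := hkey (d / (2 * (c + ‖z‖ + 1))) (by positivity)
    have hle : d / (2 * (c + ‖z‖ + 1)) * (c + ‖z‖) ≤ d / 2 := by
      rw [div_mul_eq_mul_div, div_le_div_iff₀ (by positivity) (by norm_num)]
      nlinarith
    linarith
  nlinarith [norm_nonneg (P z), sq_nonneg (‖P z‖ - c)]



set_option maxHeartbeats 2000000 in
theorem main
    {X : Type*} [NormedAddCommGroup X] [InnerProductSpace ℂ X] [CompleteSpace X]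
    (A H : X →ₗ.[ℂ] X)
    (hH : IsSelfAdjoint H)
    (hAsym : ∀ x y : A.domain, (inner ℂ (A x) (y : X) : ℂ) = inner ℂ (x : X) (A y))
    (hAclosed : A.IsClosed)
    (U : ℝ → X ≃ₗᵢ[ℂ] X)
    (hU0 : ∀ x : X, U 0 x = x)
    (hUadd : ∀ (s t : ℝ) (x : X), U (s + t) x = U s (U t x))
    (hUgen : ∀ (ψ : H.domain) (t : ℝ),
      HasDerivAt (fun s : ℝ => U s (ψ : X)) (-I • U t (H ψ)) t)
    (hInvA : ∀ (t : ℝ) (x : X), x ∈ A.domain → x ∈ H.domain → U t x ∈ A.domain)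
    (hInvH : ∀ (t : ℝ) (x : X), x ∈ A.domain → x ∈ H.domain → U t x ∈ H.domain)
    (ψ₀ : X) (hψ₀A : ψ₀ ∈ A.domain) (hψ₀H : ψ₀ ∈ H.domain)
    (P : X →L[ℂ] X)
    (hPmem : ∀ x : X,
      P x ∈ (Submodule.span ℂ (Set.range fun s : ℝ => U s ψ₀)).topologicalClosure)
    (hPfix : ∀ x ∈ (Submodule.span ℂ (Set.range fun s : ℝ => U s ψ₀)).topologicalClosure,
      P x = x)
    (hPsa : ∀ x y : X, (inner ℂ (P x) y : ℂ) = inner ℂ x (P y)) :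
    (∀ t : ℝ, (inner ℂ (U t ψ₀) (P (A ⟨U t ψ₀, hInvA t ψ₀ hψ₀A hψ₀H⟩)) : ℂ)
        = inner ℂ (U t ψ₀) (A ⟨U t ψ₀, hInvA t ψ₀ hψ₀A hψ₀H⟩))
    ∧ (∀ t : ℝ, HasDerivAt
        (fun s : ℝ => (inner ℂ (U s ψ₀) (A ⟨U s ψ₀, hInvA s ψ₀ hψ₀A hψ₀H⟩) : ℂ))
        (I * ((inner ℂ (H ⟨U t ψ₀, hInvH t ψ₀ hψ₀A hψ₀H⟩)
                (A ⟨U t ψ₀, hInvA t ψ₀ hψ₀A hψ₀H⟩) : ℂ)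
            - (inner ℂ (A ⟨U t ψ₀, hInvA t ψ₀ hψ₀A hψ₀H⟩)
                (H ⟨U t ψ₀, hInvH t ψ₀ hψ₀A hψ₀H⟩) : ℂ))) t)
    ∧ Continuous (fun t : ℝ =>
        I * ((inner ℂ (H ⟨U t ψ₀, hInvH t ψ₀ hψ₀A hψ₀H⟩)
                (A ⟨U t ψ₀, hInvA t ψ₀ hψ₀A hψ₀H⟩) : ℂ)
            - (inner ℂ (A ⟨U t ψ₀, hInvA t ψ₀ hψ₀A hψ₀H⟩)
                (H ⟨U t ψ₀, hInvH t ψ₀ hψ₀A hψ₀H⟩) : ℂ))) := by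
  classical
  -- abbreviations
  set S : Submodule ℂ X := Submodule.span ℂ (Set.range fun s : ℝ => U s ψ₀) with hSdef
  have hmemA : ∀ s : ℝ, U s ψ₀ ∈ A.domain := fun s => hInvA s ψ₀ hψ₀A hψ₀H
  have hmemH : ∀ s : ℝ, U s ψ₀ ∈ H.domain := fun s => hInvH s ψ₀ hψ₀A hψ₀H
  have hmemS : ∀ s : ℝ, U s ψ₀ ∈ S := fun s => Submodule.subset_span ⟨s, rfl⟩
  have hmemXt : ∀ s : ℝ, U s ψ₀ ∈ S.topologicalClosure :=
    fun s => S.le_topologicalClosure (hmemS s)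
  have hSA : S ≤ A.domain := Submodule.span_le.2 (by rintro y ⟨s, rfl⟩; exact hmemA s)
  have hSH : S ≤ H.domain := Submodule.span_le.2 (by rintro y ⟨s, rfl⟩; exact hmemH s)
  -- continuity of the group on domain vectors
  have contU : ∀ y : X, y ∈ H.domain → Continuous fun t : ℝ => U t y := by
    intro y hy
    exact continuous_iff_continuousAt.2 fun t => (hUgen ⟨y, hy⟩ t).continuousAt
  have ψcont : Continuous fun s : ℝ => U s ψ₀ := contU ψ₀ hψ₀H
  -- commutation of H with the group
  have hcomm : ∀ (t : ℝ) (x : X) (hxH : x ∈ H.domain) (h2 : U t x ∈ H.domain),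
      H ⟨U t x, h2⟩ = U t (H ⟨x, hxH⟩) := by
    intro t x hxH h2
    have d1 : HasDerivAt (fun s : ℝ => U s x) (-I • U t (H ⟨x, hxH⟩)) t := hUgen ⟨x, hxH⟩ t
    have d2 : HasDerivAt (fun s : ℝ => U s (U t x)) (-I • U 0 (H ⟨U t x, h2⟩)) 0 :=
      hUgen ⟨U t x, h2⟩ 0
    have d1' : HasDerivAt (fun s : ℝ => U (s + t) x) (-I • U t (H ⟨x, hxH⟩)) 0 := by
      have d1z : HasDerivAt (fun s : ℝ => U s x) (-I • U t (H ⟨x, hxH⟩)) (0 + t) := by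
        simpa using d1
      have := d1z.comp_add_const 0 t
      simpa using this
    have hfun : (fun s : ℝ => U (s + t) x) = fun s : ℝ => U s (U t x) :=
      funext fun s => hUadd s t x
    rw [hfun] at d1'
    have huniq := d1'.unique d2
    rw [hU0] at huniq
    have hI : (-I : ℂ) ≠ 0 := by simp [I_ne_zero]
    have := smul_right_injective X hI huniq
    exact this.symm
  -- derivative of the orbit
  have ψderiv : ∀ t : ℝ, HasDerivAt (fun s : ℝ => U s ψ₀) (-I • U t (H ⟨ψ₀, hψ₀H⟩)) t :=
    fun t => hUgen ⟨ψ₀, hψ₀H⟩ t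
  -- derivative vectors lie in the closed orbit span
  have hXtclosed : IsClosed (S.topologicalClosure : Set X) := by
    rw [Submodule.topologicalClosure_coe]
    exact isClosed_closure
  have vXt : ∀ t : ℝ, -I • U t (H ⟨ψ₀, hψ₀H⟩) ∈ S.topologicalClosure := by
    intro t
    have hs := hasDerivAt_iff_tendsto_slope.1 (ψderiv t)
    refine hXtclosed.mem_of_tendsto hs ?_
    filter_upwards with s
    exact Submodule.smul_mem _ _ (Submodule.sub_mem _ (hmemXt s) (hmemXt t))
  have z₀Xt : U 0 (H ⟨ψ₀, hψ₀H⟩) ∈ S.topologicalClosure := by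
    have h1 := vXt 0
    have : U 0 (H ⟨ψ₀, hψ₀H⟩) = I • (-I • U 0 (H ⟨ψ₀, hψ₀H⟩)) := by
      rw [smul_smul]; simp
    rw [this]
    exact Submodule.smul_mem _ _ h1
  have HvXt : ∀ t : ℝ, U t (H ⟨ψ₀, hψ₀H⟩) ∈ S.topologicalClosure := by
    intro t
    have h1 := vXt t
    have : U t (H ⟨ψ₀, hψ₀H⟩) = I • (-I • U t (H ⟨ψ₀, hψ₀H⟩)) := by
      rw [smul_smul]; simp
    rw [this]
    exact Submodule.smul_mem _ _ h1
  -- strong continuity of the group on the closed orbit span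
  have UcontXt : ∀ z : X, z ∈ S.topologicalClosure → Continuous fun t : ℝ => U t z := by
    intro z hz
    rw [continuous_iff_continuousAt]
    intro t₀
    rw [Metric.continuousAt_iff]
    intro ε hε
    have hzc : z ∈ closure (S : Set X) := by
      simpa [Submodule.topologicalClosure_coe] using (SetLike.mem_coe.2 hz)
    obtain ⟨y, hyS, hyd⟩ := Metric.mem_closure_iff.1 hzc (ε/3) (by positivity)
    have hyc : Continuous fun t : ℝ => U t y := contU y (hSH hyS)
    have h1 : ∀ s : ℝ, dist (U s z) (U s y) < ε / 3 := by
      intro s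
      rw [dist_eq_norm, ← map_sub, (U s).norm_map, ← dist_eq_norm]
      exact hyd
    obtain ⟨δ, hδ, hball⟩ := Metric.continuousAt_iff.1 hyc.continuousAt (ε/3) (by positivity)
    refine ⟨δ, hδ, fun {s} hs => ?_⟩
    have h2 : dist (U s y) (U t₀ y) < ε / 3 := hball hs
    calc dist (U s z) (U t₀ z)
        ≤ dist (U s z) (U s y) + dist (U s y) (U t₀ y) + dist (U t₀ y) (U t₀ z) :=
          dist_triangle4 _ _ _ _
      _ < ε / 3 + ε / 3 + ε / 3 := by
          have h3 : dist (U t₀ y) (U t₀ z) < ε / 3 := by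
            rw [dist_comm]; exact h1 t₀
          linarith [h1 s]
      _ = ε := by ring
  -- helper congruence lemmas for A
  have hAcongr : ∀ (x x' : X) (hx : x ∈ A.domain) (hx' : x' ∈ A.domain), x = x' →
      A ⟨x, hx⟩ = A ⟨x', hx'⟩ := by
    rintro x x' hx hx' rfl; rfl
  have hAadd : ∀ (x y : X) (hx : x ∈ A.domain) (hy : y ∈ A.domain) (hxy : x + y ∈ A.domain),
      A ⟨x + y, hxy⟩ = A ⟨x, hx⟩ + A ⟨y, hy⟩ := by
    intro x y hx hy hxy
    have : (⟨x + y, hxy⟩ : A.domain) = ⟨x, hx⟩ + ⟨y, hy⟩ := rfl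
    rw [this, A.map_add]
  have hAsmul : ∀ (c : ℂ) (x : X) (hx : x ∈ A.domain) (hcx : c • x ∈ A.domain),
      A ⟨c • x, hcx⟩ = c • A ⟨x, hx⟩ := by
    intro c x hx hcx
    have : (⟨c • x, hcx⟩ : A.domain) = c • ⟨x, hx⟩ := rfl
    rw [this, A.map_smul]
  -- the Banach space W of triples (x, Ax, Hx)
  have hHgraph : IsClosed (H.graph : Set (X × X)) := selfAdjoint_isClosed hH
  set f₁ : (X × X × X) →ₗ[ℂ] X × X :=
    (LinearMap.fst ℂ X (X × X)).prod
      ((LinearMap.fst ℂ X X).comp (LinearMap.snd ℂ X (X × X))) with hf₁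
  set f₂ : (X × X × X) →ₗ[ℂ] X × X :=
    (LinearMap.fst ℂ X (X × X)).prod
      ((LinearMap.snd ℂ X X).comp (LinearMap.snd ℂ X (X × X))) with hf₂
  set W : Submodule ℂ (X × X × X) :=
    Submodule.comap f₁ A.graph ⊓ Submodule.comap f₂ H.graph with hW
  have hmemW : ∀ p : X × X × X,
      p ∈ W ↔ ((p.1, p.2.1) ∈ A.graph ∧ (p.1, p.2.2) ∈ H.graph) := fun p => Iff.rfl
  have hWclosed : IsClosed (W : Set (X × X × X)) := by
    have h1 : (W : Set (X × X × X)) =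
        ((fun p : X × X × X => (p.1, p.2.1)) ⁻¹' (A.graph : Set (X × X))) ∩
        ((fun p : X × X × X => (p.1, p.2.2)) ⁻¹' (H.graph : Set (X × X))) := by
      ext p
      simp only [SetLike.mem_coe, Set.mem_inter_iff, Set.mem_preimage, hmemW p]
    rw [h1]
    exact (hAclosed.preimage (by fun_prop)).inter (hHgraph.preimage (by fun_prop))
  haveI hWcomplete : CompleteSpace W := hWclosed.completeSpace_coe
  have mW1 : ∀ p : X × X × X, p ∈ W → p.1 ∈ A.domain :=
    fun p hp => (graph_ex ((hmemW p).1 hp).1).choose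
  have mW2 : ∀ p : X × X × X, p ∈ W → p.1 ∈ H.domain :=
    fun p hp => (graph_ex ((hmemW p).1 hp).2).choose
  have memW_mk : ∀ (x : X) (hxA : x ∈ A.domain) (hxH : x ∈ H.domain),
      (x, A ⟨x, hxA⟩, H ⟨x, hxH⟩) ∈ W := by
    intro x hxA hxH
    rw [hmemW]
    exact ⟨A.mem_graph ⟨x, hxA⟩, H.mem_graph ⟨x, hxH⟩⟩
  -- closed graph theorem: A ∘ U t is bounded on W
  have boundA : ∀ t : ℝ, ∃ C : ℝ, 0 ≤ C ∧ ∀ (p : X × X × X) (hp : p ∈ W),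
      ‖A ⟨U t p.1, hInvA t p.1 (mW1 p hp) (mW2 p hp)⟩‖ ≤ C * ‖p‖ := by
    intro t
    let Amap : W →ₗ[ℂ] X :=
      { toFun := fun w =>
          A ⟨U t (w : X × X × X).1, hInvA t _ (mW1 _ w.2) (mW2 _ w.2)⟩
        map_add' := by
          intro w w'
          have h1 : U t ((w + w' : W) : X × X × X).1
              = U t (w : X × X × X).1 + U t (w' : X × X × X).1 := by
            simp
          have m1 : U t (w : X × X × X).1 ∈ A.domain := hInvA t _ (mW1 _ w.2) (mW2 _ w.2)
          have m2 : U t (w' : X × X × X).1 ∈ A.domain := hInvA t _ (mW1 _ w'.2) (mW2 _ w'.2)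
          have msum : U t (w : X × X × X).1 + U t (w' : X × X × X).1 ∈ A.domain :=
            Submodule.add_mem _ m1 m2
          exact (hAcongr _ _ _ msum h1).trans (hAadd _ _ m1 m2 msum)
        map_smul' := by
          intro c w
          have h1 : U t ((c • w : W) : X × X × X).1 = c • U t (w : X × X × X).1 := by
            simp
          have m1 : U t (w : X × X × X).1 ∈ A.domain := hInvA t _ (mW1 _ w.2) (mW2 _ w.2)
          have msm : c • U t (w : X × X × X).1 ∈ A.domain := Submodule.smul_mem _ c m1
          exact (hAcongr _ _ _ msm h1).trans (hAsmul c _ m1 msm) }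
    have hg : ∀ (u : ℕ → W) (x : W) (y : X), Tendsto u atTop (𝓝 x) →
        Tendsto (Amap ∘ u) atTop (𝓝 y) → y = Amap x := by
      intro u x y hu hy
      have hcoe : Tendsto (fun n => (u n : X × X × X)) atTop (𝓝 (x : X × X × X)) :=
        (continuous_subtype_val.tendsto x).comp hu
      have h1 : Tendsto (fun n => (u n : X × X × X).1) atTop (𝓝 (x : X × X × X).1) :=
        (continuous_fst.tendsto _).comp hcoe
      have h2 : Tendsto (fun n => U t ((u n : X × X × X).1)) atTop
          (𝓝 (U t (x : X × X × X).1)) := ((U t).continuous.tendsto _).comp h1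
      have h3 : Tendsto (fun n => (U t ((u n : X × X × X).1), Amap (u n))) atTop
          (𝓝 (U t (x : X × X × X).1, y)) := h2.prodMk_nhds hy
      have h4 : ∀ n, (U t ((u n : X × X × X).1), Amap (u n)) ∈ (A.graph : Set (X × X)) :=
        fun n => SetLike.mem_coe.2 (A.mem_graph
          ⟨U t ((u n : X × X × X)).1, hInvA t _ (mW1 _ (u n).2) (mW2 _ (u n).2)⟩)
      have h5 : (U t (x : X × X × X).1, y) ∈ (A.graph : Set (X × X)) :=
        hAclosed.mem_of_tendsto h3 (Filter.Eventually.of_forall h4)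
      obtain ⟨hx6, h6⟩ := graph_ex h5
      exact h6.symm
    have hcont : Continuous Amap := Amap.continuous_of_seq_closed_graph hg
    let AmapL : W →L[ℂ] X := ⟨Amap, hcont⟩
    refine ⟨‖AmapL‖, AmapL.opNorm_nonneg, fun p hp => ?_⟩
    exact AmapL.le_opNorm ⟨p, hp⟩
  -- the sets for the Baire category argument
  set En : ℕ → Set ℝ := fun n => {t : ℝ | ∀ (p : X × X × X) (hp : p ∈ W), ‖p‖ ≤ 1 →
    ‖P (A ⟨U t p.1, hInvA t p.1 (mW1 p hp) (mW2 p hp)⟩)‖ ≤ (n : ℝ)} with hEn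
  have hEnclosed : ∀ n, IsClosed (En n) := by
    intro n
    have heq : En n = ⋂ (p : X × X × X) (hp : p ∈ W) (_ : ‖p‖ ≤ 1) (y : X) (hy : y ∈ S),
        {t : ℝ | ‖(inner ℂ (A ⟨y, hSA hy⟩) (U t p.1) : ℂ)‖ ≤ (n : ℝ) * ‖y‖} := by
      ext t
      simp only [hEn, Set.mem_setOf_eq, Set.mem_iInter]
      constructor
      · intro ht p hp hp1 y hy
        have hz : U t p.1 ∈ A.domain := hInvA t p.1 (mW1 p hp) (mW2 p hp)
        have h1 : (inner ℂ (A ⟨y, hSA hy⟩) (U t p.1) : ℂ) = inner ℂ y (A ⟨U t p.1, hz⟩) :=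
          hAsym ⟨y, hSA hy⟩ ⟨U t p.1, hz⟩
        have h2 : (inner ℂ y (A ⟨U t p.1, hz⟩) : ℂ) = inner ℂ y (P (A ⟨U t p.1, hz⟩)) :=
          (innerP hPfix hPsa (S.le_topologicalClosure hy) _).symm
        rw [h1, h2]
        calc ‖(inner ℂ y (P (A ⟨U t p.1, hz⟩)) : ℂ)‖
            ≤ ‖y‖ * ‖P (A ⟨U t p.1, hz⟩)‖ := norm_inner_le_norm _ _
          _ ≤ ‖y‖ * (n : ℝ) := by
              have := ht p hp hp1
              exact mul_le_mul_of_nonneg_left this (norm_nonneg y)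
          _ = (n : ℝ) * ‖y‖ := mul_comm _ _
      · intro ht p hp hp1
        refine norm_P_le hPmem hPfix hPsa (by positivity) ?_
        intro y hy
        have hz : U t p.1 ∈ A.domain := hInvA t p.1 (mW1 p hp) (mW2 p hp)
        have h1 : (inner ℂ (A ⟨y, hSA hy⟩) (U t p.1) : ℂ) = inner ℂ y (A ⟨U t p.1, hz⟩) :=
          hAsym ⟨y, hSA hy⟩ ⟨U t p.1, hz⟩
        rw [← h1]
        exact ht p hp hp1 y hy
    rw [heq]
    refine isClosed_iInter fun p => isClosed_iInter fun hp => isClosed_iInter fun _ =>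
      isClosed_iInter fun y => isClosed_iInter fun hy => ?_
    exact isClosed_le ((continuous_const.inner (contU p.1 (mW2 p hp))).norm) continuous_const
  have hEnU : ⋃ n, En n = Set.univ := by
    ext t
    simp only [Set.mem_iUnion, Set.mem_univ, iff_true, hEn, Set.mem_setOf_eq]
    obtain ⟨C, hC0, hC⟩ := boundA t
    refine ⟨⌈‖P‖ * C⌉₊, fun p hp hp1 => ?_⟩
    have hz : U t p.1 ∈ A.domain := hInvA t p.1 (mW1 p hp) (mW2 p hp)
    calc ‖P (A ⟨U t p.1, hz⟩)‖ ≤ ‖P‖ * ‖A ⟨U t p.1, hz⟩‖ := P.le_opNorm _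
      _ ≤ ‖P‖ * (C * ‖p‖) := by
          exact mul_le_mul_of_nonneg_left (hC p hp) (norm_nonneg _)
      _ ≤ ‖P‖ * C := by nlinarith [norm_nonneg (P : X →L[ℂ] X), hC0, mul_nonneg (norm_nonneg (P : X →L[ℂ] X)) hC0]
      _ ≤ (⌈‖P‖ * C⌉₊ : ℝ) := Nat.le_ceil _
  obtain ⟨n₀, hn₀⟩ := nonempty_interior_of_iUnion_of_closed hEnclosed hEnU
  obtain ⟨t₁, ht₁⟩ := hn₀
  obtain ⟨ε, hε, hball⟩ := Metric.mem_nhds_iff.1 (mem_interior_iff_mem_nhds.1 ht₁)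
  -- scaling
  have Enscale : ∀ (n : ℕ) (t : ℝ), t ∈ En n → ∀ (p : X × X × X) (hp : p ∈ W),
      ‖P (A ⟨U t p.1, hInvA t p.1 (mW1 p hp) (mW2 p hp)⟩)‖ ≤ (n : ℝ) * ‖p‖ := by
    intro n t ht p hp
    have hz : U t p.1 ∈ A.domain := hInvA t p.1 (mW1 p hp) (mW2 p hp)
    rcases eq_or_ne p 0 with rfl | hp0
    · have h0 : ((0 : X × X × X).1 : X) = 0 := rfl
      have h1 : (⟨U t (0 : X × X × X).1, hz⟩ : A.domain) = 0 := by
        apply Subtype.ext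
        simp [h0]
      rw [h1]
      simp
    · have hc0 : 0 < ‖p‖ := norm_pos_iff.2 hp0
      set q : X × X × X := ((‖p‖⁻¹ : ℝ) : ℂ) • p with hqdef
      have hq : q ∈ W := W.smul_mem _ hp
      have hq1 : ‖q‖ ≤ 1 := by
        rw [hqdef, norm_smul]
        simp only [Complex.norm_real, Real.norm_eq_abs, abs_of_pos (inv_pos.2 hc0)]
        rw [inv_mul_cancel₀ (ne_of_gt hc0)]
      have hzq : U t q.1 ∈ A.domain := hInvA t q.1 (mW1 q hq) (mW2 q hq)
      have hsm1 : U t q.1 = ((‖p‖⁻¹ : ℝ) : ℂ) • U t p.1 := by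
        rw [show q.1 = ((‖p‖⁻¹ : ℝ) : ℂ) • p.1 from rfl, map_smul]
      have hsmem : ((‖p‖⁻¹ : ℝ) : ℂ) • U t p.1 ∈ A.domain := Submodule.smul_mem _ _ hz
      have hsm2 : A ⟨U t q.1, hzq⟩ = ((‖p‖⁻¹ : ℝ) : ℂ) • A ⟨U t p.1, hz⟩ :=
        (hAcongr _ _ hzq hsmem hsm1).trans (hAsmul _ _ hz hsmem)
      have hval := ht q hq hq1
      rw [hsm2, map_smul, norm_smul] at hval
      simp only [Complex.norm_real, Real.norm_eq_abs, abs_of_pos (inv_pos.2 hc0)] at hval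
      rw [inv_mul_le_iff₀ hc0] at hval
      linarith [hval]
  -- local boundedness of t ↦ ‖P (A ψ(t))‖
  have locBdd : ∀ t₀ : ℝ, ∃ δ M : ℝ, 0 < δ ∧ 0 ≤ M ∧ ∀ s : ℝ, |s - t₀| < δ →
      ‖P (A ⟨U s ψ₀, hmemA s⟩)‖ ≤ M := by
    intro t₀
    set b : ℝ := t₀ - t₁ with hb
    set xb : X := U b ψ₀ with hxb
    set pb : X × X × X := (xb, A ⟨xb, hmemA b⟩, H ⟨xb, hmemH b⟩) with hpb
    have hpbW : pb ∈ W := memW_mk _ _ _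
    refine ⟨ε, (n₀ : ℝ) * ‖pb‖, hε, by positivity, fun s hs => ?_⟩
    set r : ℝ := s - t₀ + t₁ with hr
    have hrball : r ∈ Metric.ball t₁ ε := by
      rw [Metric.mem_ball, Real.dist_eq]
      have : r - t₁ = s - t₀ := by rw [hr]; ring
      rw [this]
      exact hs
    have h1 := Enscale n₀ r (hball hrball) pb hpbW
    have hrb : r + b = s := by rw [hr, hb]; ring
    have h2 : U s ψ₀ = U r pb.1 := by
      rw [show pb.1 = U b ψ₀ from rfl, ← hUadd r b ψ₀, hrb]
    rw [hAcongr (U s ψ₀) (U r pb.1) (hmemA s)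
      (hInvA r pb.1 (mW1 pb hpbW) (mW2 pb hpbW)) h2]
    exact h1
  -- the key pairing limit lemma
  have key_pair : ∀ (t₀ : ℝ) (l : Filter ℝ), Tendsto (fun s : ℝ => s) l (𝓝 t₀) →
      ∀ (w : ℝ → X) (w₀ : X), (∀ s, w s ∈ S.topologicalClosure) →
      w₀ ∈ S.topologicalClosure → Tendsto w l (𝓝 w₀) →
      Tendsto (fun s => (inner ℂ (w s) (A ⟨U s ψ₀, hmemA s⟩) : ℂ)) l
        (𝓝 (inner ℂ w₀ (A ⟨U t₀ ψ₀, hmemA t₀⟩))) := by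
    intro t₀ l hl w w₀ hwmem hw₀ hwlim
    obtain ⟨δ, M, hδ, hM, hbdd⟩ := locBdd t₀
    have hfix : ∀ z : X, z ∈ S.topologicalClosure →
        Tendsto (fun s : ℝ => (inner ℂ z (A ⟨U s ψ₀, hmemA s⟩) : ℂ)) (𝓝 t₀)
          (𝓝 (inner ℂ z (A ⟨U t₀ ψ₀, hmemA t₀⟩))) := by
      intro z hz
      rw [Metric.tendsto_nhds_nhds]
      intro ε hε
      have hM1 : (0:ℝ) < M + 1 := by linarith
      have hzc : z ∈ closure (S : Set X) := by
        simpa [Submodule.topologicalClosure_coe] using (SetLike.mem_coe.2 hz)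
      obtain ⟨y, hyS, hyd⟩ := Metric.mem_closure_iff.1 hzc (ε / (3 * (M + 1))) (by positivity)
      rw [dist_eq_norm] at hyd
      have hyA : y ∈ A.domain := hSA hyS
      have hmid : Continuous fun s : ℝ => (inner ℂ (A ⟨y, hyA⟩) (U s ψ₀) : ℂ) :=
        continuous_const.inner ψcont
      have hmid2 : ∀ s : ℝ, (inner ℂ (A ⟨y, hyA⟩) (U s ψ₀) : ℂ)
          = inner ℂ y (A ⟨U s ψ₀, hmemA s⟩) := fun s => hAsym ⟨y, hyA⟩ ⟨U s ψ₀, hmemA s⟩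
      obtain ⟨δ₁, hδ₁, hmidball⟩ :=
        Metric.continuousAt_iff.1 hmid.continuousAt (ε / 3) (by positivity)
      refine ⟨min δ₁ δ, lt_min hδ₁ hδ, fun {s} hs => ?_⟩
      have hs1 : dist s t₀ < δ₁ := lt_of_lt_of_le hs (min_le_left _ _)
      have hs2 : |s - t₀| < δ := by
        rw [← Real.dist_eq]; exact lt_of_lt_of_le hs (min_le_right _ _)
      have hbdds := hbdd s hs2
      have hbddt := hbdd t₀ (by simpa using hδ)
      have hzy : z - y ∈ S.topologicalClosure :=
        Submodule.sub_mem _ hz (S.le_topologicalClosure hyS)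
      have hsplit : (inner ℂ z (A ⟨U s ψ₀, hmemA s⟩) : ℂ)
            - inner ℂ z (A ⟨U t₀ ψ₀, hmemA t₀⟩)
          = inner ℂ (z - y) (A ⟨U s ψ₀, hmemA s⟩)
            + ((inner ℂ y (A ⟨U s ψ₀, hmemA s⟩) : ℂ) - inner ℂ y (A ⟨U t₀ ψ₀, hmemA t₀⟩))
            + (inner ℂ (y - z) (A ⟨U t₀ ψ₀, hmemA t₀⟩) : ℂ) := by
        simp only [inner_sub_left]
        ring
      have hb1 : ∀ (s' : ℝ), ‖P (A ⟨U s' ψ₀, hmemA s'⟩)‖ ≤ M →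
          ‖(inner ℂ (z - y) (A ⟨U s' ψ₀, hmemA s'⟩) : ℂ)‖ ≤ ε / (3 * (M + 1)) * M := by
        intro s' hs'
        rw [← innerP hPfix hPsa hzy]
        calc ‖(inner ℂ (z - y) (P (A ⟨U s' ψ₀, hmemA s'⟩)) : ℂ)‖
            ≤ ‖z - y‖ * ‖P (A ⟨U s' ψ₀, hmemA s'⟩)‖ := norm_inner_le_norm _ _
          _ ≤ ε / (3 * (M + 1)) * M := by
              apply mul_le_mul hyd.le hs' (norm_nonneg _) (by positivity)
      have hb2 : ‖(inner ℂ y (A ⟨U s ψ₀, hmemA s⟩) : ℂ)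
          - inner ℂ y (A ⟨U t₀ ψ₀, hmemA t₀⟩)‖ < ε / 3 := by
        have := hmidball hs1
        rw [dist_eq_norm, hmid2 s, hmid2 t₀] at this
        exact this
      have hb3 : ‖(inner ℂ (y - z) (A ⟨U t₀ ψ₀, hmemA t₀⟩) : ℂ)‖ ≤ ε / (3 * (M + 1)) * M := by
        have h := hb1 t₀ hbddt
        have : (inner ℂ (y - z) (A ⟨U t₀ ψ₀, hmemA t₀⟩) : ℂ)
            = -(inner ℂ (z - y) (A ⟨U t₀ ψ₀, hmemA t₀⟩) : ℂ) := by
          rw [← inner_neg_left]; congr 1; abel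
        rw [this, norm_neg]
        exact h
      have hεM : ε / (3 * (M + 1)) * M ≤ ε / 3 := by
        rw [div_mul_eq_mul_div, div_le_div_iff₀ (by positivity) (by norm_num)]
        nlinarith
      rw [dist_eq_norm, hsplit]
      refine lt_of_le_of_lt (norm_add₃_le) ?_
      linarith [hb1 s hbdds, hb2, hb3, hεM]
    -- now the moving-vector version
    have hsplit2 : (fun s => (inner ℂ (w s) (A ⟨U s ψ₀, hmemA s⟩) : ℂ))
        = fun s => (inner ℂ (w s - w₀) (A ⟨U s ψ₀, hmemA s⟩) : ℂ)
            + inner ℂ w₀ (A ⟨U s ψ₀, hmemA s⟩) := by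
      funext s
      simp only [inner_sub_left]
      ring
    rw [hsplit2]
    have hterm2 : Tendsto (fun s => (inner ℂ w₀ (A ⟨U s ψ₀, hmemA s⟩) : ℂ)) l
        (𝓝 (inner ℂ w₀ (A ⟨U t₀ ψ₀, hmemA t₀⟩))) := (hfix w₀ hw₀).comp hl
    have hterm1 : Tendsto (fun s => (inner ℂ (w s - w₀) (A ⟨U s ψ₀, hmemA s⟩) : ℂ)) l (𝓝 0) := by
      have hev : ∀ᶠ s' in l, dist s' t₀ < δ := by
        have := Metric.tendsto_nhds.mp hl δ hδ
        exact this
      apply squeeze_zero_norm' (a := fun s => ‖w s - w₀‖ * M)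
      · filter_upwards [hev] with s' hs'
        have hs2 : |s' - t₀| < δ := by rw [← Real.dist_eq]; exact hs'
        have hmem : w s' - w₀ ∈ S.topologicalClosure := Submodule.sub_mem _ (hwmem s') hw₀
        rw [← innerP hPfix hPsa hmem]
        calc ‖(inner ℂ (w s' - w₀) (P (A ⟨U s' ψ₀, hmemA s'⟩)) : ℂ)‖
            ≤ ‖w s' - w₀‖ * ‖P (A ⟨U s' ψ₀, hmemA s'⟩)‖ := norm_inner_le_norm _ _
          _ ≤ ‖w s' - w₀‖ * M := by
              apply mul_le_mul_of_nonneg_left (hbdd s' hs2) (norm_nonneg _)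
      · have h0 : Tendsto (fun s => w s - w₀) l (𝓝 0) := by
          have := hwlim.sub (tendsto_const_nhds (x := w₀))
          simpa using this
        have := (h0.norm).mul_const M
        simpa using this
    have := hterm1.add hterm2
    simpa using this
  -- real-scalar inner ℂ product lemmas
  have hinr : ∀ (r : ℝ) (x y : X), (inner ℂ x (r • y) : ℂ) = (r : ℂ) * inner ℂ x y := by
    intro r x y
    rw [← Complex.coe_smul, inner_smul_right]
  have hinl : ∀ (r : ℝ) (x y : X), (inner ℂ (r • x) y : ℂ) = (r : ℂ) * inner ℂ x y := by
    intro r x y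
    rw [← Complex.coe_smul, inner_smul_left]
    simp
  -- Part 1
  have part1 : ∀ t : ℝ, (inner ℂ (U t ψ₀) (P (A ⟨U t ψ₀, hmemA t⟩)) : ℂ)
      = inner ℂ (U t ψ₀) (A ⟨U t ψ₀, hmemA t⟩) :=
    fun t => innerP hPfix hPsa (hmemXt t) _
  -- Part 2
  have part2 : ∀ t : ℝ, HasDerivAt
      (fun s : ℝ => (inner ℂ (U s ψ₀) (A ⟨U s ψ₀, hmemA s⟩) : ℂ))
      (I * ((inner ℂ (U t (H ⟨ψ₀, hψ₀H⟩)) (A ⟨U t ψ₀, hmemA t⟩) : ℂ)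
          - (inner ℂ (A ⟨U t ψ₀, hmemA t⟩) (U t (H ⟨ψ₀, hψ₀H⟩)) : ℂ))) t := by
    intro t
    rw [hasDerivAt_iff_tendsto_slope]
    have hσten : Tendsto (slope (fun s' : ℝ => U s' ψ₀) t) (𝓝[≠] t)
        (𝓝 (-I • U t (H ⟨ψ₀, hψ₀H⟩))) := hasDerivAt_iff_tendsto_slope.1 (ψderiv t)
    have hσmem : ∀ s : ℝ, slope (fun s' : ℝ => U s' ψ₀) t s ∈ S.topologicalClosure := by
      intro s
      rw [slope_def_module]
      exact Submodule.smul_mem _ _ (Submodule.sub_mem _ (hmemXt s) (hmemXt t))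
    have hid : Tendsto (fun s : ℝ => s) (𝓝[≠] t) (𝓝 t) :=
      tendsto_id.mono_left nhdsWithin_le_nhds
    have hlim1 : Tendsto (fun s : ℝ =>
        (inner ℂ (slope (fun s' : ℝ => U s' ψ₀) t s) (A ⟨U s ψ₀, hmemA s⟩) : ℂ)) (𝓝[≠] t)
        (𝓝 (inner ℂ (-I • U t (H ⟨ψ₀, hψ₀H⟩)) (A ⟨U t ψ₀, hmemA t⟩))) :=
      key_pair t (𝓝[≠] t) hid _ _ hσmem (vXt t) hσten
    have hlim1c : Tendsto (fun s : ℝ => (starRingEnd ℂ)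
        (inner ℂ (slope (fun s' : ℝ => U s' ψ₀) t s) (A ⟨U s ψ₀, hmemA s⟩) : ℂ)) (𝓝[≠] t)
        (𝓝 ((starRingEnd ℂ) (inner ℂ (-I • U t (H ⟨ψ₀, hψ₀H⟩)) (A ⟨U t ψ₀, hmemA t⟩)))) :=
      ((RCLike.continuous_conj.tendsto _).comp hlim1)
    have hlim2 : Tendsto (fun s : ℝ =>
        (inner ℂ (slope (fun s' : ℝ => U s' ψ₀) t s) (A ⟨U t ψ₀, hmemA t⟩) : ℂ)) (𝓝[≠] t)
        (𝓝 (inner ℂ (-I • U t (H ⟨ψ₀, hψ₀H⟩)) (A ⟨U t ψ₀, hmemA t⟩))) :=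
      ((continuous_id.inner continuous_const).tendsto _).comp hσten
    have hcomb := hlim1c.add hlim2
    have hfuneq : ∀ s : ℝ, (starRingEnd ℂ)
          (inner ℂ (slope (fun s' : ℝ => U s' ψ₀) t s) (A ⟨U s ψ₀, hmemA s⟩) : ℂ)
        + (inner ℂ (slope (fun s' : ℝ => U s' ψ₀) t s) (A ⟨U t ψ₀, hmemA t⟩) : ℂ)
        = slope (fun s' : ℝ => (inner ℂ (U s' ψ₀) (A ⟨U s' ψ₀, hmemA s'⟩) : ℂ)) t s := by
      intro s
      have e1 : (inner ℂ (A ⟨U s ψ₀, hmemA s⟩) (U s ψ₀) : ℂ)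
          = inner ℂ (U s ψ₀) (A ⟨U s ψ₀, hmemA s⟩) := hAsym ⟨U s ψ₀, hmemA s⟩ ⟨U s ψ₀, hmemA s⟩
      have e2 : (inner ℂ (A ⟨U s ψ₀, hmemA s⟩) (U t ψ₀) : ℂ)
          = inner ℂ (U s ψ₀) (A ⟨U t ψ₀, hmemA t⟩) := hAsym ⟨U s ψ₀, hmemA s⟩ ⟨U t ψ₀, hmemA t⟩
      simp only [slope_def_module, Complex.real_smul, inner_conj_symm, hinr, hinl,
        inner_sub_right, inner_sub_left, e1, e2, map_sub, map_mul, Complex.conj_ofReal]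
      ring
    have hgoal : I * ((inner ℂ (U t (H ⟨ψ₀, hψ₀H⟩)) (A ⟨U t ψ₀, hmemA t⟩) : ℂ)
          - inner ℂ (A ⟨U t ψ₀, hmemA t⟩) (U t (H ⟨ψ₀, hψ₀H⟩)))
        = (starRingEnd ℂ) (inner ℂ (-I • U t (H ⟨ψ₀, hψ₀H⟩)) (A ⟨U t ψ₀, hmemA t⟩) : ℂ)
          + (inner ℂ (-I • U t (H ⟨ψ₀, hψ₀H⟩)) (A ⟨U t ψ₀, hmemA t⟩) : ℂ) := by
      rw [inner_smul_left]
      simp only [map_neg, map_mul, Complex.conj_I, inner_conj_symm, neg_neg, neg_mul, mul_neg]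
      ring
    rw [hgoal]
    exact Tendsto.congr hfuneq hcomb
  -- Part 3 : continuity of the derivative
  have hz₀mem : H ⟨ψ₀, hψ₀H⟩ ∈ S.topologicalClosure := by
    rw [← hU0 (H ⟨ψ₀, hψ₀H⟩)]
    exact z₀Xt
  have hHcont : Continuous fun t : ℝ => U t (H ⟨ψ₀, hψ₀H⟩) :=
    UcontXt _ hz₀mem
  have zc : Continuous fun t : ℝ =>
      (inner ℂ (U t (H ⟨ψ₀, hψ₀H⟩)) (A ⟨U t ψ₀, hmemA t⟩) : ℂ) := by
    rw [continuous_iff_continuousAt]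
    intro t₀
    exact key_pair t₀ (𝓝 t₀) tendsto_id _ _ HvXt (HvXt t₀) (hHcont.tendsto t₀)
  have part3 : Continuous (fun t : ℝ =>
      I * ((inner ℂ (U t (H ⟨ψ₀, hψ₀H⟩)) (A ⟨U t ψ₀, hmemA t⟩) : ℂ)
          - (inner ℂ (A ⟨U t ψ₀, hmemA t⟩) (U t (H ⟨ψ₀, hψ₀H⟩)) : ℂ))) := by
    have hfun : (fun t : ℝ =>
        I * ((inner ℂ (U t (H ⟨ψ₀, hψ₀H⟩)) (A ⟨U t ψ₀, hmemA t⟩) : ℂ)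
            - (inner ℂ (A ⟨U t ψ₀, hmemA t⟩) (U t (H ⟨ψ₀, hψ₀H⟩)) : ℂ)))
        = fun t : ℝ =>
        I * ((inner ℂ (U t (H ⟨ψ₀, hψ₀H⟩)) (A ⟨U t ψ₀, hmemA t⟩) : ℂ)
            - (starRingEnd ℂ) (inner ℂ (U t (H ⟨ψ₀, hψ₀H⟩)) (A ⟨U t ψ₀, hmemA t⟩) : ℂ)) := by
      funext t
      rw [inner_conj_symm]
    rw [hfun]
    exact continuous_const.mul (zc.sub (RCLike.continuous_conj.comp zc))
  -- assemble
  refine ⟨part1, fun t => ?_, ?_⟩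
  · have hrw := hcomm t ψ₀ hψ₀H (hInvH t ψ₀ hψ₀A hψ₀H)
    rw [hrw]
    exact part2 t
  · have hrw : ∀ t : ℝ, H ⟨U t ψ₀, hInvH t ψ₀ hψ₀A hψ₀H⟩ = U t (H ⟨ψ₀, hψ₀H⟩) :=
      fun t => hcomm t ψ₀ hψ₀H (hInvH t ψ₀ hψ₀A hψ₀H)
    have : (fun t : ℝ =>
        I * ((inner ℂ (H ⟨U t ψ₀, hInvH t ψ₀ hψ₀A hψ₀H⟩) (A ⟨U t ψ₀, hInvA t ψ₀ hψ₀A hψ₀H⟩) : ℂ)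
            - (inner ℂ (A ⟨U t ψ₀, hInvA t ψ₀ hψ₀A hψ₀H⟩)
                (H ⟨U t ψ₀, hInvH t ψ₀ hψ₀A hψ₀H⟩) : ℂ)))
        = (fun t : ℝ =>
        I * ((inner ℂ (U t (H ⟨ψ₀, hψ₀H⟩)) (A ⟨U t ψ₀, hmemA t⟩) : ℂ)
            - (inner ℂ (A ⟨U t ψ₀, hmemA t⟩) (U t (H ⟨ψ₀, hψ₀H⟩)) : ℂ))) := by
      funext t
      rw [hrw t]
    rw [this]
    exact part3

end EhrenfestAux




open Complex Filter

/-- **Ehrenfest theorem for closed hermitean (not necessarily densely defined) `A`.**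
`H` self-adjoint, `A` closed and hermitean, `U t = e^{-itH}` leaves `D(A) ∩ D(H)`
invariant, `ψ₀ ∈ D(A) ∩ D(H)`, and `P` is the orthogonal projection onto the closed span
of the orbit `{U t ψ₀ : t ∈ ℝ}` (characterized by: `P` maps into the closed span, fixes it,
and is self-adjoint).  Then `⟨ψ(t), A ψ(t)⟩ = ⟨ψ(t), P A P ψ(t)⟩` and `t ↦ ⟨ψ(t), A ψ(t)⟩`
is continuously differentiable with derivative `i(⟨Hψ(t), Aψ(t)⟩ - ⟨Aψ(t), Hψ(t)⟩)`. -/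
theorem ehrenfest_closed_hermitean
    {X : Type*} [NormedAddCommGroup X] [InnerProductSpace ℂ X] [CompleteSpace X]
    (A H : X →ₗ.[ℂ] X)
    (hH : IsSelfAdjoint H)
    (hAsym : ∀ x y : A.domain, (inner ℂ (A x) (y : X) : ℂ) = inner ℂ (x : X) (A y))
    (hAclosed : A.IsClosed)
    (U : ℝ → X ≃ₗᵢ[ℂ] X)
    (hU0 : ∀ x : X, U 0 x = x)
    (hUadd : ∀ (s t : ℝ) (x : X), U (s + t) x = U s (U t x))
    (hUgen : ∀ (ψ : H.domain) (t : ℝ),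
      HasDerivAt (fun s : ℝ => U s (ψ : X)) (-I • U t (H ψ)) t)
    (hInvA : ∀ (t : ℝ) (x : X), x ∈ A.domain → x ∈ H.domain → U t x ∈ A.domain)
    (hInvH : ∀ (t : ℝ) (x : X), x ∈ A.domain → x ∈ H.domain → U t x ∈ H.domain)
    (ψ₀ : X) (hψ₀A : ψ₀ ∈ A.domain) (hψ₀H : ψ₀ ∈ H.domain)
    (P : X →L[ℂ] X)
    (hPmem : ∀ x : X,
      P x ∈ (Submodule.span ℂ (Set.range fun s : ℝ => U s ψ₀)).topologicalClosure)
    (hPfix : ∀ x ∈ (Submodule.span ℂ (Set.range fun s : ℝ => U s ψ₀)).topologicalClosure,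
      P x = x)
    (hPsa : ∀ x y : X, (inner ℂ (P x) y : ℂ) = inner ℂ x (P y)) :
    (∀ t : ℝ, (inner ℂ (U t ψ₀) (P (A ⟨U t ψ₀, hInvA t ψ₀ hψ₀A hψ₀H⟩)) : ℂ)
        = inner ℂ (U t ψ₀) (A ⟨U t ψ₀, hInvA t ψ₀ hψ₀A hψ₀H⟩))
    ∧ (∀ t : ℝ, HasDerivAt
        (fun s : ℝ => (inner ℂ (U s ψ₀) (A ⟨U s ψ₀, hInvA s ψ₀ hψ₀A hψ₀H⟩) : ℂ))
        (I * ((inner ℂ (H ⟨U t ψ₀, hInvH t ψ₀ hψ₀A hψ₀H⟩)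
                (A ⟨U t ψ₀, hInvA t ψ₀ hψ₀A hψ₀H⟩) : ℂ)
            - (inner ℂ (A ⟨U t ψ₀, hInvA t ψ₀ hψ₀A hψ₀H⟩)
                (H ⟨U t ψ₀, hInvH t ψ₀ hψ₀A hψ₀H⟩) : ℂ))) t)
    ∧ Continuous (fun t : ℝ =>
        I * ((inner ℂ (H ⟨U t ψ₀, hInvH t ψ₀ hψ₀A hψ₀H⟩)
                (A ⟨U t ψ₀, hInvA t ψ₀ hψ₀A hψ₀H⟩) : ℂ)
            - (inner ℂ (A ⟨U t ψ₀, hInvA t ψ₀ hψ₀A hψ₀H⟩)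
                (H ⟨U t ψ₀, hInvH t ψ₀ hψ₀A hψ₀H⟩) : ℂ))) := by
  exact EhrenfestAux.main A H hH hAsym hAclosed U hU0 hUadd hUgen hInvA hInvH ψ₀ hψ₀A hψ₀H P hPmem hPfix hPsa
end
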